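/- arXiv:math/0412222 — 5 statements merged into one kernel-verified Lean document; each statement's English description precedes it below -/
import Mathlib

section
/- For every positive integer n, the coefficient sequence of the polynomial I_n^exc(x) = Σ_{σ∈I_n} x^{exc(σ)} is log-concave: writing a_k for the number of involutions in S_n with exactly k excedances, one has a_k² ≥ a_{k−1}·a_{k+1} for all 0 < k < ⌊n/2⌋. -/
noncomputable section
open Finset

/-- The set of involutions in the symmetric group on `Fin n`. -/
def Invols (n : ℕ) : Finset (Equiv.Perm (Fin n)) :=
  Finset.univ.filter (fun σ => σ * σ = 1)

/-- The number of excedances of a permutation of `Fin n`. -/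
def excStat {n : ℕ} (σ : Equiv.Perm (Fin n)) : ℕ :=
  (Finset.univ.filter (fun i : Fin n => i < σ i)).card

/-- The number of involutions in `S_n` with exactly `k` excedances. -/
def excCount (n k : ℕ) : ℕ :=
  ((Invols n).filter (fun σ => excStat σ = k)).card

namespace ExcAux

variable {n : ℕ}

lemma invol_apply {σ : Equiv.Perm (Fin n)} (h : σ * σ = 1) (x : Fin n) : σ (σ x) = x := by
  have := Equiv.ext_iff.mp h x
  simpa using this

/-- For an involution, the support has cardinality twice the number of excedances. -/
lemma support_card {σ : Equiv.Perm (Fin n)} (h : σ * σ = 1) :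
    σ.support.card = 2 * excStat σ := by
  classical
  set D := univ.filter (fun i : Fin n => i < σ i) with hD
  set E := univ.filter (fun i : Fin n => σ i < i) with hE
  have hcard : E.card = D.card := by
    refine card_nbij' (fun x => σ x) (fun x => σ x) ?_ ?_ ?_ ?_
    · intro a ha
      simp only [hE, mem_coe, mem_filter, mem_univ, true_and] at ha
      simp only [hD, mem_coe, mem_filter, mem_univ, true_and]
      rw [invol_apply h]
      exact ha
    · intro a ha
      simp only [hD, mem_coe, mem_filter, mem_univ, true_and] at ha
      simp only [hE, mem_coe, mem_filter, mem_univ, true_and]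
      rw [invol_apply h]
      exact ha
    · intro a _; exact invol_apply h a
    · intro a _; exact invol_apply h a
  have hsupp : σ.support = D ∪ E := by
    ext x
    simp only [Equiv.Perm.mem_support, mem_union, hD, hE, mem_filter, mem_univ, true_and]
    constructor
    · intro hne
      rcases lt_trichotomy x (σ x) with h1 | h1 | h1
      · exact Or.inl h1
      · exact absurd h1.symm hne
      · exact Or.inr h1
    · rintro (h1 | h1)
      · exact fun hc => absurd h1 (by rw [hc]; exact lt_irrefl x)
      · exact fun hc => absurd h1 (by rw [hc]; exact lt_irrefl x)
  have hdisj : Disjoint D E := by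
    rw [Finset.disjoint_left]
    intro x hx hx'
    simp only [hD, mem_filter, mem_univ, true_and] at hx
    simp only [hE, mem_filter, mem_univ, true_and] at hx'
    exact absurd hx' (lt_asymm hx)
  rw [hsupp, card_union_of_disjoint hdisj]
  have : excStat σ = D.card := rfl
  omega

/-- Multiplying an involution fixing `i < j` by `swap i j` adds one excedance. -/
lemma exc_mul_swap_lt {τ : Equiv.Perm (Fin n)} {i j : Fin n} (hij : i < j)
    (hi : τ i = i) (hj : τ j = j) :
    excStat (τ * Equiv.swap i j) = excStat τ + 1 := by
  classical
  have hset : (univ.filter fun x : Fin n => x < (τ * Equiv.swap i j) x)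
      = insert i (univ.filter fun x => x < τ x) := by
    ext x
    rw [mem_filter, mem_insert, mem_filter]
    simp only [mem_univ, true_and, Equiv.Perm.mul_apply]
    by_cases hx : x = i
    · subst hx
      simp only [Equiv.swap_apply_left, hj]
      exact ⟨fun _ => Or.inl trivial, fun _ => hij⟩
    · by_cases hx' : x = j
      · subst hx'
        simp only [Equiv.swap_apply_right, hi, hj]
        constructor
        · intro hlt; exact absurd hlt (asymm hij)
        · rintro (rfl | hlt)
          · exact absurd hij (lt_irrefl _)
          · exact absurd hlt (lt_irrefl _)
      · rw [Equiv.swap_apply_of_ne_of_ne hx hx']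
        constructor
        · intro hlt; exact Or.inr hlt
        · rintro (rfl | hlt)
          · exact absurd rfl hx
          · exact hlt
  unfold excStat
  rw [hset, card_insert_of_notMem]
  simp [hi]

lemma exc_mul_swap {τ : Equiv.Perm (Fin n)} {i j : Fin n} (hij : i ≠ j)
    (hi : τ i = i) (hj : τ j = j) :
    excStat (τ * Equiv.swap i j) = excStat τ + 1 := by
  rcases hij.lt_or_gt with h | h
  · exact exc_mul_swap_lt h hi hj
  · rw [Equiv.swap_comm]; exact exc_mul_swap_lt h hj hi

/-- Multiplying an involution fixing `i` and `j` by `swap i j` gives an involution. -/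
lemma invol_mul_swap {τ : Equiv.Perm (Fin n)} (h : τ * τ = 1) {i j : Fin n}
    (hi : τ i = i) (hj : τ j = j) :
    (τ * Equiv.swap i j) * (τ * Equiv.swap i j) = 1 := by
  ext x
  simp only [Equiv.Perm.mul_apply, Equiv.Perm.one_apply, Equiv.Perm.coe_one, id_eq]
  by_cases hx : x = i
  · subst hx
    rw [Equiv.swap_apply_left, hj, Equiv.swap_apply_right, hi]
  · by_cases hx' : x = j
    · subst hx'
      rw [Equiv.swap_apply_right, hi, Equiv.swap_apply_left, hj]
    · rw [Equiv.swap_apply_of_ne_of_ne hx hx']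
      have h1 : τ x ≠ i := by
        intro hc
        have := congrArg τ hc
        rw [invol_apply h, hi] at this
        exact hx this
      have h2 : τ x ≠ j := by
        intro hc
        have := congrArg τ hc
        rw [invol_apply h, hj] at this
        exact hx' this
      rw [Equiv.swap_apply_of_ne_of_ne h1 h2, invol_apply h]

/-- Multiplying an involution by the swap of `i` and `σ i` gives an involution. -/
lemma invol_mul_swap' {σ : Equiv.Perm (Fin n)} (h : σ * σ = 1) (i : Fin n) :
    (σ * Equiv.swap i (σ i)) * (σ * Equiv.swap i (σ i)) = 1 := by
  have hinv : σ⁻¹ = σ := inv_eq_of_mul_eq_one_right h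
  have key : Equiv.swap (σ i) (σ (σ i)) = σ * Equiv.swap i (σ i) * σ⁻¹ :=
    Equiv.swap_apply_apply σ i (σ i)
  rw [invol_apply h, hinv] at key
  calc (σ * Equiv.swap i (σ i)) * (σ * Equiv.swap i (σ i))
      = (σ * Equiv.swap i (σ i) * σ) * Equiv.swap i (σ i) := by group
    _ = Equiv.swap (σ i) i * Equiv.swap i (σ i) := by rw [← key]
    _ = 1 := by rw [Equiv.swap_comm]; exact Equiv.swap_mul_self _ _

/-- Cardinality of the set of pairs (involution with k+1 excedances, non-fixed point). -/
lemma cardS (n k : ℕ) :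
    ((univ : Finset (Equiv.Perm (Fin n) × Fin n)).filter
      (fun p => p.1 * p.1 = 1 ∧ excStat p.1 = k + 1 ∧ p.1 p.2 ≠ p.2)).card
    = excCount n (k + 1) * (2 * (k + 1)) := by
  classical
  set S := ((univ : Finset (Equiv.Perm (Fin n) × Fin n)).filter
      (fun p => p.1 * p.1 = 1 ∧ excStat p.1 = k + 1 ∧ p.1 p.2 ≠ p.2)) with hS
  set A := (Invols n).filter (fun σ => excStat σ = k + 1) with hA
  have hmemA : ∀ σ : Equiv.Perm (Fin n), σ ∈ A ↔ (σ * σ = 1 ∧ excStat σ = k + 1) := by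
    intro σ; simp [hA, Invols, mem_filter]
  have hfib : ∀ p ∈ S, p.1 ∈ A := by
    intro p hp
    simp only [hS, mem_filter, mem_univ, true_and] at hp
    exact (hmemA p.1).mpr ⟨hp.1, hp.2.1⟩
  rw [card_eq_sum_card_fiberwise hfib]
  have hfibcard : ∀ σ ∈ A, (S.filter fun p => p.1 = σ).card = 2 * (k + 1) := by
    intro σ hσ
    obtain ⟨hσ1, hσ2⟩ := (hmemA σ).mp hσ
    have : (S.filter fun p => p.1 = σ).card = σ.support.card := by
      refine card_nbij' (fun p => p.2) (fun x => (σ, x)) ?_ ?_ ?_ ?_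
      · intro p hp
        simp only [hS, mem_coe, mem_filter, mem_univ, true_and] at hp
        obtain ⟨⟨_, _, hne⟩, h1⟩ := hp
        rw [Finset.mem_coe, Equiv.Perm.mem_support, ← h1]
        exact hne
      · intro x hx
        rw [Finset.mem_coe, Equiv.Perm.mem_support] at hx
        simp only [hS, mem_coe, mem_filter, mem_univ, true_and]
        exact ⟨⟨hσ1, hσ2, hx⟩, trivial⟩
      · intro p hp
        simp only [hS, mem_coe, mem_filter, mem_univ, true_and] at hp
        exact Prod.ext hp.2.symm rfl
      · intro x _
        rfl
    rw [this, support_card hσ1, hσ2]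
  rw [Finset.sum_congr rfl hfibcard, Finset.sum_const, smul_eq_mul]
  rfl

/-- Cardinality of the set of triples (involution with k excedances, ordered pair of
distinct fixed points). -/
lemma cardT (n k : ℕ) :
    ((univ : Finset (Equiv.Perm (Fin n) × Fin n × Fin n)).filter
      (fun p => p.1 * p.1 = 1 ∧ excStat p.1 = k ∧ p.2.1 ≠ p.2.2 ∧
        p.1 p.2.1 = p.2.1 ∧ p.1 p.2.2 = p.2.2)).card
    = excCount n k * ((n - 2 * k) * (n - 2 * k) - (n - 2 * k)) := by
  classical
  set T := ((univ : Finset (Equiv.Perm (Fin n) × Fin n × Fin n)).filter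
      (fun p => p.1 * p.1 = 1 ∧ excStat p.1 = k ∧ p.2.1 ≠ p.2.2 ∧
        p.1 p.2.1 = p.2.1 ∧ p.1 p.2.2 = p.2.2)) with hT
  set B := (Invols n).filter (fun σ => excStat σ = k) with hB
  have hmemB : ∀ σ : Equiv.Perm (Fin n), σ ∈ B ↔ (σ * σ = 1 ∧ excStat σ = k) := by
    intro σ; simp [hB, Invols, mem_filter]
  have hfib : ∀ p ∈ T, p.1 ∈ B := by
    intro p hp
    simp only [hT, mem_filter, mem_univ, true_and] at hp
    exact (hmemB p.1).mpr ⟨hp.1, hp.2.1⟩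
  rw [card_eq_sum_card_fiberwise hfib]
  have hfibcard : ∀ σ ∈ B,
      (T.filter fun p => p.1 = σ).card = (n - 2 * k) * (n - 2 * k) - (n - 2 * k) := by
    intro σ hσ
    obtain ⟨hσ1, hσ2⟩ := (hmemB σ).mp hσ
    set F := univ.filter (fun x : Fin n => σ x = x) with hF
    have hFcard : F.card = n - 2 * k := by
      have hcompl : F = σ.supportᶜ := by
        ext x
        simp [hF, Equiv.Perm.mem_support, mem_compl]
      rw [hcompl, Finset.card_compl, Fintype.card_fin, support_card hσ1, hσ2]
    have : (T.filter fun p => p.1 = σ).card = F.offDiag.card := by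
      refine card_nbij' (fun p => p.2) (fun x => (σ, x)) ?_ ?_ ?_ ?_
      · intro p hp
        simp only [hT, mem_coe, mem_filter, mem_univ, true_and] at hp
        obtain ⟨⟨_, _, hne, hf1, hf2⟩, h1⟩ := hp
        rw [Finset.mem_coe, Finset.mem_offDiag]
        subst h1
        exact ⟨by simp [hF, hf1], by simp [hF, hf2], hne⟩
      · intro x hx
        rw [Finset.mem_coe, Finset.mem_offDiag] at hx
        obtain ⟨hx1, hx2, hne⟩ := hx
        simp only [hF, mem_filter, mem_univ, true_and] at hx1 hx2
        simp only [hT, mem_coe, mem_filter, mem_univ, true_and]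
        exact ⟨⟨hσ1, hσ2, hne, hx1, hx2⟩, trivial⟩
      · intro p hp
        simp only [hT, mem_coe, mem_filter, mem_univ, true_and] at hp
        exact Prod.ext hp.2.symm rfl
      · intro x _
        rfl
    rw [this, Finset.offDiag_card, hFcard]
  rw [Finset.sum_congr rfl hfibcard, Finset.sum_const, smul_eq_mul]
  rfl

/-- The key recurrence: `2(k+1) a_{k+1} = (n-2k)(n-2k-1) a_k`. -/
lemma excRec (n k : ℕ) :
    excCount n (k + 1) * (2 * (k + 1))
      = excCount n k * ((n - 2 * k) * (n - 2 * k) - (n - 2 * k)) := by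
  classical
  rw [← cardS n k, ← cardT n k]
  refine card_nbij' (fun p => (p.1 * Equiv.swap p.2 (p.1 p.2), p.2, p.1 p.2))
    (fun q => (q.1 * Equiv.swap q.2.1 q.2.2, q.2.1)) ?_ ?_ ?_ ?_
  · -- forward map lands in T
    rintro ⟨σ, i⟩ hp
    simp only [mem_coe, mem_filter, mem_univ, true_and] at hp ⊢
    obtain ⟨h1, h2, h3⟩ := hp
    set τ := σ * Equiv.swap i (σ i) with hτ
    have hτi : τ i = i := by
      simp only [hτ, Equiv.Perm.mul_apply, Equiv.swap_apply_left]
      exact invol_apply h1 i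
    have hτj : τ (σ i) = σ i := by
      simp only [hτ, Equiv.Perm.mul_apply, Equiv.swap_apply_right]
    have hτinv : τ * τ = 1 := invol_mul_swap' h1 i
    have hback : σ = τ * Equiv.swap i (σ i) := by
      rw [hτ, mul_assoc, Equiv.swap_mul_self, mul_one]
    have hne : i ≠ σ i := fun hc => h3 hc.symm
    have hexc : excStat σ = excStat τ + 1 := by
      conv_lhs => rw [hback]
      exact exc_mul_swap hne hτi hτj
    refine ⟨hτinv, ?_, hne, hτi, hτj⟩
    omega
  · -- backward map lands in S
    rintro ⟨τ, i, j⟩ hq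
    simp only [mem_coe, mem_filter, mem_univ, true_and] at hq ⊢
    obtain ⟨h1, h2, h3, h4, h5⟩ := hq
    refine ⟨invol_mul_swap h1 h4 h5, ?_, ?_⟩
    · rw [exc_mul_swap h3 h4 h5, h2]
    · simp only [Equiv.Perm.mul_apply, Equiv.swap_apply_left, h5]
      exact fun hc => h3 hc.symm
  · -- left inverse
    rintro ⟨σ, i⟩ hp
    simp only [mem_coe, mem_filter, mem_univ, true_and] at hp
    have : σ * Equiv.swap i (σ i) * Equiv.swap i (σ i) = σ := by
      rw [mul_assoc, Equiv.swap_mul_self, mul_one]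
    simp only [this]
  · -- right inverse
    rintro ⟨τ, i, j⟩ hq
    simp only [mem_coe, mem_filter, mem_univ, true_and] at hq
    obtain ⟨h1, h2, h3, h4, h5⟩ := hq
    have happ : (τ * Equiv.swap i j) i = j := by
      simp only [Equiv.Perm.mul_apply, Equiv.swap_apply_left, h5]
    simp only [happ]
    have : τ * Equiv.swap i j * Equiv.swap i j = τ := by
      rw [mul_assoc, Equiv.swap_mul_self, mul_one]
    simp only [this]

end ExcAux

theorem excedance_log_concave (n : ℕ) (hn : 1 ≤ n) (k : ℕ) (hk0 : 0 < k)
    (hk1 : k < n / 2) :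
    excCount n (k - 1) * excCount n (k + 1) ≤ excCount n k ^ 2 := by
  have hkn : 2 * (k + 1) ≤ n := by omega
  set A := excCount n (k - 1) with hA
  set B := excCount n k with hB
  set C := excCount n (k + 1) with hC
  set m := n - 2 * k with hm
  have hm2 : 2 ≤ m := by omega
  -- recurrence at k
  have h1 : C * (2 * (k + 1)) = B * (m * m - m) := ExcAux.excRec n k
  -- recurrence at k - 1
  have h2 : B * (2 * k) = A * ((m + 2) * (m + 2) - (m + 2)) := by
    have := ExcAux.excRec n (k - 1)
    have e1 : k - 1 + 1 = k := by omega
    have e2 : n - 2 * (k - 1) = m + 2 := by omega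
    rw [e1, e2] at this
    exact this
  set p := (m + 2) * (m + 2) - (m + 2) with hp
  set q := m * m - m with hq
  have hmm : (m + 2) * (m + 2) = m * m + 4 * m + 4 := by ring
  have hppos : 0 < p := by omega
  have hqlep : q ≤ p := by omega
  have key : (p * (2 * (k + 1))) * (A * C) = (2 * k * q) * (B * B) := by
    calc (p * (2 * (k + 1))) * (A * C)
        = (A * p) * (C * (2 * (k + 1))) := by ring
      _ = (A * p) * (B * q) := by rw [h1]
      _ = (B * (2 * k)) * (B * q) := by rw [← h2]
      _ = (2 * k * q) * (B * B) := by ring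
  have hle : (2 * k * q) * (B * B) ≤ (p * (2 * (k + 1))) * (B * B) := by
    apply Nat.mul_le_mul_right
    calc 2 * k * q ≤ 2 * (k + 1) * p := by
          apply Nat.mul_le_mul _ hqlep
          omega
      _ = p * (2 * (k + 1)) := by ring
  have : (p * (2 * (k + 1))) * (A * C) ≤ (p * (2 * (k + 1))) * (B * B) := by
    rw [key]; exact hle
  have hpos : 0 < p * (2 * (k + 1)) := by positivity
  have := Nat.le_of_mul_le_mul_left this hpos
  calc A * C ≤ B * B := this
    _ = B ^ 2 := by ring
end
end

section
/- For every positive integer n, the coefficient sequence of the polynomial Σ_{σ∈I_n} x^{wexc(σ)} is log-concave: writing b_k for the number of involutions in S_n with exactly k weak excedances, one has b_k² ≥ b_{k−1}·b_{k+1} for all interior indices k. -/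
noncomputable section
open Finset

/-- The number of weak excedances of a permutation of `Fin n`. -/
def wexcStat {n : ℕ} (σ : Equiv.Perm (Fin n)) : ℕ :=
  (Finset.univ.filter (fun i : Fin n => i ≤ σ i)).card

/-- The number of involutions in `S_n` with exactly `k` weak excedances. -/
def wexcCount (n k : ℕ) : ℕ :=
  ((Invols n).filter (fun σ => wexcStat σ = k)).card

section Aux
open Equiv Equiv.Perm

variable {α : Type*} [Fintype α] [DecidableEq α]

/-- fixed-point-free involutions (perfect matchings) of a finite type -/
def pmSet (α : Type*) [Fintype α] [DecidableEq α] : Finset (Equiv.Perm α) :=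
  Finset.univ.filter (fun σ => σ * σ = 1 ∧ ∀ x, σ x ≠ x)

lemma mem_pmSet {σ : Perm α} : σ ∈ pmSet α ↔ (σ * σ = 1 ∧ ∀ x, σ x ≠ x) := by
  simp [pmSet]

/-- number of perfect matchings of a `j`-set -/
def pmc (j : ℕ) : ℕ := (pmSet (Fin j)).card

lemma pmSet_card_congr {β : Type*} [Fintype β] [DecidableEq β] (e : α ≃ β) :
    (pmSet α).card = (pmSet β).card := by
  apply Finset.card_bij (fun σ _ => e.permCongr σ)
  · intro σ hσ
    rw [mem_pmSet] at hσ ⊢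
    constructor
    · ext x
      simp [Equiv.permCongr_apply, Perm.mul_apply]
      have : σ (σ (e.symm x)) = e.symm x := by
        have := congrArg (fun τ : Perm α => τ (e.symm x)) hσ.1
        simpa [Perm.mul_apply] using this
      rw [this]; simp
    · intro x hx
      simp [Equiv.permCongr_apply] at hx
      have : σ (e.symm x) = e.symm x := by
        have := congrArg e.symm hx; simpa using this
      exact hσ.2 _ this
  · intro σ _ τ _ h
    simpa using congrArg (e.permCongr.symm) h
  · intro τ hτ
    refine ⟨e.symm.permCongr τ, ?_, ?_⟩
    · rw [mem_pmSet] at hτ ⊢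
      constructor
      · ext x
        simp [Equiv.permCongr_apply, Perm.mul_apply]
        have : τ (τ (e x)) = e x := by
          have := congrArg (fun ρ : Perm β => ρ (e x)) hτ.1
          simpa [Perm.mul_apply] using this
        rw [this]; simp
      · intro x hx
        simp [Equiv.permCongr_apply] at hx
        have : τ (e x) = e x := by
          have := congrArg e hx; simpa using this
        exact hτ.2 _ this
    · ext x
      simp [Equiv.permCongr_apply]

omit [Fintype α] [DecidableEq α] in
lemma invol_apply_apply {σ : Perm α} (h : σ * σ = 1) (x : α) : σ (σ x) = x := by
  have := congrArg (fun τ : Perm α => τ x) h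
  simpa [Perm.mul_apply] using this

lemma pmc_rec (j : ℕ) : pmc (j + 2) = (j + 1) * pmc j := by
  classical
  have key : ∀ a : Fin (j+2), a ≠ 0 →
      ((pmSet (Fin (j+2))).filter (fun σ => σ 0 = a)).card = pmc j := by
    intro a ha
    set p : Fin (j+2) → Prop := fun x => x ≠ 0 ∧ x ≠ a with hp
    have hcard : Fintype.card {x // p x} = j := by
      have : Fintype.card {x // p x} = (Finset.univ.filter p).card :=
        Fintype.card_subtype p
      rw [this]
      have : Finset.univ.filter p = (Finset.univ : Finset (Fin (j+2))) \ {0, a} := by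
        ext x; simp [hp, and_comm]
      rw [this, Finset.card_sdiff_of_subset (by simp)]
      rw [Finset.card_pair (show (0 : Fin (j+2)) ≠ a from Ne.symm ha)]
      simp
    have hstep : ((pmSet (Fin (j+2))).filter (fun σ => σ 0 = a)).card
        = (pmSet {x // p x}).card := by
      symm
      apply Finset.card_bij (fun τ _ => Equiv.swap 0 a * ofSubtype τ)
      · intro τ hτ
        rw [mem_pmSet] at hτ
        have hfixa : ofSubtype τ a = a :=
          ofSubtype_apply_of_not_mem τ (by simp [hp])
        have hfix0 : ofSubtype τ (0 : Fin (j+2)) = 0 :=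
          ofSubtype_apply_of_not_mem τ (by simp [hp])
        have hcomm : Commute (Equiv.swap (0 : Fin (j+2)) a) (ofSubtype τ) := by
          apply Equiv.Perm.Disjoint.commute
          intro x
          by_cases hx : p x
          · left; exact Equiv.swap_apply_of_ne_of_ne hx.1 hx.2
          · right
            exact ofSubtype_apply_of_not_mem τ hx
        have hinv : (Equiv.swap 0 a * ofSubtype τ) * (Equiv.swap 0 a * ofSubtype τ) = 1 := by
          rw [mul_assoc, ← mul_assoc (ofSubtype τ), ← hcomm.eq, mul_assoc, ← mul_assoc,
            Equiv.swap_mul_self, one_mul, ← map_mul, hτ.1, map_one]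
        rw [Finset.mem_filter, mem_pmSet]
        refine ⟨⟨hinv, ?_⟩, ?_⟩
        · intro x
          by_cases hx0 : x = 0
          · subst hx0
            simp only [Perm.mul_apply, hfix0, Equiv.swap_apply_left]
            exact ha
          by_cases hxa : x = a
          · subst hxa
            simp only [Perm.mul_apply, hfixa, Equiv.swap_apply_right]
            exact Ne.symm ha
          · have hx : p x := ⟨hx0, hxa⟩
            have h1 : ofSubtype τ x = (τ ⟨x, hx⟩ : Fin (j+2)) :=
              ofSubtype_apply_of_mem τ hx
            have h2 : p (τ ⟨x, hx⟩ : Fin (j+2)) := (τ ⟨x, hx⟩).2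
            simp only [Perm.mul_apply, h1,
              Equiv.swap_apply_of_ne_of_ne h2.1 h2.2]
            intro hcon
            exact hτ.2 ⟨x, hx⟩ (Subtype.ext hcon)
        · simp only [Perm.mul_apply, hfix0, Equiv.swap_apply_left]
      · intro τ _ τ' _ hEq
        have := mul_left_cancel hEq
        apply Equiv.ext; intro x
        have := congrArg (fun ρ : Perm (Fin (j+2)) => ρ (x : Fin (j+2))) this
        simp only [ofSubtype_apply_coe] at this
        exact Subtype.coe_injective this
      · intro σ hσ
        rw [Finset.mem_filter, mem_pmSet] at hσ
        obtain ⟨⟨hσ1, hσ2⟩, hσ0⟩ := hσ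
        have hσa : σ a = 0 := by rw [← hσ0]; exact invol_apply_apply hσ1 0
        have hiff : ∀ x, p x ↔ p (σ x) := by
          intro x
          constructor
          · rintro ⟨hx0, hxa⟩
            constructor
            · intro hcon
              exact hxa (by rw [← invol_apply_apply hσ1 x, hcon, hσ0])
            · intro hcon
              exact hx0 (by rw [← invol_apply_apply hσ1 x, hcon, hσa])
          · rintro ⟨h0, h1⟩
            constructor
            · intro hcon; subst hcon; exact h1 hσ0
            · intro hcon; subst hcon; exact h0 hσa
        refine ⟨σ.subtypePerm (fun x => (hiff x).symm), ?_, ?_⟩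
        · rw [mem_pmSet]
          constructor
          · rw [subtypePerm_mul]
            ext x
            simp [hσ1, Equiv.Perm.subtypePerm_apply, invol_apply_apply hσ1]
          · intro x hcon
            exact hσ2 x (congrArg Subtype.val hcon)
        · apply Equiv.ext; intro x
          by_cases hx0 : (x : Fin (j+2)) = 0
          · rw [Perm.mul_apply,
              ofSubtype_apply_of_not_mem _ (by simp [hp, hx0]), hx0,
              Equiv.swap_apply_left, ← hσ0]
          by_cases hxa : (x : Fin (j+2)) = a
          · rw [Perm.mul_apply,
              ofSubtype_apply_of_not_mem _ (by simp [hp, hxa]), hxa,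
              Equiv.swap_apply_right, ← hσa]
          · have hx : p x := ⟨hx0, hxa⟩
            rw [Perm.mul_apply, ofSubtype_subtypePerm_of_mem (fun x => (hiff x).symm) hx]
            have h2 : p (σ x) := (hiff x).1 hx
            exact Equiv.swap_apply_of_ne_of_ne h2.1 h2.2
    rw [hstep, pmc]
    exact pmSet_card_congr ((Fintype.equivFinOfCardEq hcard))
  have hsplit : (pmSet (Fin (j+2))).card
      = ∑ a ∈ (Finset.univ.erase (0 : Fin (j+2))), ((pmSet (Fin (j+2))).filter (fun σ => σ 0 = a)).card := by
    apply Finset.card_eq_sum_card_fiberwise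
    intro σ hσ
    rw [Finset.mem_coe, mem_pmSet] at hσ
    simp [Finset.mem_erase, hσ.2 0]
  rw [pmc, hsplit]
  rw [Finset.sum_congr rfl (fun a ha => key a (Finset.mem_erase.1 ha).1)]
  simp [Finset.card_erase_of_mem, mul_comm]

/-- number of fixed points -/
def fixCount {n : ℕ} (σ : Perm (Fin n)) : ℕ :=
  (Finset.univ.filter (fun i : Fin n => σ i = i)).card

lemma two_mul_wexc {n : ℕ} {σ : Perm (Fin n)} (h : σ * σ = 1) :
    2 * wexcStat σ = n + fixCount σ := by
  classical
  have hW' : (Finset.univ.filter (fun i : Fin n => σ i ≤ i)).card = wexcStat σ := by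
    symm
    apply Finset.card_bij (fun i _ => σ i)
    · intro i hi
      simp only [Finset.mem_filter, Finset.mem_univ, true_and] at hi ⊢
      rw [invol_apply_apply h]; exact hi
    · intro i _ i' _ hii'
      exact σ.injective hii'
    · intro j hj
      simp only [Finset.mem_filter, Finset.mem_univ, true_and] at hj
      exact ⟨σ j, by simp [invol_apply_apply h, hj], invol_apply_apply h j⟩
  have hunion : (Finset.univ.filter (fun i : Fin n => i ≤ σ i)) ∪
      (Finset.univ.filter (fun i : Fin n => σ i ≤ i)) = Finset.univ := by
    ext i
    simp only [Finset.mem_union, Finset.mem_filter, Finset.mem_univ, true_and, iff_true]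
    exact le_total i (σ i)
  have hinter : (Finset.univ.filter (fun i : Fin n => i ≤ σ i)) ∩
      (Finset.univ.filter (fun i : Fin n => σ i ≤ i)) =
      Finset.univ.filter (fun i : Fin n => σ i = i) := by
    ext i
    simp only [Finset.mem_inter, Finset.mem_filter, Finset.mem_univ, true_and]
    constructor
    · rintro ⟨h1, h2⟩; exact le_antisymm h2 h1
    · intro h1; exact ⟨le_of_eq h1.symm, le_of_eq h1⟩
  have := Finset.card_union_add_card_inter
    (Finset.univ.filter (fun i : Fin n => i ≤ σ i))
    (Finset.univ.filter (fun i : Fin n => σ i ≤ i))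
  rw [hunion, hinter] at this
  have hcu : (Finset.univ : Finset (Fin n)).card = n := by simp
  rw [hcu, hW'] at this
  unfold wexcStat fixCount at *
  omega

end Aux

section Aux2
open Equiv Equiv.Perm
def fSet {n : ℕ} (σ : Perm (Fin n)) : Finset (Fin n) :=
  Finset.univ.filter (fun i : Fin n => σ i = i)

def icount (n f : ℕ) : ℕ := ((Invols n).filter (fun σ => fixCount σ = f)).card

lemma fiber_card {n : ℕ} (S : Finset (Fin n)) :
    (((Invols n).filter (fun σ => fSet σ = S))).card = pmc (n - S.card) := by
  classical
  set p : Fin n → Prop := fun x => x ∉ S with hp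
  have hcard : Fintype.card {x // p x} = n - S.card := by
    rw [Fintype.card_subtype]
    have : Finset.univ.filter p = (Finset.univ : Finset (Fin n)) \ S := by
      ext x; simp [hp]
    rw [this, Finset.card_sdiff_of_subset (Finset.subset_univ S)]
    simp
  have hstep : (((Invols n).filter (fun σ => fSet σ = S))).card = (pmSet {x // p x}).card := by
    symm
    apply Finset.card_bij (fun τ _ => ofSubtype τ)
    · intro τ hτ
      rw [mem_pmSet] at hτ
      simp only [Finset.mem_filter, Invols, Finset.mem_univ, true_and]
      constructor
      · rw [← map_mul, hτ.1, map_one]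
      · ext x
        simp only [fSet, Finset.mem_filter, Finset.mem_univ, true_and]
        by_cases hx : p x
        · rw [ofSubtype_apply_of_mem τ hx]
          constructor
          · intro hcon
            exact absurd (Subtype.ext hcon : τ ⟨x, hx⟩ = ⟨x, hx⟩) (hτ.2 ⟨x, hx⟩)
          · intro hxS; exact absurd hxS hx
        · rw [ofSubtype_apply_of_not_mem τ hx]
          simp only [hp, not_not] at hx
          simp [hx]
    · intro τ _ τ' _ hEq
      apply Equiv.ext; intro x
      have := congrArg (fun ρ : Perm (Fin n) => ρ (x : Fin n)) hEq
      simp only [ofSubtype_apply_coe] at this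
      exact Subtype.coe_injective this
    · intro σ hσ
      simp only [Finset.mem_filter, Invols, Finset.mem_univ, true_and] at hσ
      obtain ⟨hσ1, hσ2⟩ := hσ
      have hfix : ∀ x : Fin n, σ x = x ↔ x ∈ S := by
        intro x
        rw [← hσ2]
        simp [fSet]
      have hiff : ∀ x, p x ↔ p (σ x) := by
        intro x
        simp only [hp, ← hfix]
        constructor
        · intro hx hcon
          exact hx (by rw [← invol_apply_apply hσ1 x, hcon, hcon])
        · intro hx hcon
          exact hx (by rw [hcon]; exact hcon)
      refine ⟨σ.subtypePerm (fun x => (hiff x).symm), ?_, ?_⟩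
      · rw [mem_pmSet]
        constructor
        · rw [subtypePerm_mul]
          apply Equiv.ext; intro x
          apply Subtype.coe_injective
          simp [invol_apply_apply hσ1]
        · intro x hcon
          have : σ (x : Fin n) = x := congrArg Subtype.val hcon
          exact x.2 ((hfix _).1 this)
      · exact ofSubtype_subtypePerm (fun x => (hiff x).symm) (fun x hx => fun hxS => hx ((hfix x).2 hxS))
  rw [hstep]
  exact pmSet_card_congr (Fintype.equivFinOfCardEq hcard)

lemma icount_eq (n f : ℕ) : icount n f = Nat.choose n f * pmc (n - f) := by
  classical
  have hsplit : icount n f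
      = ∑ S ∈ Finset.powersetCard f (Finset.univ : Finset (Fin n)),
        (((Invols n).filter (fun σ => fixCount σ = f)).filter (fun σ => fSet σ = S)).card := by
    apply Finset.card_eq_sum_card_fiberwise
    intro σ hσ
    simp only [Finset.mem_coe, Finset.mem_filter] at hσ
    rw [Finset.mem_coe, Finset.mem_powersetCard_univ]
    exact hσ.2
  have hfib : ∀ S ∈ Finset.powersetCard f (Finset.univ : Finset (Fin n)),
      (((Invols n).filter (fun σ => fixCount σ = f)).filter (fun σ => fSet σ = S)).card
        = pmc (n - f) := by
    intro S hS
    rw [Finset.mem_powersetCard_univ] at hS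
    have : ((Invols n).filter (fun σ => fixCount σ = f)).filter (fun σ => fSet σ = S)
        = (Invols n).filter (fun σ => fSet σ = S) := by
      rw [Finset.filter_filter]
      apply Finset.filter_congr
      intro σ _
      constructor
      · rintro ⟨h1, h2⟩; exact h2
      · intro h2
        refine ⟨?_, h2⟩
        have : fixCount σ = (fSet σ).card := rfl
        rw [this, h2, hS]
    rw [this, fiber_card, hS]
  rw [hsplit, Finset.sum_congr rfl hfib, Finset.sum_const,
    Finset.card_powersetCard, Finset.card_univ, Fintype.card_fin, smul_eq_mul]

lemma wexcCount_lt (n k : ℕ) (h : 2 * k < n) : wexcCount n k = 0 := by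
  rw [wexcCount, Finset.card_eq_zero, Finset.filter_eq_empty_iff]
  intro σ hσ
  have hσ1 : σ * σ = 1 := by simpa [Invols] using hσ
  intro hk
  have := two_mul_wexc hσ1
  omega

lemma wexcCount_ge (n k : ℕ) (h : n ≤ 2 * k) : wexcCount n k = icount n (2 * k - n) := by
  rw [wexcCount, icount]
  apply congrArg
  apply Finset.filter_congr
  intro σ hσ
  have hσ1 : σ * σ = 1 := by simpa [Invols] using hσ
  have := two_mul_wexc hσ1
  omega

end Aux2

lemma key_ineq (f' m n : ℕ) (hn : n = f' + m + 4) :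
    Nat.choose n f' * Nat.choose n (f' + 4) * (m + 3)
      ≤ Nat.choose n (f' + 2) ^ 2 * (m + 1) := by
  set c0 := Nat.choose n f'
  set c1 := Nat.choose n (f' + 1)
  set c2 := Nat.choose n (f' + 2)
  set c3 := Nat.choose n (f' + 3)
  set c4 := Nat.choose n (f' + 4)
  have h1 : c1 * (f' + 1) = c0 * (m + 4) := by
    have h := Nat.choose_succ_right_eq n f'
    rw [show n - f' = m + 4 from by omega] at h
    simpa using h
  have h2 : c2 * (f' + 2) = c1 * (m + 3) := by
    have h := Nat.choose_succ_right_eq n (f' + 1)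
    rw [show n - (f' + 1) = m + 3 from by omega] at h
    simpa [show f' + 1 + 1 = f' + 2 from by omega] using h
  have h3 : c3 * (f' + 3) = c2 * (m + 2) := by
    have h := Nat.choose_succ_right_eq n (f' + 2)
    rw [show n - (f' + 2) = m + 2 from by omega] at h
    simpa [show f' + 2 + 1 = f' + 3 from by omega] using h
  have h4 : c4 * (f' + 4) = c3 * (m + 1) := by
    have h := Nat.choose_succ_right_eq n (f' + 3)
    rw [show n - (f' + 3) = m + 1 from by omega] at h
    simpa [show f' + 3 + 1 = f' + 4 from by omega] using h
  have A : c2 * ((f' + 2) * (f' + 1)) = c0 * ((m + 4) * (m + 3)) := by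
    calc c2 * ((f' + 2) * (f' + 1)) = (c2 * (f' + 2)) * (f' + 1) := by ring
      _ = (c1 * (f' + 1)) * (m + 3) := by rw [h2]; ring
      _ = (c0 * (m + 4)) * (m + 3) := by rw [h1]
      _ = c0 * ((m + 4) * (m + 3)) := by ring
  have B : c4 * ((f' + 4) * (f' + 3)) = c2 * ((m + 2) * (m + 1)) := by
    calc c4 * ((f' + 4) * (f' + 3)) = (c4 * (f' + 4)) * (f' + 3) := by ring
      _ = (c3 * (f' + 3)) * (m + 1) := by rw [h4]; ring
      _ = (c2 * (m + 2)) * (m + 1) := by rw [h3]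
      _ = c2 * ((m + 2) * (m + 1)) := by ring
  have main : (m + 2) * ((f' + 1) * (f' + 2)) ≤ (m + 4) * ((f' + 3) * (f' + 4)) :=
    Nat.mul_le_mul (by omega) (Nat.mul_le_mul (by omega) (by omega))
  set Q := (f' + 1) * (f' + 2) * (f' + 3) * (f' + 4) * (m + 3) * (m + 4) with hQ
  have step : (c0 * c4 * (m + 3)) * Q ≤ (c2 ^ 2 * (m + 1)) * Q := by
    have hL : (c0 * c4 * (m + 3)) * Q
        = (c2 ^ 2 * ((m + 1) * (m + 3))) * ((f' + 1) * (f' + 2)) *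
            ((m + 2) * ((f' + 1) * (f' + 2))) := by
      calc (c0 * c4 * (m + 3)) * Q
          = (c4 * ((f' + 4) * (f' + 3))) * (c0 * ((m + 4) * (m + 3))) *
              ((m + 3) * ((f' + 2) * (f' + 1))) := by rw [hQ]; ring
        _ = (c2 * ((m + 2) * (m + 1))) * (c2 * ((f' + 2) * (f' + 1))) *
              ((m + 3) * ((f' + 2) * (f' + 1))) := by rw [B, ← A]
        _ = _ := by ring
    have hR : (c2 ^ 2 * (m + 1)) * Q
        = (c2 ^ 2 * ((m + 1) * (m + 3))) * ((f' + 1) * (f' + 2)) *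
            ((m + 4) * ((f' + 3) * (f' + 4))) := by rw [hQ]; ring
    rw [hL, hR]
    exact Nat.mul_le_mul (le_refl _) main
  have hQpos : 0 < Q := by positivity
  exact Nat.le_of_mul_le_mul_right step hQpos

theorem weak_excedance_log_concave (n : ℕ) (hn : 1 ≤ n) (k : ℕ) (hk0 : 0 < k)
    (hk1 : k < n) :
    wexcCount n (k - 1) * wexcCount n (k + 1) ≤ wexcCount n k ^ 2 := by
  by_cases hlow : 2 * k < n + 2
  · have : 2 * (k - 1) < n := by omega
    rw [wexcCount_lt n (k - 1) this, zero_mul]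
    exact Nat.zero_le _
  · push_neg at hlow
    set f' := 2 * k - n - 2 with hf'
    set m := 2 * n - 2 * k - 2 with hm
    have hn4 : n = f' + m + 4 := by omega
    have e1 : wexcCount n (k - 1) = Nat.choose n f' * pmc (m + 4) := by
      rw [wexcCount_ge n (k - 1) (by omega), icount_eq,
        show 2 * (k - 1) - n = f' from by omega, show n - f' = m + 4 from by omega]
    have e2 : wexcCount n (k + 1) = Nat.choose n (f' + 4) * pmc m := by
      rw [wexcCount_ge n (k + 1) (by omega), icount_eq,
        show 2 * (k + 1) - n = f' + 4 from by omega,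
        show n - (f' + 4) = m from by omega]
    have e3 : wexcCount n k = Nat.choose n (f' + 2) * pmc (m + 2) := by
      rw [wexcCount_ge n k (by omega), icount_eq,
        show 2 * k - n = f' + 2 from by omega,
        show n - (f' + 2) = m + 2 from by omega]
    rw [e1, e2, e3]
    have p2 : pmc (m + 2) = (m + 1) * pmc m := pmc_rec m
    have p4 : pmc (m + 4) = (m + 3) * ((m + 1) * pmc m) := by
      rw [show m + 4 = (m + 2) + 2 by ring, pmc_rec, p2]
    rw [p2, p4]
    have key := key_ineq f' m n hn4
    calc Nat.choose n f' * ((m + 3) * ((m + 1) * pmc m)) * (Nat.choose n (f' + 4) * pmc m)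
        = (Nat.choose n f' * Nat.choose n (f' + 4) * (m + 3)) * ((m + 1) * (pmc m * pmc m)) := by
          ring
      _ ≤ (Nat.choose n (f' + 2) ^ 2 * (m + 1)) * ((m + 1) * (pmc m * pmc m)) :=
          Nat.mul_le_mul key (le_refl _)
      _ = (Nat.choose n (f' + 2) * ((m + 1) * pmc m)) ^ 2 := by ring
end
end

section
/- For every positive integer n and every 0 ≤ i ≤ n−1, the number of involutions in S_n with exactly i descents equals the number of involutions in S_n with exactly n−1−i descents; that is, the polynomial I_n^d(t) = Σ_{σ∈I_n} t^{d(σ)} is symmetric. -/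
noncomputable section
open Finset


/-- The set of fixed-point-free involutions in the symmetric group on `Fin n`. -/
def FPFInvols (n : ℕ) : Finset (Equiv.Perm (Fin n)) :=
  Finset.univ.filter (fun σ => σ * σ = 1 ∧ ∀ i, σ i ≠ i)

/-- `σ` viewed as a function on one-based positions `1,…,n` (via zero-based `Fin n`),
returning one-based values; positions outside `[0,n)` are fixed. -/
def permFun (n : ℕ) (σ : Equiv.Perm (Fin n)) (i : ℕ) : ℕ :=
  if h : i < n then (σ ⟨i, h⟩ : ℕ) else i

/-- The descent set of `σ`, as a subset of `{1,…,n-1}` (one-based positions):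
`i` is a descent iff `σ_i > σ_{i+1}`. -/
def DesSet (n : ℕ) (σ : Equiv.Perm (Fin n)) : Finset ℕ :=
  (Finset.Icc 1 (n - 1)).filter (fun i => permFun n σ i < permFun n σ (i - 1))

/-- The number of descents of `σ`. -/
def desStat (n : ℕ) (σ : Equiv.Perm (Fin n)) : ℕ := (DesSet n σ).card

/-- The major index of `σ`. -/
def majStat (n : ℕ) (σ : Equiv.Perm (Fin n)) : ℕ := ∑ i ∈ DesSet n σ, i

namespace InvDes


variable {n : ℕ}

/-- fiber of the coloring -/
def fib (c : Fin n → ℕ) (a : ℕ) : Finset (Fin n) := univ.filter (fun i => c i = a)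

/-- size of a fiber -/
def rr (c : Fin n → ℕ) (a : ℕ) : ℕ := (fib c a).card

/-- offset of a position within its fiber -/
def off (c : Fin n → ℕ) (i : Fin n) : ℕ := (univ.filter (fun j => j < i ∧ c j = c i)).card

lemma off_lt (c : Fin n → ℕ) (i : Fin n) : off c i < rr c (c i) := by
  apply Finset.card_lt_card
  rw [Finset.ssubset_iff_of_subset]
  · exact ⟨i, by simp [fib], by simp⟩
  · intro j hj
    simp only [mem_filter, mem_univ, true_and] at hj
    simp [fib, hj.2]

lemma off_lt_off (c : Fin n → ℕ) {i j : Fin n} (hij : i < j) (hcc : c i = c j) :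
    off c i < off c j := by
  apply Finset.card_lt_card
  rw [Finset.ssubset_iff_of_subset]
  · exact ⟨i, by simp [hij, hcc], by simp⟩
  · intro k hk
    simp only [mem_filter, mem_univ, true_and] at hk ⊢
    exact ⟨hk.1.trans hij, hk.2.trans hcc⟩

lemma off_lt_iff (c : Fin n → ℕ) {i j : Fin n} (hcc : c i = c j) :
    i < j ↔ off c i < off c j := by
  constructor
  · exact fun h => off_lt_off c h hcc
  · intro h
    rcases lt_trichotomy i j with h' | rfl | h'
    · exact h'
    · exact absurd h (lt_irrefl _)
    · exact absurd (off_lt_off c h' hcc.symm) (by omega)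

lemma off_inj (c : Fin n → ℕ) {i j : Fin n} (hcc : c i = c j) (h : off c i = off c j) :
    i = j := by
  rcases lt_trichotomy i j with h' | rfl | h'
  · exact absurd (off_lt_off c h' hcc) (by omega)
  · rfl
  · exact absurd (off_lt_off c h' hcc.symm) (by omega)

lemma exists_pos (c : Fin n → ℕ) {a t : ℕ} (h : t < rr c a) :
    ∃ i : Fin n, c i = a ∧ off c i = t := by
  have hsurj := Finset.surj_on_of_inj_on_of_card_le (s := fib c a) (t := range (rr c a))
    (fun i _ => off c i)
    (fun i hi => by
      simp only [fib, mem_filter, mem_univ, true_and] at hi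
      simpa [mem_range, hi] using off_lt c i)
    (fun i j hi hj hij => by
      simp only [fib, mem_filter, mem_univ, true_and] at hi hj
      exact off_inj c (hi.trans hj.symm) hij)
    (by simp [rr])
  obtain ⟨i, hi, hit⟩ := hsurj t (mem_range.2 h)
  simp only [fib, mem_filter, mem_univ, true_and] at hi
  exact ⟨i, hi, hit.symm⟩

/-- the position in fiber `a` with offset `t` (with a default value) -/
def posn (c : Fin n → ℕ) (a t : ℕ) (i₀ : Fin n) : Fin n :=
  if h : ∃ i : Fin n, c i = a ∧ off c i = t then h.choose else i₀

lemma posn_eq (c : Fin n → ℕ) {a t : ℕ} {i : Fin n} (hc : c i = a) (ht : off c i = t)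
    (i₀ : Fin n) : posn c a t i₀ = i := by
  have h : ∃ i : Fin n, c i = a ∧ off c i = t := ⟨i, hc, ht⟩
  rw [posn, dif_pos h]
  exact off_inj c (h.choose_spec.1.trans hc.symm) (h.choose_spec.2.trans ht.symm)

lemma posn_spec (c : Fin n → ℕ) {a t : ℕ} (h : t < rr c a) (i₀ : Fin n) :
    c (posn c a t i₀) = a ∧ off c (posn c a t i₀) = t := by
  obtain ⟨i, hc, ht⟩ := exists_pos c h
  rw [posn_eq c hc ht i₀]
  exact ⟨hc, ht⟩


/-- partial row sums (below) -/
def FF (M : ℕ → ℕ → ℕ) (a b : ℕ) : ℕ := ∑ x ∈ range b, M a x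
/-- partial row sums (above) -/
def GG (n : ℕ) (M : ℕ → ℕ → ℕ) (a b : ℕ) : ℕ := ∑ x ∈ Ico (b + 1) n, M a x

structure Valid (c : Fin n → ℕ) (M : ℕ → ℕ → ℕ) : Prop where
  symm : ∀ a b, M a b = M b a
  row : ∀ a, ∑ x ∈ range n, M a x = rr c a
  bound : ∀ a b, n ≤ b → M a b = 0

lemma FF_succ (M : ℕ → ℕ → ℕ) (a b : ℕ) : FF M a (b + 1) = FF M a b + M a b :=
  Finset.sum_range_succ _ _

lemma FF_mono (M : ℕ → ℕ → ℕ) (a : ℕ) {b b' : ℕ} (h : b ≤ b') : FF M a b ≤ FF M a b' :=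
  Finset.sum_le_sum_of_subset (by simp [Finset.range_subset, h]; intro x hx; omega)

lemma FF_row {c : Fin n → ℕ} {M : ℕ → ℕ → ℕ} (V : Valid c M) (a : ℕ) :
    FF M a n = rr c a := V.row a

lemma GG_nn (M : ℕ → ℕ → ℕ) (a : ℕ) : GG n M a n = 0 := by
  rw [GG, Finset.Ico_eq_empty (by omega : ¬ n + 1 < n), Finset.sum_empty]

lemma GG_succ {c : Fin n → ℕ} {M : ℕ → ℕ → ℕ} (V : Valid c M) (a b : ℕ) :
    GG n M a b = M a (b + 1) + GG n M a (b + 1) := by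
  rcases lt_or_ge (b + 1) n with h | h
  · rw [GG, GG, Finset.sum_eq_sum_Ico_succ_bot h]
  · rw [GG, GG, Finset.Ico_eq_empty (by omega : ¬ b + 1 < n),
      Finset.Ico_eq_empty (by omega : ¬ b + 1 + 1 < n), V.bound a (b + 1) h]
    simp

lemma GG_antitone (M : ℕ → ℕ → ℕ) (a : ℕ) {b b' : ℕ} (h : b ≤ b') :
    GG n M a b' ≤ GG n M a b :=
  Finset.sum_le_sum_of_subset (Finset.Ico_subset_Ico (by omega) le_rfl)

lemma FF_add_GG {c : Fin n → ℕ} {M : ℕ → ℕ → ℕ} (V : Valid c M) {a b : ℕ} (hb : b < n) :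
    FF M a (b + 1) + GG n M a b = rr c a := by
  rw [FF, GG, Finset.range_eq_Ico, Finset.sum_Ico_consecutive _ (by omega) (by omega : b + 1 ≤ n),
    ← Finset.range_eq_Ico, V.row]

lemma GG_zero {c : Fin n → ℕ} {M : ℕ → ℕ → ℕ} (V : Valid c M) (a : ℕ) :
    GG n M a 0 + M a 0 = rr c a := by
  rcases Nat.eq_zero_or_pos n with rfl | hn
  · have h1 : GG 0 M a 0 = 0 := by
      rw [GG, Finset.Ico_eq_empty (by omega : ¬ 0 + 1 < 0), Finset.sum_empty]
    have h2 : M a 0 = 0 := V.bound a 0 le_rfl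
    have h3 : rr c a = 0 := by
      rw [rr, Finset.card_eq_zero]
      apply Finset.eq_empty_of_forall_notMem
      intro i _
      exact absurd i.2 (by omega)
    omega
  · have := FF_add_GG V (a := a) (b := 0) hn
    rw [FF_succ, FF] at this
    simp only [Finset.range_zero, Finset.sum_empty, zero_add] at this
    omega

/-- the chunk index for the increasing convention -/
def chunkI (n : ℕ) (M : ℕ → ℕ → ℕ) (a o : ℕ) : ℕ :=
  Nat.findGreatest (fun b => FF M a b ≤ o) n

lemma GG_ex (n : ℕ) (M : ℕ → ℕ → ℕ) (a o : ℕ) : ∃ b, GG n M a b ≤ o :=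
  ⟨n, by rw [GG_nn]; omega⟩

/-- the chunk index for the decreasing convention -/
def chunkG (n : ℕ) (M : ℕ → ℕ → ℕ) (a o : ℕ) : ℕ :=
  Nat.find (GG_ex n M a o)

lemma chunkI_spec {c : Fin n → ℕ} {M : ℕ → ℕ → ℕ} (V : Valid c M) {a o : ℕ}
    (ho : o < rr c a) :
    FF M a (chunkI n M a o) ≤ o ∧ o < FF M a (chunkI n M a o) + M a (chunkI n M a o) ∧
      chunkI n M a o < n := by
  have h0 : FF M a (chunkI n M a o) ≤ o :=
    Nat.findGreatest_spec (P := fun b => FF M a b ≤ o) (Nat.zero_le n) (by simp [FF])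
  have hle : chunkI n M a o ≤ n := Nat.findGreatest_le n
  have hlt : chunkI n M a o < n := by
    rcases hle.lt_or_eq with h | h
    · exact h
    · exfalso
      have h0' : FF M a n ≤ o := h ▸ h0
      have := FF_row V a
      omega
  refine ⟨h0, ?_, hlt⟩
  have hg := Nat.findGreatest_is_greatest (P := fun b => FF M a b ≤ o) (n := n)
    (k := chunkI n M a o + 1) (Nat.lt_succ_of_le (Nat.le_of_eq rfl)) (by omega)
  simp only [not_le] at hg
  rw [FF_succ] at hg
  omega

lemma chunkI_unique {c : Fin n → ℕ} {M : ℕ → ℕ → ℕ} (V : Valid c M) {a o b : ℕ}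
    (ho : o < rr c a) (h1 : FF M a b ≤ o) (h2 : o < FF M a b + M a b) :
    chunkI n M a o = b := by
  obtain ⟨g1, g2, _⟩ := chunkI_spec V ho
  rcases lt_trichotomy (chunkI n M a o) b with h | h | h
  · have hmm : FF M a (chunkI n M a o + 1) ≤ FF M a b := FF_mono M a (by omega)
    rw [FF_succ] at hmm; omega
  · exact h
  · have hmm : FF M a (b + 1) ≤ FF M a (chunkI n M a o) := FF_mono M a (by omega)
    rw [FF_succ] at hmm; omega

lemma chunkG_spec {c : Fin n → ℕ} {M : ℕ → ℕ → ℕ} (V : Valid c M) {a o : ℕ}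
    (ho : o < rr c a) :
    GG n M a (chunkG n M a o) ≤ o ∧ o < GG n M a (chunkG n M a o) + M a (chunkG n M a o) ∧
      chunkG n M a o < n := by
  have h0 : GG n M a (chunkG n M a o) ≤ o := Nat.find_spec (GG_ex n M a o)
  have h2 : o < GG n M a (chunkG n M a o) + M a (chunkG n M a o) := by
    rcases Nat.eq_zero_or_pos (chunkG n M a o) with h | h
    · have := GG_zero V a
      rw [h]; omega
    · have hmin := Nat.find_min (GG_ex n M a o) (show chunkG n M a o - 1 < chunkG n M a o by omega)
      simp only [not_le] at hmin
      have hs := GG_succ V a (chunkG n M a o - 1)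
      have heq : chunkG n M a o - 1 + 1 = chunkG n M a o := by omega
      rw [heq] at hs
      omega
  refine ⟨h0, h2, ?_⟩
  by_contra h
  push_neg at h
  have hz : GG n M a (chunkG n M a o) ≤ GG n M a n := GG_antitone (n := n) M a h
  rw [GG_nn] at hz
  have : M a (chunkG n M a o) = 0 := V.bound a _ h
  omega

lemma chunkG_unique {c : Fin n → ℕ} {M : ℕ → ℕ → ℕ} (V : Valid c M) {a o b : ℕ}
    (ho : o < rr c a) (h1 : GG n M a b ≤ o) (h2 : o < GG n M a b + M a b) :
    chunkG n M a o = b := by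
  obtain ⟨g1, g2, _⟩ := chunkG_spec V ho
  rcases lt_trichotomy (chunkG n M a o) b with h | h | h
  · have h3 : GG n M a (b - 1) ≤ GG n M a (chunkG n M a o) :=
      GG_antitone (n := n) M a (by omega)
    have h4 := GG_succ V a (b - 1)
    have heq : b - 1 + 1 = b := by omega
    rw [heq] at h4; omega
  · exact h
  · have h3 : GG n M a (chunkG n M a o - 1) ≤ GG n M a b := GG_antitone (n := n) M a (by omega)
    have h4 := GG_succ V a (chunkG n M a o - 1)
    have heq : chunkG n M a o - 1 + 1 = chunkG n M a o := by omega
    rw [heq] at h4; omega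


/-- decode a matrix into a permutation-function: increasing convention -/
def decIfun (c : Fin n → ℕ) (M : ℕ → ℕ → ℕ) (i : Fin n) : Fin n :=
  posn c (chunkI n M (c i) (off c i))
    (FF M (chunkI n M (c i) (off c i)) (c i) +
      (off c i - FF M (c i) (chunkI n M (c i) (off c i)))) i

lemma decI_spec {c : Fin n → ℕ} {M : ℕ → ℕ → ℕ} (V : Valid c M) (hcn : ∀ i, c i < n)
    (i : Fin n) :
    c (decIfun c M i) = chunkI n M (c i) (off c i) ∧
    off c (decIfun c M i) =
      FF M (chunkI n M (c i) (off c i)) (c i) +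
        (off c i - FF M (c i) (chunkI n M (c i) (off c i))) := by
  have ho : off c i < rr c (c i) := off_lt c i
  obtain ⟨w1, w2, w3⟩ := chunkI_spec V ho
  have hMs := V.symm (c i) (chunkI n M (c i) (off c i))
  have htar : FF M (chunkI n M (c i) (off c i)) (c i) +
      (off c i - FF M (c i) (chunkI n M (c i) (off c i))) <
      rr c (chunkI n M (c i) (off c i)) := by
    have h2 : FF M (chunkI n M (c i) (off c i)) (c i + 1) ≤
        rr c (chunkI n M (c i) (off c i)) := by
      rw [← FF_row V]
      exact FF_mono M _ (hcn i)
    rw [FF_succ] at h2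
    omega
  rw [decIfun]
  exact posn_spec c htar i

lemma decI_invol {c : Fin n → ℕ} {M : ℕ → ℕ → ℕ} (V : Valid c M) (hcn : ∀ i, c i < n) :
    Function.Involutive (decIfun c M) := by
  intro i
  obtain ⟨hc1, hc2⟩ := decI_spec V hcn i
  have ho : off c i < rr c (c i) := off_lt c i
  obtain ⟨w1, w2, w3⟩ := chunkI_spec V ho
  have hMs := V.symm (c i) (chunkI n M (c i) (off c i))
  have hoj : off c (decIfun c M i) < rr c (c (decIfun c M i)) := off_lt c _
  have hchunk : chunkI n M (c (decIfun c M i)) (off c (decIfun c M i)) = c i := by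
    rw [hc1, hc2]
    rw [hc1, hc2] at hoj
    refine chunkI_unique V hoj (Nat.le_add_right _ _) ?_
    omega
  rw [decIfun]
  refine posn_eq c hchunk.symm ?_ _
  rw [hchunk, hc1, hc2]
  omega

lemma decI_inc {c : Fin n → ℕ} {M : ℕ → ℕ → ℕ} (V : Valid c M) (hcn : ∀ i, c i < n)
    (hmono : Monotone c) {i j : Fin n} (hij : i < j) (hcc : c i = c j) :
    decIfun c M i < decIfun c M j := by
  obtain ⟨hci, hoi⟩ := decI_spec V hcn i
  obtain ⟨hcj, hoj⟩ := decI_spec V hcn j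
  rw [← hcc] at hcj hoj
  have ho : off c i < rr c (c i) := off_lt c i
  have ho' : off c j < rr c (c i) := hcc ▸ off_lt c j
  obtain ⟨wi1, wi2, wi3⟩ := chunkI_spec V ho
  obtain ⟨wj1, wj2, wj3⟩ := chunkI_spec V ho'
  have hoij : off c i < off c j := off_lt_off c hij hcc
  have hbb : chunkI n M (c i) (off c i) ≤ chunkI n M (c i) (off c j) := by
    by_contra hh
    push_neg at hh
    have : FF M (c i) (chunkI n M (c i) (off c j) + 1) ≤ FF M (c i) (chunkI n M (c i) (off c i)) :=
      FF_mono M _ (by omega)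
    rw [FF_succ] at this
    omega
  rcases hbb.lt_or_eq with hlt | heq
  · -- different target blocks
    by_contra hh
    push_neg at hh
    have : c (decIfun c M j) ≤ c (decIfun c M i) := hmono hh
    rw [hci, hcj] at this
    omega
  · -- same target block
    have hccd : c (decIfun c M i) = c (decIfun c M j) := by rw [hci, hcj, heq]
    rw [off_lt_iff c hccd, hoi, hoj, ← heq]
    omega

/-- decode a matrix into a permutation-function: decreasing convention -/
def decGfun (c : Fin n → ℕ) (M : ℕ → ℕ → ℕ) (i : Fin n) : Fin n :=
  posn c (chunkG n M (c i) (off c i))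
    (GG n M (chunkG n M (c i) (off c i)) (c i) +
      (M (c i) (chunkG n M (c i) (off c i)) - 1 -
        (off c i - GG n M (c i) (chunkG n M (c i) (off c i))))) i

lemma GG_add_le {c : Fin n → ℕ} {M : ℕ → ℕ → ℕ} (V : Valid c M) {a b : ℕ} (ha : a < n) :
    GG n M b a + M b a ≤ rr c b := by
  have h1 := FF_add_GG V (a := b) ha
  have h2 := FF_succ M b a
  have h3 : M b a ≤ FF M b (a + 1) := by rw [FF_succ]; omega
  omega

lemma decG_spec {c : Fin n → ℕ} {M : ℕ → ℕ → ℕ} (V : Valid c M) (hcn : ∀ i, c i < n)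
    (i : Fin n) :
    c (decGfun c M i) = chunkG n M (c i) (off c i) ∧
    off c (decGfun c M i) =
      GG n M (chunkG n M (c i) (off c i)) (c i) +
        (M (c i) (chunkG n M (c i) (off c i)) - 1 -
          (off c i - GG n M (c i) (chunkG n M (c i) (off c i)))) := by
  have ho : off c i < rr c (c i) := off_lt c i
  obtain ⟨w1, w2, w3⟩ := chunkG_spec V ho
  have hMs := V.symm (c i) (chunkG n M (c i) (off c i))
  have htar : GG n M (chunkG n M (c i) (off c i)) (c i) +
      (M (c i) (chunkG n M (c i) (off c i)) - 1 -
        (off c i - GG n M (c i) (chunkG n M (c i) (off c i)))) <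
      rr c (chunkG n M (c i) (off c i)) := by
    have h2 := GG_add_le V (a := c i) (b := chunkG n M (c i) (off c i)) (hcn i)
    omega
  rw [decGfun]
  exact posn_spec c htar i

lemma decG_invol {c : Fin n → ℕ} {M : ℕ → ℕ → ℕ} (V : Valid c M) (hcn : ∀ i, c i < n) :
    Function.Involutive (decGfun c M) := by
  intro i
  obtain ⟨hc1, hc2⟩ := decG_spec V hcn i
  have ho : off c i < rr c (c i) := off_lt c i
  obtain ⟨w1, w2, w3⟩ := chunkG_spec V ho
  have hMs := V.symm (c i) (chunkG n M (c i) (off c i))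
  have hoj : off c (decGfun c M i) < rr c (c (decGfun c M i)) := off_lt c _
  have hchunk : chunkG n M (c (decGfun c M i)) (off c (decGfun c M i)) = c i := by
    rw [hc1, hc2]
    rw [hc1, hc2] at hoj
    refine chunkG_unique V hoj (Nat.le_add_right _ _) ?_
    omega
  rw [decGfun]
  refine posn_eq c hchunk.symm ?_ _
  rw [hchunk, hc1, hc2]
  omega

lemma decG_dec {c : Fin n → ℕ} {M : ℕ → ℕ → ℕ} (V : Valid c M) (hcn : ∀ i, c i < n)
    (hmono : Monotone c) {i j : Fin n} (hij : i < j) (hcc : c i = c j) :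
    decGfun c M j < decGfun c M i := by
  obtain ⟨hci, hoi⟩ := decG_spec V hcn i
  obtain ⟨hcj, hoj⟩ := decG_spec V hcn j
  rw [← hcc] at hcj hoj
  have ho : off c i < rr c (c i) := off_lt c i
  have ho' : off c j < rr c (c i) := hcc ▸ off_lt c j
  obtain ⟨wi1, wi2, wi3⟩ := chunkG_spec V ho
  obtain ⟨wj1, wj2, wj3⟩ := chunkG_spec V ho'
  have hoij : off c i < off c j := off_lt_off c hij hcc
  have hbb : chunkG n M (c i) (off c j) ≤ chunkG n M (c i) (off c i) := by
    by_contra hh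
    push_neg at hh
    have h3 : GG n M (c i) (chunkG n M (c i) (off c j) - 1) ≤
        GG n M (c i) (chunkG n M (c i) (off c i)) := GG_antitone (n := n) M _ (by omega)
    have h4 := GG_succ V (c i) (chunkG n M (c i) (off c j) - 1)
    have heq : chunkG n M (c i) (off c j) - 1 + 1 = chunkG n M (c i) (off c j) := by omega
    rw [heq] at h4
    omega
  rcases hbb.lt_or_eq with hlt | heq
  · by_contra hh
    push_neg at hh
    have : c (decGfun c M i) ≤ c (decGfun c M j) := hmono hh
    rw [hci, hcj] at this
    omega
  · have hccd : c (decGfun c M j) = c (decGfun c M i) := by rw [hci, hcj, heq]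
    rw [off_lt_iff c hccd, hoi, hoj, heq]
    rw [heq] at wj1 wj2
    have hMs := V.symm (c i) (chunkG n M (c i) (off c i))
    omega

/-- encode a permutation-function into a matrix -/
def enc (c : Fin n → ℕ) (σ : Fin n → Fin n) (a b : ℕ) : ℕ :=
  (univ.filter (fun k => c k = a ∧ c (σ k) = b)).card

lemma enc_sum_row (c : Fin n → ℕ) (σ : Fin n → Fin n) (a m : ℕ) :
    ∑ x ∈ range m, enc c σ a x = (univ.filter (fun k => c k = a ∧ c (σ k) < m)).card := by
  induction m with
  | zero => simp
  | succ m ih =>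
    rw [Finset.sum_range_succ, ih, enc]
    rw [← Finset.card_union_of_disjoint (by
      rw [Finset.disjoint_left]
      intro k hk hk'
      simp only [mem_filter, mem_univ, true_and] at hk hk'
      omega)]
    congr 1
    ext k
    simp only [mem_filter, mem_univ, true_and, mem_union]
    omega

lemma enc_sum_col (c : Fin n → ℕ) (σ : Fin n → Fin n) (b m : ℕ) :
    ∑ x ∈ range m, enc c σ x b = (univ.filter (fun k => c k < m ∧ c (σ k) = b)).card := by
  induction m with
  | zero => simp
  | succ m ih =>
    rw [Finset.sum_range_succ, ih, enc]
    rw [← Finset.card_union_of_disjoint (by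
      rw [Finset.disjoint_left]
      intro k hk hk'
      simp only [mem_filter, mem_univ, true_and] at hk hk'
      omega)]
    congr 1
    ext k
    simp only [mem_filter, mem_univ, true_and, mem_union]
    omega

lemma valid_enc {c : Fin n → ℕ} (hcn : ∀ i, c i < n) {σ : Fin n → Fin n}
    (hinv : Function.Involutive σ) : Valid c (enc c σ) := by
  refine ⟨?_, ?_, ?_⟩
  · intro a b
    rw [enc, enc]
    apply Finset.card_nbij (i := σ)
    · intro k hk
      simp only [mem_coe, mem_filter, mem_univ, true_and] at hk ⊢
      rw [hinv k]
      exact ⟨hk.2, hk.1⟩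
    · exact fun x _ y _ h => hinv.injective h
    · intro j hj
      simp only [mem_coe, mem_filter, mem_univ, true_and] at hj
      refine ⟨σ j, ?_, hinv j⟩
      simp only [mem_coe, mem_filter, mem_univ, true_and, hinv j]
      exact ⟨hj.2, hj.1⟩
  · intro a
    rw [enc_sum_row, rr, fib]
    congr 1
    ext k
    simp only [mem_filter, mem_univ, true_and]
    have := hcn (σ k)
    tauto
  · intro a b hb
    rw [enc, Finset.card_eq_zero]
    apply Finset.eq_empty_of_forall_notMem
    intro k hk
    simp only [mem_filter, mem_univ, true_and] at hk
    have := hcn (σ k)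
    omega

lemma enc_decI {c : Fin n → ℕ} {M : ℕ → ℕ → ℕ} (V : Valid c M) (hcn : ∀ i, c i < n) :
    enc c (decIfun c M) = M := by
  funext a b
  rcases le_or_gt n b with hb | hb
  · rw [V.bound a b hb, enc, Finset.card_eq_zero]
    apply Finset.eq_empty_of_forall_notMem
    intro k hk
    simp only [mem_filter, mem_univ, true_and] at hk
    obtain ⟨hk1, hk2⟩ := hk
    have hsp := (decI_spec V hcn k).1
    have hw := (chunkI_spec V (off_lt c k)).2.2
    omega
  rcases le_or_gt n a with ha | ha
  · rw [V.symm a b, V.bound b a ha, enc, Finset.card_eq_zero]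
    apply Finset.eq_empty_of_forall_notMem
    intro k hk
    simp only [mem_filter, mem_univ, true_and] at hk
    have := hcn k
    omega
  · -- main case
    have hcard : enc c (decIfun c M) a b =
        ((range (rr c a)).filter (fun o => chunkI n M a o = b)).card := by
      rw [enc]
      apply Finset.card_nbij (i := fun k => off c k)
      · intro k hk
        simp only [coe_filter, mem_univ, true_and, Set.mem_setOf_eq, mem_coe, mem_filter,
          mem_range] at hk ⊢
        obtain ⟨hk1, hk2⟩ := hk
        have h1 : off c k < rr c a := by rw [← hk1]; exact off_lt c k
        have h2 := (decI_spec V hcn k).1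
        rw [hk1] at h2
        exact ⟨h1, by rw [← h2, hk2]⟩
      · intro x hx y hy hxy
        simp only [coe_filter, mem_univ, true_and, Set.mem_setOf_eq] at hx hy
        exact off_inj c (hx.1.trans hy.1.symm) hxy
      · intro o ho
        simp only [mem_coe, mem_filter, mem_range] at ho
        obtain ⟨i, hci, hoi⟩ := exists_pos c (a := a) ho.1
        refine ⟨i, ?_, hoi⟩
        simp only [coe_filter, mem_univ, true_and, Set.mem_setOf_eq]
        refine ⟨hci, ?_⟩
        have h2 := (decI_spec V hcn i).1
        rw [hci, hoi] at h2
        rw [h2, ho.2]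
    rw [hcard]
    have hico : (range (rr c a)).filter (fun o => chunkI n M a o = b) =
        Ico (FF M a b) (FF M a b + M a b) := by
      ext o
      simp only [mem_filter, mem_range, mem_Ico]
      constructor
      · rintro ⟨ho, rfl⟩
        exact ⟨(chunkI_spec V ho).1, (chunkI_spec V ho).2.1⟩
      · rintro ⟨h1, h2⟩
        have h3 : FF M a (b + 1) ≤ FF M a n := FF_mono M a hb
        rw [FF_succ] at h3
        have h4 := FF_row V a
        have ho : o < rr c a := by omega
        exact ⟨ho, chunkI_unique V ho h1 h2⟩
    rw [hico, Nat.card_Ico]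
    omega

lemma decI_enc {c : Fin n → ℕ} (hcn : ∀ i, c i < n) (hmono : Monotone c)
    {σ : Fin n → Fin n} (hinv : Function.Involutive σ)
    (hinc : ∀ i j : Fin n, i < j → c i = c j → σ i < σ j) :
    decIfun c (enc c σ) = σ := by
  have V : Valid c (enc c σ) := valid_enc hcn hinv
  have mlt : ∀ {x y : Fin n}, c x < c y → x < y := by
    intro x y h
    by_contra hh
    push_neg at hh
    exact absurd (hmono hh) (by omega)
  funext i
  have ho : off c i < rr c (c i) := off_lt c i
  have hS1 : ∀ m : ℕ, FF (enc c σ) (c i) m =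
      (univ.filter (fun k => c k = c i ∧ c (σ k) < m)).card :=
    fun m => enc_sum_row c σ (c i) m
  have hsub1 : (univ.filter (fun k => c k = c i ∧ c (σ k) < c (σ i))) ⊆
      (univ.filter (fun j => j < i ∧ c j = c i)) := by
    intro k hk
    simp only [mem_filter, mem_univ, true_and] at hk ⊢
    obtain ⟨hk1, hk2⟩ := hk
    have hσ : σ k < σ i := mlt hk2
    refine ⟨?_, hk1⟩
    rcases lt_trichotomy k i with h | rfl | h
    · exact h
    · exact absurd hk2 (lt_irrefl _)
    · exact absurd (hinc i k h hk1.symm) (lt_asymm hσ)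
  have hw1 : FF (enc c σ) (c i) (c (σ i)) ≤ off c i := by
    rw [hS1 (c (σ i))]
    exact Finset.card_le_card hsub1
  have hw2 : off c i < FF (enc c σ) (c i) (c (σ i)) + enc c σ (c i) (c (σ i)) := by
    have hsub2 : insert i (univ.filter (fun j => j < i ∧ c j = c i)) ⊆
        (univ.filter (fun k => c k = c i ∧ c (σ k) < c (σ i) + 1)) := by
      intro k hk
      rcases Finset.mem_insert.1 hk with rfl | hk
      · simp only [mem_filter, mem_univ, true_and]
        omega
      · simp only [mem_filter, mem_univ, true_and] at hk ⊢
        refine ⟨hk.2, ?_⟩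
        have h1 : σ k < σ i := hinc k i hk.1 hk.2
        have h2 := hmono h1.le
        omega
    have h3 := Finset.card_le_card hsub2
    rw [Finset.card_insert_of_notMem (by simp)] at h3
    rw [← hS1 (c (σ i) + 1), FF_succ] at h3
    have hoff : (univ.filter (fun j => j < i ∧ c j = c i)).card = off c i := rfl
    omega
  have hchunk : chunkI n (enc c σ) (c i) (off c i) = c (σ i) :=
    chunkI_unique V ho hw1 hw2
  -- computing the offset of σ i
  have hBC : off c (σ i) = (univ.filter (fun k => k < i ∧ c (σ k) = c (σ i))).card := by
    rw [off]
    apply Finset.card_nbij (i := σ)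
    · intro j hj
      simp only [mem_coe, mem_filter, mem_univ, true_and] at hj ⊢
      obtain ⟨hj1, hj2⟩ := hj
      constructor
      · have h1 : σ j < σ (σ i) := hinc j (σ i) hj1 hj2
        rwa [hinv i] at h1
      · rw [hinv j]; exact hj2
    · exact fun x _ y _ h => hinv.injective h
    · intro k hk
      simp only [mem_coe, mem_filter, mem_univ, true_and] at hk
      refine ⟨σ k, ?_, hinv k⟩
      simp only [mem_coe, mem_filter, mem_univ, true_and]
      constructor
      · have h1 : σ (σ k) < σ (σ i) := by
          rw [hinv k, hinv i]; exact hk.1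
        rcases lt_trichotomy (σ k) (σ i) with h | h | h
        · exact h
        · exact absurd (h ▸ h1) (lt_irrefl _)
        · exact absurd (hinc (σ i) (σ k) h hk.2.symm) (lt_asymm h1)
      · exact hk.2
  have hsplit : (univ.filter (fun k => k < i ∧ c (σ k) = c (σ i))) =
      (univ.filter (fun k => c k < c i ∧ c (σ k) = c (σ i))) ∪
      (univ.filter (fun k => k < i ∧ c k = c i ∧ c (σ k) = c (σ i))) := by
    ext k
    simp only [mem_filter, mem_univ, true_and, mem_union]
    constructor
    · rintro ⟨h1, h2⟩
      rcases (hmono h1.le).lt_or_eq with h | h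
      · exact Or.inl ⟨h, h2⟩
      · exact Or.inr ⟨h1, h, h2⟩
    · rintro (⟨h1, h2⟩ | ⟨h1, h2, h3⟩)
      · exact ⟨mlt h1, h2⟩
      · exact ⟨h1, h3⟩
  have hdisj : Disjoint (univ.filter (fun k => c k < c i ∧ c (σ k) = c (σ i)))
      (univ.filter (fun k => k < i ∧ c k = c i ∧ c (σ k) = c (σ i))) := by
    rw [Finset.disjoint_left]
    intro k hk hk'
    simp only [mem_filter, mem_univ, true_and] at hk hk'
    omega
  have hC2 : (univ.filter (fun k => c k < c i ∧ c (σ k) = c (σ i))).card =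
      FF (enc c σ) (c (σ i)) (c i) := by
    rw [← enc_sum_col c σ (c (σ i)) (c i), FF]
    exact Finset.sum_congr rfl (fun x _ => V.symm x (c (σ i)))
  have hC3 : off c i = FF (enc c σ) (c i) (c (σ i)) +
      (univ.filter (fun k => k < i ∧ c k = c i ∧ c (σ k) = c (σ i))).card := by
    have hA : (univ.filter (fun j => j < i ∧ c j = c i)) =
        (univ.filter (fun k => c k = c i ∧ c (σ k) < c (σ i))) ∪
        (univ.filter (fun k => k < i ∧ c k = c i ∧ c (σ k) = c (σ i))) := by
      ext k
      simp only [mem_filter, mem_univ, true_and, mem_union]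
      constructor
      · rintro ⟨h1, h2⟩
        have hσ : σ k < σ i := hinc k i h1 h2
        rcases (hmono hσ.le).lt_or_eq with h | h
        · exact Or.inl ⟨h2, h⟩
        · exact Or.inr ⟨h1, h2, h⟩
      · rintro (⟨h1, h2⟩ | ⟨h1, h2, _⟩)
        · have := hsub1 (by simp only [mem_filter, mem_univ, true_and]; exact ⟨h1, h2⟩)
          simpa only [mem_filter, mem_univ, true_and] using this
        · exact ⟨h1, h2⟩
    have : off c i = (univ.filter (fun j => j < i ∧ c j = c i)).card := rfl
    rw [this, hA, Finset.card_union_of_disjoint (by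
      rw [Finset.disjoint_left]
      intro k hk hk'
      simp only [mem_filter, mem_univ, true_and] at hk hk'
      omega), hS1 (c (σ i))]
  rw [decIfun, hchunk]
  refine posn_eq c rfl ?_ i
  rw [hBC, hsplit, Finset.card_union_of_disjoint hdisj, hC2]
  omega

lemma enc_col_FF {c : Fin n → ℕ} (hcn : ∀ i, c i < n) {σ : Fin n → Fin n}
    (hinv : Function.Involutive σ) (b m : ℕ) :
    (univ.filter (fun k => c k < m ∧ c (σ k) = b)).card = FF (enc c σ) b m := by
  rw [← enc_sum_col, FF]
  exact Finset.sum_congr rfl (fun x _ => (valid_enc hcn hinv).symm x b)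

lemma decG_enc {c : Fin n → ℕ} (hcn : ∀ i, c i < n) (hmono : Monotone c)
    {σ : Fin n → Fin n} (hinv : Function.Involutive σ)
    (hdec : ∀ i j : Fin n, i < j → c i = c j → σ j < σ i) :
    decGfun c (enc c σ) = σ := by
  have V : Valid c (enc c σ) := valid_enc hcn hinv
  have mlt : ∀ {x y : Fin n}, c x < c y → x < y := by
    intro x y h
    by_contra hh
    push_neg at hh
    exact absurd (hmono hh) (by omega)
  funext i
  have ho : off c i < rr c (c i) := off_lt c i
  have hS1 : ∀ m : ℕ, FF (enc c σ) (c i) m =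
      (univ.filter (fun k => c k = c i ∧ c (σ k) < m)).card :=
    fun m => enc_sum_row c σ (c i) m
  -- the "above" set in the row of c i
  have hXcard : (univ.filter (fun k => c k = c i ∧ c (σ i) < c (σ k))).card =
      GG n (enc c σ) (c i) (c (σ i)) := by
    have htot : (univ.filter (fun k => c k = c i)) =
        (univ.filter (fun k => c k = c i ∧ c (σ k) < c (σ i) + 1)) ∪
        (univ.filter (fun k => c k = c i ∧ c (σ i) < c (σ k))) := by
      ext k
      simp only [mem_filter, mem_univ, true_and, mem_union]
      omega
    have hdj : Disjoint (univ.filter (fun k => c k = c i ∧ c (σ k) < c (σ i) + 1))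
        (univ.filter (fun k => c k = c i ∧ c (σ i) < c (σ k))) := by
      rw [Finset.disjoint_left]
      intro k hk hk'
      simp only [mem_filter, mem_univ, true_and] at hk hk'
      omega
    have h1 : rr c (c i) = (univ.filter (fun k => c k = c i)).card := rfl
    rw [htot, Finset.card_union_of_disjoint hdj, ← hS1 (c (σ i) + 1), FF_succ] at h1
    have h2 := FF_add_GG V (a := c i) (b := c (σ i)) (hcn (σ i))
    rw [FF_succ] at h2
    omega
  have hsub1 : (univ.filter (fun k => c k = c i ∧ c (σ i) < c (σ k))) ⊆
      (univ.filter (fun j => j < i ∧ c j = c i)) := by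
    intro k hk
    simp only [mem_filter, mem_univ, true_and] at hk ⊢
    obtain ⟨hk1, hk2⟩ := hk
    have hσ : σ i < σ k := mlt hk2
    refine ⟨?_, hk1⟩
    rcases lt_trichotomy k i with h | rfl | h
    · exact h
    · exact absurd hk2 (lt_irrefl _)
    · exact absurd (hdec i k h hk1.symm) (lt_asymm hσ)
  have hw1 : GG n (enc c σ) (c i) (c (σ i)) ≤ off c i := by
    rw [← hXcard]
    exact Finset.card_le_card hsub1
  have hw2 : off c i < GG n (enc c σ) (c i) (c (σ i)) + enc c σ (c i) (c (σ i)) := by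
    have hsub2 : insert i (univ.filter (fun j => j < i ∧ c j = c i)) ⊆
        (univ.filter (fun k => c k = c i ∧ c (σ i) ≤ c (σ k))) := by
      intro k hk
      rcases Finset.mem_insert.1 hk with rfl | hk
      · simp only [mem_filter, mem_univ, true_and]
        omega
      · simp only [mem_filter, mem_univ, true_and] at hk ⊢
        refine ⟨hk.2, ?_⟩
        have h1 : σ i < σ k := hdec k i hk.1 hk.2
        exact hmono h1.le
    have hsp : (univ.filter (fun k => c k = c i ∧ c (σ i) ≤ c (σ k))) =
        (univ.filter (fun k => c k = c i ∧ c (σ k) = c (σ i))) ∪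
        (univ.filter (fun k => c k = c i ∧ c (σ i) < c (σ k))) := by
      ext k
      simp only [mem_filter, mem_univ, true_and, mem_union]
      omega
    have hdj : Disjoint (univ.filter (fun k => c k = c i ∧ c (σ k) = c (σ i)))
        (univ.filter (fun k => c k = c i ∧ c (σ i) < c (σ k))) := by
      rw [Finset.disjoint_left]
      intro k hk hk'
      simp only [mem_filter, mem_univ, true_and] at hk hk'
      omega
    have h3 := Finset.card_le_card hsub2
    rw [Finset.card_insert_of_notMem (by simp)] at h3
    rw [hsp, Finset.card_union_of_disjoint hdj, hXcard] at h3
    have hoff : (univ.filter (fun j => j < i ∧ c j = c i)).card = off c i := rfl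
    have henc : (univ.filter (fun k => c k = c i ∧ c (σ k) = c (σ i))).card =
        enc c σ (c i) (c (σ i)) := rfl
    omega
  have hchunk : chunkG n (enc c σ) (c i) (off c i) = c (σ i) :=
    chunkG_unique V ho hw1 hw2
  -- computing the offset of σ i
  have hBC : off c (σ i) = (univ.filter (fun k => i < k ∧ c (σ k) = c (σ i))).card := by
    rw [off]
    apply Finset.card_nbij (i := σ)
    · intro j hj
      simp only [mem_coe, mem_filter, mem_univ, true_and] at hj ⊢
      obtain ⟨hj1, hj2⟩ := hj
      constructor
      · have h1 : σ (σ i) < σ j := hdec j (σ i) hj1 hj2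
        rwa [hinv i] at h1
      · rw [hinv j]; exact hj2
    · exact fun x _ y _ h => hinv.injective h
    · intro k hk
      simp only [mem_coe, mem_filter, mem_univ, true_and] at hk
      refine ⟨σ k, ?_, hinv k⟩
      simp only [mem_coe, mem_filter, mem_univ, true_and]
      constructor
      · have h1 : σ (σ i) < σ (σ k) := by
          rw [hinv k, hinv i]; exact hk.1
        rcases lt_trichotomy (σ k) (σ i) with h | h | h
        · exact h
        · exact absurd (h ▸ h1) (lt_irrefl _)
        · exact absurd (hdec (σ i) (σ k) h hk.2.symm) (lt_asymm h1)
      · exact hk.2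
  have hsplit : (univ.filter (fun k => i < k ∧ c (σ k) = c (σ i))) =
      (univ.filter (fun k => c i < c k ∧ c (σ k) = c (σ i))) ∪
      (univ.filter (fun k => i < k ∧ c k = c i ∧ c (σ k) = c (σ i))) := by
    ext k
    simp only [mem_filter, mem_univ, true_and, mem_union]
    constructor
    · rintro ⟨h1, h2⟩
      rcases (hmono h1.le).lt_or_eq with h | h
      · exact Or.inl ⟨h, h2⟩
      · exact Or.inr ⟨h1, h.symm, h2⟩
    · rintro (⟨h1, h2⟩ | ⟨h1, h2, h3⟩)
      · exact ⟨mlt h1, h2⟩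
      · exact ⟨h1, h3⟩
  have hdisj : Disjoint (univ.filter (fun k => c i < c k ∧ c (σ k) = c (σ i)))
      (univ.filter (fun k => i < k ∧ c k = c i ∧ c (σ k) = c (σ i))) := by
    rw [Finset.disjoint_left]
    intro k hk hk'
    simp only [mem_filter, mem_univ, true_and] at hk hk'
    omega
  -- the column count above c i
  have hC2 : (univ.filter (fun k => c i < c k ∧ c (σ k) = c (σ i))).card =
      GG n (enc c σ) (c (σ i)) (c i) := by
    have htot : (univ.filter (fun k => c (σ k) = c (σ i))) =
        (univ.filter (fun k => c k < c i + 1 ∧ c (σ k) = c (σ i))) ∪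
        (univ.filter (fun k => c i < c k ∧ c (σ k) = c (σ i))) := by
      ext k
      simp only [mem_filter, mem_univ, true_and, mem_union]
      omega
    have hdj : Disjoint (univ.filter (fun k => c k < c i + 1 ∧ c (σ k) = c (σ i)))
        (univ.filter (fun k => c i < c k ∧ c (σ k) = c (σ i))) := by
      rw [Finset.disjoint_left]
      intro k hk hk'
      simp only [mem_filter, mem_univ, true_and] at hk hk'
      omega
    have hfull : (univ.filter (fun k => c (σ k) = c (σ i))) =
        (univ.filter (fun k => c k < n ∧ c (σ k) = c (σ i))) := by
      ext k
      simp only [mem_filter, mem_univ, true_and]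
      have := hcn k
      tauto
    have h1 : (univ.filter (fun k => c (σ k) = c (σ i))).card =
        FF (enc c σ) (c (σ i)) n := by
      rw [hfull, enc_col_FF hcn hinv]
    rw [htot, Finset.card_union_of_disjoint hdj, enc_col_FF hcn hinv] at h1
    have h2 := FF_add_GG V (a := c (σ i)) (b := c i) (hcn i)
    have h3 := FF_row V (c (σ i))
    rw [FF_succ] at h2
    rw [FF_succ] at h1
    omega
  -- splitting the row cell at position i
  have hA : off c i = GG n (enc c σ) (c i) (c (σ i)) +
      (univ.filter (fun k => k < i ∧ c k = c i ∧ c (σ k) = c (σ i))).card := by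
    have hAeq : (univ.filter (fun j => j < i ∧ c j = c i)) =
        (univ.filter (fun k => c k = c i ∧ c (σ i) < c (σ k))) ∪
        (univ.filter (fun k => k < i ∧ c k = c i ∧ c (σ k) = c (σ i))) := by
      ext k
      simp only [mem_filter, mem_univ, true_and, mem_union]
      constructor
      · rintro ⟨h1, h2⟩
        have hσ : σ i < σ k := hdec k i h1 h2
        rcases (hmono hσ.le).lt_or_eq with h | h
        · exact Or.inl ⟨h2, h⟩
        · exact Or.inr ⟨h1, h2, h.symm⟩
      · rintro (⟨h1, h2⟩ | ⟨h1, h2, _⟩)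
        · have := hsub1 (by simp only [mem_filter, mem_univ, true_and]; exact ⟨h1, h2⟩)
          simpa only [mem_filter, mem_univ, true_and] using this
        · exact ⟨h1, h2⟩
    have hoff : off c i = (univ.filter (fun j => j < i ∧ c j = c i)).card := rfl
    rw [hoff, hAeq, Finset.card_union_of_disjoint (by
      rw [Finset.disjoint_left]
      intro k hk hk'
      simp only [mem_filter, mem_univ, true_and] at hk hk'
      omega), hXcard]
  -- the cell partition by position relative to i
  have hM : enc c σ (c i) (c (σ i)) =
      (univ.filter (fun k => k < i ∧ c k = c i ∧ c (σ k) = c (σ i))).card + 1 +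
      (univ.filter (fun k => i < k ∧ c k = c i ∧ c (σ k) = c (σ i))).card := by
    have hcell : (univ.filter (fun k => c k = c i ∧ c (σ k) = c (σ i))) =
        insert i ((univ.filter (fun k => k < i ∧ c k = c i ∧ c (σ k) = c (σ i))) ∪
          (univ.filter (fun k => i < k ∧ c k = c i ∧ c (σ k) = c (σ i)))) := by
      ext k
      simp only [mem_filter, mem_univ, true_and, mem_union, Finset.mem_insert]
      constructor
      · rintro ⟨h1, h2⟩
        rcases lt_trichotomy k i with h | h | h
        · exact Or.inr (Or.inl ⟨h, h1, h2⟩)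
        · exact Or.inl h
        · exact Or.inr (Or.inr ⟨h, h1, h2⟩)
      · rintro (rfl | ⟨_, h1, h2⟩ | ⟨_, h1, h2⟩)
        · exact ⟨rfl, rfl⟩
        · exact ⟨h1, h2⟩
        · exact ⟨h1, h2⟩
    have henc : enc c σ (c i) (c (σ i)) =
        (univ.filter (fun k => c k = c i ∧ c (σ k) = c (σ i))).card := rfl
    rw [henc, hcell, Finset.card_insert_of_notMem (by
      simp only [mem_union, mem_filter, mem_univ, true_and, not_or]
      constructor
      · rintro ⟨h, _⟩; exact absurd h (lt_irrefl _)
      · rintro ⟨h, _⟩; exact absurd h (lt_irrefl _)),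
      Finset.card_union_of_disjoint (by
      rw [Finset.disjoint_left]
      intro k hk hk'
      simp only [mem_filter, mem_univ, true_and] at hk hk'
      obtain ⟨h1, _⟩ := hk
      obtain ⟨h2, _⟩ := hk'
      exact absurd (h1.trans h2) (lt_irrefl _))]
    omega
  rw [decGfun, hchunk]
  refine posn_eq c rfl ?_ i
  rw [hBC, hsplit, Finset.card_union_of_disjoint hdisj, hC2]
  omega

lemma enc_decG {c : Fin n → ℕ} {M : ℕ → ℕ → ℕ} (V : Valid c M) (hcn : ∀ i, c i < n) :
    enc c (decGfun c M) = M := by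
  funext a b
  rcases le_or_gt n b with hb | hb
  · rw [V.bound a b hb, enc, Finset.card_eq_zero]
    apply Finset.eq_empty_of_forall_notMem
    intro k hk
    simp only [mem_filter, mem_univ, true_and] at hk
    obtain ⟨hk1, hk2⟩ := hk
    have hsp := (decG_spec V hcn k).1
    have hw := (chunkG_spec V (off_lt c k)).2.2
    omega
  rcases le_or_gt n a with ha | ha
  · rw [V.symm a b, V.bound b a ha, enc, Finset.card_eq_zero]
    apply Finset.eq_empty_of_forall_notMem
    intro k hk
    simp only [mem_filter, mem_univ, true_and] at hk
    have := hcn k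
    omega
  · have hcard : enc c (decGfun c M) a b =
        ((range (rr c a)).filter (fun o => chunkG n M a o = b)).card := by
      rw [enc]
      apply Finset.card_nbij (i := fun k => off c k)
      · intro k hk
        simp only [mem_coe, mem_filter, mem_univ, true_and, mem_range] at hk ⊢
        obtain ⟨hk1, hk2⟩ := hk
        have h1 : off c k < rr c a := by rw [← hk1]; exact off_lt c k
        have h2 := (decG_spec V hcn k).1
        rw [hk1] at h2
        exact ⟨h1, by rw [← h2, hk2]⟩
      · intro x hx y hy hxy
        simp only [mem_coe, mem_filter, mem_univ, true_and] at hx hy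
        exact off_inj c (hx.1.trans hy.1.symm) hxy
      · intro o ho
        simp only [mem_coe, mem_filter, mem_range] at ho
        obtain ⟨i, hci, hoi⟩ := exists_pos c (a := a) ho.1
        refine ⟨i, ?_, hoi⟩
        simp only [mem_coe, mem_filter, mem_univ, true_and]
        refine ⟨hci, ?_⟩
        have h2 := (decG_spec V hcn i).1
        rw [hci, hoi] at h2
        rw [h2, ho.2]
    rw [hcard]
    have hico : (range (rr c a)).filter (fun o => chunkG n M a o = b) =
        Ico (GG n M a b) (GG n M a b + M a b) := by
      ext o
      simp only [mem_filter, mem_range, mem_Ico]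
      constructor
      · rintro ⟨ho, rfl⟩
        exact ⟨(chunkG_spec V ho).1, (chunkG_spec V ho).2.1⟩
      · rintro ⟨h1, h2⟩
        have h3 := GG_add_le V (a := b) (b := a) hb
        have ho : o < rr c a := by omega
        exact ⟨ho, chunkG_unique V ho h1 h2⟩
    rw [hico, Nat.card_Ico]
    omega

lemma invol_of_mul (σ : Equiv.Perm (Fin n)) (h : σ * σ = 1) : Function.Involutive ⇑σ := by
  intro x
  have := congrArg (fun τ : Equiv.Perm (Fin n) => τ x) h
  simpa [Equiv.Perm.mul_apply] using this

lemma toPerm_mul_self {f : Fin n → Fin n} (h : Function.Involutive f) :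
    Function.Involutive.toPerm f h * Function.Involutive.toPerm f h = 1 := by
  ext x
  simp [Equiv.Perm.mul_apply, Function.Involutive.coe_toPerm, h x]

lemma card_inc_eq_card_dec {c : Fin n → ℕ} (hcn : ∀ i, c i < n) (hmono : Monotone c) :
    (univ.filter (fun σ : Equiv.Perm (Fin n) => σ * σ = 1 ∧
        ∀ i j : Fin n, i < j → c i = c j → σ i < σ j)).card =
    (univ.filter (fun σ : Equiv.Perm (Fin n) => σ * σ = 1 ∧
        ∀ i j : Fin n, i < j → c i = c j → σ j < σ i)).card := by
  apply Finset.card_bij'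
    (i := fun (σ : Equiv.Perm (Fin n)) hσ => Function.Involutive.toPerm (decGfun c (enc c ⇑σ))
      (decG_invol (valid_enc hcn (invol_of_mul σ (Finset.mem_filter.1 hσ).2.1)) hcn))
    (j := fun (σ : Equiv.Perm (Fin n)) hσ => Function.Involutive.toPerm (decIfun c (enc c ⇑σ))
      (decI_invol (valid_enc hcn (invol_of_mul σ (Finset.mem_filter.1 hσ).2.1)) hcn))
  case hi =>
    intro σ hσ
    obtain ⟨-, hmul, hinc⟩ := Finset.mem_filter.1 hσ
    rw [Finset.mem_filter]
    refine ⟨Finset.mem_univ _, toPerm_mul_self _, ?_⟩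
    intro i j hij hcc
    show decGfun c (enc c ⇑σ) j < decGfun c (enc c ⇑σ) i
    exact decG_dec (valid_enc hcn (invol_of_mul σ hmul)) hcn hmono hij hcc
  case hj =>
    intro σ hσ
    obtain ⟨-, hmul, hdec⟩ := Finset.mem_filter.1 hσ
    rw [Finset.mem_filter]
    refine ⟨Finset.mem_univ _, toPerm_mul_self _, ?_⟩
    intro i j hij hcc
    show decIfun c (enc c ⇑σ) i < decIfun c (enc c ⇑σ) j
    exact decI_inc (valid_enc hcn (invol_of_mul σ hmul)) hcn hmono hij hcc
  case left_inv =>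
    intro σ hσ
    obtain ⟨-, hmul, hinc⟩ := Finset.mem_filter.1 hσ
    have hinv := invol_of_mul σ hmul
    apply Equiv.ext
    intro x
    simp only [Function.Involutive.coe_toPerm]
    rw [enc_decG (valid_enc hcn hinv) hcn]
    exact congrFun (decI_enc hcn hmono hinv (fun i j hij hcc => hinc i j hij hcc)) x
  case right_inv =>
    intro σ hσ
    obtain ⟨-, hmul, hdec⟩ := Finset.mem_filter.1 hσ
    have hinv := invol_of_mul σ hmul
    apply Equiv.ext
    intro x
    simp only [Function.Involutive.coe_toPerm]
    rw [enc_decI (valid_enc hcn hinv) hcn]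
    exact congrFun (decG_enc hcn hmono hinv (fun i j hij hcc => hdec i j hij hcc)) x

/-- the coloring associated with a set of one-based boundary positions -/
def colr (n : ℕ) (T : Finset ℕ) (i : Fin n) : ℕ := (T.filter (fun t => t ≤ (i : ℕ))).card

lemma colr_mono (T : Finset ℕ) : Monotone (colr n T) := by
  intro i j hij
  apply Finset.card_le_card
  intro t ht
  simp only [mem_filter] at ht ⊢
  exact ⟨ht.1, ht.2.trans hij⟩

lemma colr_lt (hn : 1 ≤ n) {T : Finset ℕ} (hT : T ⊆ Icc 1 (n - 1)) (i : Fin n) :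
    colr n T i < n := by
  have h1 : (T.filter (fun t => t ≤ (i : ℕ))).card ≤ T.card :=
    Finset.card_le_card (Finset.filter_subset _ _)
  have h2 : T.card ≤ (Icc 1 (n - 1)).card := Finset.card_le_card hT
  rw [Nat.card_Icc] at h2
  rw [colr]
  omega

lemma colr_adj_mem {T : Finset ℕ} {i j : Fin n} (hij : (i : ℕ) + 1 = (j : ℕ))
    (hj : (j : ℕ) ∈ T) : colr n T i < colr n T j := by
  apply Finset.card_lt_card
  rw [Finset.ssubset_iff_of_subset]
  · exact ⟨(j : ℕ), by simp [mem_filter, hj], by simp [mem_filter]; omega⟩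
  · intro t ht
    simp only [mem_filter] at ht ⊢
    exact ⟨ht.1, by omega⟩

lemma colr_adj_not_mem {T : Finset ℕ} {i j : Fin n} (hij : (i : ℕ) + 1 = (j : ℕ))
    (hj : (j : ℕ) ∉ T) : colr n T i = colr n T j := by
  rw [colr, colr]
  congr 1
  ext t
  simp only [mem_filter, and_congr_right_iff]
  intro ht
  have : t ≠ (j : ℕ) := fun h => hj (h ▸ ht)
  omega

lemma mem_desSet {σ : Equiv.Perm (Fin n)} {d : ℕ} (h1 : 1 ≤ d) (h2 : d ≤ n - 1)
    (hd : d < n) (hd' : d - 1 < n)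
    (hlt : σ ⟨d, hd⟩ < σ ⟨d - 1, hd'⟩) : d ∈ DesSet n σ := by
  rw [DesSet, mem_filter, mem_Icc]
  refine ⟨⟨h1, h2⟩, ?_⟩
  rw [permFun, permFun, dif_pos hd, dif_pos hd']
  exact hlt

lemma of_mem_desSet {σ : Equiv.Perm (Fin n)} {d : ℕ} (h : d ∈ DesSet n σ) :
    1 ≤ d ∧ d ≤ n - 1 ∧ ∀ (hd : d < n) (hd' : d - 1 < n), σ ⟨d, hd⟩ < σ ⟨d - 1, hd'⟩ := by
  rw [DesSet, mem_filter, mem_Icc] at h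
  refine ⟨h.1.1, h.1.2, ?_⟩
  intro hd hd'
  have := h.2
  rw [permFun, permFun, dif_pos hd, dif_pos hd'] at this
  exact this

lemma desSet_subset (σ : Equiv.Perm (Fin n)) : DesSet n σ ⊆ Icc 1 (n - 1) :=
  Finset.filter_subset _ _

lemma inc_iff_des_subset (hn : 1 ≤ n) {T : Finset ℕ} (σ : Equiv.Perm (Fin n)) :
    (∀ i j : Fin n, i < j → colr n T i = colr n T j → σ i < σ j) ↔ DesSet n σ ⊆ T := by
  constructor
  · intro hinc d hd
    obtain ⟨h1, h2, h3⟩ := of_mem_desSet hd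
    have hdn : d < n := by omega
    have hdn' : d - 1 < n := by omega
    by_contra hdT
    have hcc : colr n T (⟨d - 1, hdn'⟩ : Fin n) = colr n T (⟨d, hdn⟩ : Fin n) :=
      colr_adj_not_mem (by simp; omega) (by simpa using hdT)
    have := hinc ⟨d - 1, hdn'⟩ ⟨d, hdn⟩ (by simp [Fin.lt_def]; omega) hcc
    exact absurd (h3 hdn hdn') (lt_asymm this)
  · intro hsub
    have adj : ∀ i j : Fin n, (i : ℕ) + 1 = (j : ℕ) → colr n T i = colr n T j → σ i < σ j := by
      intro i j hij hcc
      rcases lt_trichotomy (σ i) (σ j) with h | h | h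
      · exact h
      · exact absurd (σ.injective h) (by intro hh; rw [hh] at hij; omega)
      · exfalso
        have hd : (j : ℕ) ∈ DesSet n σ := by
          apply mem_desSet (by omega) (by have := j.2; omega) j.2 (by omega)
          have hi : (⟨(j : ℕ) - 1, by omega⟩ : Fin n) = i := by
            apply Fin.ext; simp; omega
          rw [hi]
          exact h
        have := colr_adj_mem hij (hsub hd)
        omega
    intro i j hij hcc
    obtain ⟨m, hm⟩ : ∃ m : ℕ, (j : ℕ) = (i : ℕ) + m + 1 :=
      ⟨(j : ℕ) - (i : ℕ) - 1, by have := (Fin.lt_def.1 hij); omega⟩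
    clear hij
    induction m generalizing j with
    | zero =>
      exact adj i j (by omega) hcc
    | succ m ih =>
      have hkn : (i : ℕ) + m + 1 < n := by have := j.2; omega
      set k : Fin n := ⟨(i : ℕ) + m + 1, hkn⟩ with hk
      have hik : colr n T i = colr n T k := by
        have l1 := colr_mono (n := n) T (show i ≤ k by simp [Fin.le_def, hk]; omega)
        have l2 := colr_mono (n := n) T (show k ≤ j by simp [Fin.le_def, hk]; omega)
        omega
      have h1 : σ i < σ k := ih k hik rfl
      have h2 : σ k < σ j := adj k j (by simp [hk]; omega) (by omega)
      exact h1.trans h2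

lemma dec_iff_asc_subset (hn : 1 ≤ n) {T : Finset ℕ} (σ : Equiv.Perm (Fin n)) :
    (∀ i j : Fin n, i < j → colr n T i = colr n T j → σ j < σ i) ↔
      Icc 1 (n - 1) \ T ⊆ DesSet n σ := by
  constructor
  · intro hdec d hd
    rw [Finset.mem_sdiff, mem_Icc] at hd
    obtain ⟨⟨h1, h2⟩, hdT⟩ := hd
    have hdn : d < n := by omega
    have hdn' : d - 1 < n := by omega
    have hcc : colr n T (⟨d - 1, hdn'⟩ : Fin n) = colr n T (⟨d, hdn⟩ : Fin n) :=
      colr_adj_not_mem (by simp; omega) (by simpa using hdT)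
    have := hdec ⟨d - 1, hdn'⟩ ⟨d, hdn⟩ (by simp [Fin.lt_def]; omega) hcc
    exact mem_desSet h1 h2 hdn hdn' this
  · intro hsub
    have adj : ∀ i j : Fin n, (i : ℕ) + 1 = (j : ℕ) → colr n T i = colr n T j → σ j < σ i := by
      intro i j hij hcc
      have hjT : (j : ℕ) ∉ T := by
        intro hjT
        have := colr_adj_mem hij hjT
        omega
      have hjD : (j : ℕ) ∈ Icc 1 (n - 1) \ T := by
        rw [Finset.mem_sdiff, mem_Icc]
        exact ⟨⟨by omega, by have := j.2; omega⟩, hjT⟩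
      obtain ⟨h1, h2, h3⟩ := of_mem_desSet (hsub hjD)
      have hi : (⟨(j : ℕ) - 1, by have := j.2; omega⟩ : Fin n) = i := by
        apply Fin.ext; simp; omega
      have := h3 j.2 (by have := j.2; omega)
      rw [hi] at this
      rw [show (⟨(j : ℕ), j.2⟩ : Fin n) = j from Fin.ext rfl] at this
      exact this
    intro i j hij hcc
    obtain ⟨m, hm⟩ : ∃ m : ℕ, (j : ℕ) = (i : ℕ) + m + 1 :=
      ⟨(j : ℕ) - (i : ℕ) - 1, by have := (Fin.lt_def.1 hij); omega⟩
    clear hij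
    induction m generalizing j with
    | zero =>
      exact adj i j (by omega) hcc
    | succ m ih =>
      have hkn : (i : ℕ) + m + 1 < n := by have := j.2; omega
      set k : Fin n := ⟨(i : ℕ) + m + 1, hkn⟩ with hk
      have hik : colr n T i = colr n T k := by
        have l1 := colr_mono (n := n) T (show i ≤ k by simp [Fin.le_def, hk]; omega)
        have l2 := colr_mono (n := n) T (show k ≤ j by simp [Fin.le_def, hk]; omega)
        omega
      have h1 : σ k < σ i := ih k hik rfl
      have h2 : σ j < σ k := adj k j (by simp [hk]; omega) (by omega)
      exact h2.trans h1

/-- number of involutions with a given descent set -/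
def DF (n : ℕ) (T : Finset ℕ) : ℕ := ((Invols n).filter (fun σ => DesSet n σ = T)).card

lemma sum_DF_powerset (hn : 1 ≤ n) {T : Finset ℕ} (hT : T ⊆ Icc 1 (n - 1)) :
    ∑ T' ∈ T.powerset, DF n T' = ((Invols n).filter (fun σ => DesSet n σ ⊆ T)).card := by
  rw [Finset.card_eq_sum_card_fiberwise (f := fun σ => DesSet n σ)
    (t := T.powerset) (fun σ hσ => by
      rw [Finset.mem_coe, Finset.mem_powerset]
      exact (Finset.mem_filter.1 (Finset.mem_coe.1 hσ)).2)]
  apply Finset.sum_congr rfl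
  intro T' hT'
  rw [Finset.mem_powerset] at hT'
  rw [DF]
  congr 1
  ext σ
  constructor
  · intro h
    obtain ⟨h1, h2⟩ := Finset.mem_filter.1 h
    exact Finset.mem_filter.2 ⟨Finset.mem_filter.2 ⟨h1, h2 ▸ hT'⟩, h2⟩
  · intro h
    obtain ⟨h1, h2⟩ := Finset.mem_filter.1 h
    exact Finset.mem_filter.2 ⟨(Finset.mem_filter.1 h1).1, h2⟩

lemma sum_DF_compl_powerset (hn : 1 ≤ n) {T : Finset ℕ} (hT : T ⊆ Icc 1 (n - 1)) :
    ∑ T' ∈ T.powerset, DF n (Icc 1 (n - 1) \ T') =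
      ((Invols n).filter (fun σ => Icc 1 (n - 1) \ T ⊆ DesSet n σ)).card := by
  rw [Finset.card_eq_sum_card_fiberwise (f := fun σ => Icc 1 (n - 1) \ DesSet n σ)
    (t := T.powerset) (fun σ hσ => by
      rw [Finset.mem_coe, Finset.mem_powerset]
      intro x hx
      rw [Finset.mem_sdiff] at hx
      by_contra hxT
      exact hx.2 ((Finset.mem_filter.1 (Finset.mem_coe.1 hσ)).2 (Finset.mem_sdiff.2 ⟨hx.1, hxT⟩)))]
  apply Finset.sum_congr rfl
  intro T' hT'
  rw [Finset.mem_powerset] at hT'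
  rw [DF]
  congr 1
  ext σ
  constructor
  · intro h
    obtain ⟨h1, h2⟩ := Finset.mem_filter.1 h
    refine Finset.mem_filter.2 ⟨Finset.mem_filter.2 ⟨h1, ?_⟩, ?_⟩
    · rw [h2]
      exact Finset.sdiff_subset_sdiff (Finset.Subset.refl _) hT'
    · rw [h2, Finset.sdiff_sdiff_eq_self (hT'.trans hT)]
  · intro h
    obtain ⟨h1, h2⟩ := Finset.mem_filter.1 h
    refine Finset.mem_filter.2 ⟨(Finset.mem_filter.1 h1).1, ?_⟩
    rw [← h2, Finset.sdiff_sdiff_eq_self (desSet_subset σ)]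

lemma sum_powerset_eq (hn : 1 ≤ n) {T : Finset ℕ} (hT : T ⊆ Icc 1 (n - 1)) :
    ∑ T' ∈ T.powerset, DF n T' = ∑ T' ∈ T.powerset, DF n (Icc 1 (n - 1) \ T') := by
  rw [sum_DF_powerset hn hT, sum_DF_compl_powerset hn hT]
  have h1 : (Invols n).filter (fun σ => DesSet n σ ⊆ T) =
      univ.filter (fun σ : Equiv.Perm (Fin n) => σ * σ = 1 ∧
        ∀ i j : Fin n, i < j → colr n T i = colr n T j → σ i < σ j) := by
    rw [Invols, Finset.filter_filter]
    apply Finset.filter_congr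
    intro σ _
    exact and_congr_right (fun _ => (inc_iff_des_subset hn σ).symm)
  have h2 : (Invols n).filter (fun σ => Icc 1 (n - 1) \ T ⊆ DesSet n σ) =
      univ.filter (fun σ : Equiv.Perm (Fin n) => σ * σ = 1 ∧
        ∀ i j : Fin n, i < j → colr n T i = colr n T j → σ j < σ i) := by
    rw [Invols, Finset.filter_filter]
    apply Finset.filter_congr
    intro σ _
    exact and_congr_right (fun _ => (dec_iff_asc_subset hn σ).symm)
  rw [h1, h2]
  exact card_inc_eq_card_dec (colr_lt hn hT) (colr_mono T)

lemma DF_compl (hn : 1 ≤ n) : ∀ T : Finset ℕ, T ⊆ Icc 1 (n - 1) →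
    DF n T = DF n (Icc 1 (n - 1) \ T) := by
  intro T
  induction T using Finset.strongInduction with
  | _ T ih =>
    intro hT
    have key := sum_powerset_eq hn hT
    have hmem : T ∈ T.powerset := Finset.mem_powerset_self T
    rw [← Finset.add_sum_erase _ _ hmem, ← Finset.add_sum_erase _ _ hmem] at key
    have hsum : ∑ T' ∈ T.powerset.erase T, DF n T' =
        ∑ T' ∈ T.powerset.erase T, DF n (Icc 1 (n - 1) \ T') := by
      apply Finset.sum_congr rfl
      intro T' hT'
      rw [Finset.mem_erase, Finset.mem_powerset] at hT'
      exact ih T' (Finset.ssubset_iff_subset_ne.2 ⟨hT'.2, hT'.1⟩) (hT'.2.trans hT)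
    omega

end InvDes

theorem involution_descent_polynomial_symmetric (n : ℕ) (hn : 1 ≤ n) (i : ℕ)
    (hi : i ≤ n - 1) :
    ((Invols n).filter (fun σ => desStat n σ = i)).card =
      ((Invols n).filter (fun σ => desStat n σ = n - 1 - i)).card := by
  have count : ∀ k : ℕ, ((Invols n).filter (fun σ => desStat n σ = k)).card =
      ∑ T ∈ (Finset.Icc 1 (n - 1)).powersetCard k, InvDes.DF n T := by
    intro k
    rw [Finset.card_eq_sum_card_fiberwise (f := fun σ => DesSet n σ)
      (t := (Finset.Icc 1 (n - 1)).powersetCard k) (fun σ hσ => by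
        rw [Finset.mem_coe, Finset.mem_powersetCard]
        exact ⟨InvDes.desSet_subset σ, (Finset.mem_filter.1 (Finset.mem_coe.1 hσ)).2⟩)]
    apply Finset.sum_congr rfl
    intro T hT
    rw [Finset.mem_powersetCard] at hT
    rw [InvDes.DF]
    congr 1
    ext σ
    constructor
    · intro h
      obtain ⟨h1, h2⟩ := Finset.mem_filter.1 h
      exact Finset.mem_filter.2 ⟨(Finset.mem_filter.1 h1).1, h2⟩
    · intro h
      obtain ⟨h1, h2⟩ := Finset.mem_filter.1 h
      refine Finset.mem_filter.2 ⟨Finset.mem_filter.2 ⟨h1, ?_⟩, h2⟩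
      show (DesSet n σ).card = k
      rw [h2, hT.2]
  rw [count i, count (n - 1 - i)]
  rw [Finset.sum_congr rfl (fun T hT => InvDes.DF_compl hn T
    (Finset.mem_powersetCard.1 hT).1)]
  have hcardIcc : (Finset.Icc 1 (n - 1)).card = n - 1 := by
    rw [Nat.card_Icc]
    omega
  apply Finset.sum_nbij' (i := fun T => Finset.Icc 1 (n - 1) \ T)
    (j := fun T => Finset.Icc 1 (n - 1) \ T)
  · intro T hT
    rw [Finset.mem_powersetCard] at hT ⊢
    refine ⟨Finset.sdiff_subset, ?_⟩
    rw [Finset.card_sdiff_of_subset hT.1, hcardIcc, hT.2]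
  · intro T hT
    rw [Finset.mem_powersetCard] at hT ⊢
    refine ⟨Finset.sdiff_subset, ?_⟩
    rw [Finset.card_sdiff_of_subset hT.1, hcardIcc, hT.2]
    omega
  · intro T hT
    exact Finset.sdiff_sdiff_eq_self (Finset.mem_powersetCard.1 hT).1
  · intro T hT
    exact Finset.sdiff_sdiff_eq_self (Finset.mem_powersetCard.1 hT).1
  · intro T hT
    rfl
end
end

section
/- For every positive integer n and every 0 ≤ j ≤ C(n,2), the number of involutions in S_n with major index j equals the number of involutions in S_n with major index C(n,2) − j; that is, the polynomial I_n^maj(t) = Σ_{σ∈I_n} t^{maj(σ)} is symmetric. -/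
noncomputable section
open Finset

namespace MajSym

/-- number of "cut gaps" strictly before position `p` -/
def blk (S : Finset ℕ) (p : ℕ) : ℕ := (S.filter (fun s => s < p)).card

lemma blk_mono (S : Finset ℕ) {p q : ℕ} (h : p ≤ q) : blk S p ≤ blk S q := by
  apply card_le_card
  intro x hx
  simp only [mem_filter] at hx ⊢
  exact ⟨hx.1, lt_of_lt_of_le hx.2 h⟩

lemma lt_of_blk_lt {S : Finset ℕ} {a b : ℕ} (h : blk S a < blk S b) : a < b := by
  by_contra hc
  exact absurd (blk_mono S (not_lt.mp hc)) (not_le.mpr h)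

lemma blk_succ_of_not_mem {S : Finset ℕ} {p : ℕ} (h : p ∉ S) : blk S (p+1) = blk S p := by
  unfold blk
  congr 1
  apply Finset.ext
  intro x
  simp only [mem_filter]
  constructor
  · rintro ⟨hx, hlt⟩
    refine ⟨hx, ?_⟩
    rcases Nat.lt_succ_iff_lt_or_eq.mp hlt with h1 | rfl
    · exact h1
    · exact absurd hx h
  · rintro ⟨hx, hlt⟩
    exact ⟨hx, Nat.lt_succ_of_lt hlt⟩

lemma blk_lt_succ_of_mem {S : Finset ℕ} {p : ℕ} (h : p ∈ S) : blk S p < blk S (p+1) := by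
  apply card_lt_card
  constructor
  · intro x hx
    simp only [mem_filter] at hx ⊢
    exact ⟨hx.1, Nat.lt_succ_of_lt hx.2⟩
  · intro hsub
    have := hsub (by simp [mem_filter, h] : p ∈ S.filter (fun s => s < p+1))
    simp [mem_filter] at this
  
lemma gap_not_mem {S : Finset ℕ} {p : ℕ} (h : blk S p = blk S (p+1)) : p ∉ S := by
  intro hm
  exact absurd h (Nat.ne_of_lt (blk_lt_succ_of_mem hm))

lemma blk_eq_between {S : Finset ℕ} {a p b : ℕ} (h1 : a ≤ p) (h2 : p ≤ b)
    (h : blk S a = blk S b) : blk S p = blk S a :=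
  le_antisymm (h ▸ blk_mono S h2) (blk_mono S h1)

variable {n : ℕ}

/-- zero-based gap descent set -/
def gapDes (n : ℕ) (σ : Equiv.Perm (Fin n)) : Finset ℕ :=
  (range (n-1)).filter (fun p => permFun n σ (p+1) < permFun n σ p)

def IncOn (S : Finset ℕ) (σ : Equiv.Perm (Fin n)) : Prop :=
  ∀ a b : Fin n, a < b → blk S (a:ℕ) = blk S (b:ℕ) → σ a < σ b

def DecOn (S : Finset ℕ) (σ : Equiv.Perm (Fin n)) : Prop :=
  ∀ a b : Fin n, a < b → blk S (a:ℕ) = blk S (b:ℕ) → σ b < σ a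

lemma permFun_coe (σ : Equiv.Perm (Fin n)) (a : Fin n) : permFun n σ (a:ℕ) = (σ a : ℕ) := by
  unfold permFun
  rw [dif_pos a.isLt]

lemma mem_gapDes_iff (σ : Equiv.Perm (Fin n)) {p : ℕ} (hp : p + 1 < n) :
    p ∈ gapDes n σ ↔ σ ⟨p+1, hp⟩ < σ ⟨p, Nat.lt_of_succ_lt hp⟩ := by
  unfold gapDes
  rw [mem_filter, mem_range]
  have h1 : permFun n σ (p+1) = (σ ⟨p+1, hp⟩ : ℕ) := by unfold permFun; rw [dif_pos hp]
  have h2 : permFun n σ p = (σ ⟨p, Nat.lt_of_succ_lt hp⟩ : ℕ) := by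
    unfold permFun; rw [dif_pos (Nat.lt_of_succ_lt hp)]
  rw [h1, h2]
  constructor
  · rintro ⟨_, h⟩; exact h
  · intro h; exact ⟨by omega, h⟩

lemma gapDes_subset_range (σ : Equiv.Perm (Fin n)) : gapDes n σ ⊆ range (n-1) :=
  filter_subset _ _

/-- ascending at each uncut adjacent gap implies increasing on blocks -/
lemma incOn_of_gaps {S : Finset ℕ} {σ : Equiv.Perm (Fin n)}
    (hadj : ∀ p : ℕ, (hp : p + 1 < n) → p ∉ S →
      σ ⟨p, Nat.lt_of_succ_lt hp⟩ < σ ⟨p+1, hp⟩) : IncOn S σ := by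
  have climb : ∀ d : ℕ, ∀ a : ℕ, (h : a + d + 1 < n) → blk S a = blk S (a+d+1) →
      σ ⟨a, by omega⟩ < σ ⟨a+d+1, h⟩ := by
    intro d
    induction d with
    | zero =>
      intro a h hb
      exact hadj a (by omega) (gap_not_mem (by exact hb))
    | succ d ih =>
      intro a h hb
      have hmid : a + d + 1 < n := by omega
      have hb' : blk S a = blk S (a+d+2) := hb
      have hmid1 : blk S (a+d+1) = blk S a := blk_eq_between (by omega) (by omega) hb'
      have hb2 : blk S (a+d+1) = blk S (a+d+2) := hmid1.trans hb'
      have hb1 : blk S a = blk S (a + d + 1) := hmid1.symm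
      have step := hadj (a+d+1) (by omega : a+d+1+1 < n) (gap_not_mem hb2)
      have h1 := ih a hmid hb1
      exact lt_trans h1 step
  intro a b hab hblk
  have hab' : (a:ℕ) < (b:ℕ) := hab
  obtain ⟨d, hd⟩ : ∃ d, (b:ℕ) = (a:ℕ) + d + 1 := ⟨(b:ℕ) - (a:ℕ) - 1, by omega⟩
  have := climb d (a:ℕ) (hd ▸ b.isLt) (hd ▸ hblk)
  have ha : (⟨(a:ℕ), by omega⟩ : Fin n) = a := Fin.eta a _
  have hbb : (⟨(a:ℕ) + d + 1, hd ▸ b.isLt⟩ : Fin n) = b := by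
    apply Fin.ext; simp [hd]
  rwa [ha, hbb] at this

lemma decOn_of_gaps {S : Finset ℕ} {σ : Equiv.Perm (Fin n)}
    (hadj : ∀ p : ℕ, (hp : p + 1 < n) → p ∉ S →
      σ ⟨p+1, hp⟩ < σ ⟨p, Nat.lt_of_succ_lt hp⟩) : DecOn S σ := by
  have climb : ∀ d : ℕ, ∀ a : ℕ, (h : a + d + 1 < n) → blk S a = blk S (a+d+1) →
      σ ⟨a+d+1, h⟩ < σ ⟨a, by omega⟩ := by
    intro d
    induction d with
    | zero =>
      intro a h hb
      exact hadj a (by omega) (gap_not_mem (by exact hb))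
    | succ d ih =>
      intro a h hb
      have hmid : a + d + 1 < n := by omega
      have hb' : blk S a = blk S (a+d+2) := hb
      have hmid1 : blk S (a+d+1) = blk S a := blk_eq_between (by omega) (by omega) hb'
      have hb2 : blk S (a+d+1) = blk S (a+d+2) := hmid1.trans hb'
      have hb1 : blk S a = blk S (a + d + 1) := hmid1.symm
      have step := hadj (a+d+1) (by omega : a+d+1+1 < n) (gap_not_mem hb2)
      have h1 := ih a hmid hb1
      exact lt_trans step h1
  intro a b hab hblk
  have hab' : (a:ℕ) < (b:ℕ) := hab
  obtain ⟨d, hd⟩ : ∃ d, (b:ℕ) = (a:ℕ) + d + 1 := ⟨(b:ℕ) - (a:ℕ) - 1, by omega⟩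
  have := climb d (a:ℕ) (hd ▸ b.isLt) (hd ▸ hblk)
  have ha : (⟨(a:ℕ), by omega⟩ : Fin n) = a := Fin.eta a _
  have hbb : (⟨(a:ℕ) + d + 1, hd ▸ b.isLt⟩ : Fin n) = b := by
    apply Fin.ext; simp [hd]
  rwa [ha, hbb] at this

lemma gapDes_subset_iff {S : Finset ℕ} (σ : Equiv.Perm (Fin n)) :
    gapDes n σ ⊆ S ↔ IncOn S σ := by
  constructor
  · intro hsub
    apply incOn_of_gaps
    intro p hp hpS
    by_contra hc
    push_neg at hc
    have hne : σ ⟨p+1, hp⟩ ≠ σ ⟨p, Nat.lt_of_succ_lt hp⟩ := by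
      intro h
      have := σ.injective h
      simp [Fin.ext_iff] at this
    have : σ ⟨p+1, hp⟩ < σ ⟨p, Nat.lt_of_succ_lt hp⟩ := lt_of_le_of_ne hc hne
    exact hpS (hsub ((mem_gapDes_iff σ hp).mpr this))
  · intro hinc p hp
    by_contra hpS
    have hp' : p + 1 < n := by
      have := mem_range.mp (gapDes_subset_range σ hp)
      omega
    have hdes := (mem_gapDes_iff σ hp').mp hp
    have hblk : blk S (p:ℕ) = blk S (p+1) := (blk_succ_of_not_mem hpS).symm
    have := hinc ⟨p, Nat.lt_of_succ_lt hp'⟩ ⟨p+1, hp'⟩ (by simp [Fin.lt_def]) hblk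
    exact absurd hdes (asymm this)

lemma sdiff_subset_gapDes_iff {S : Finset ℕ} (σ : Equiv.Perm (Fin n)) :
    range (n-1) \ S ⊆ gapDes n σ ↔ DecOn S σ := by
  constructor
  · intro hsub
    apply decOn_of_gaps
    intro p hp hpS
    have hpmem : p ∈ range (n-1) \ S := by
      rw [mem_sdiff, mem_range]
      exact ⟨by omega, hpS⟩
    exact (mem_gapDes_iff σ hp).mp (hsub hpmem)
  · intro hdec p hp
    rw [mem_sdiff, mem_range] at hp
    obtain ⟨hp1, hp2⟩ := hp
    have hp' : p + 1 < n := by omega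
    have hblk : blk S (p:ℕ) = blk S (p+1) := (blk_succ_of_not_mem hp2).symm
    have := hdec ⟨p, Nat.lt_of_succ_lt hp'⟩ ⟨p+1, hp'⟩ (by simp [Fin.lt_def]) hblk
    exact (mem_gapDes_iff σ hp').mpr this

def CC (S : Finset ℕ) (F : Fin n → ℕ) (i j : ℕ) : Finset (Fin n) :=
  univ.filter (fun x => blk S (x:ℕ) = i ∧ F x = j)

lemma mem_CC_self (S : Finset ℕ) (F : Fin n → ℕ) (a : Fin n) :
    a ∈ CC S F (blk S (a:ℕ)) (F a) := mem_filter.mpr ⟨mem_univ _, rfl, rfl⟩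

lemma mem_CC_iff {S : Finset ℕ} {F : Fin n → ℕ} {i j : ℕ} {x : Fin n} :
    x ∈ CC S F i j ↔ blk S (x:ℕ) = i ∧ F x = j := by
  simp [CC]

def Sym (S : Finset ℕ) (F : Fin n → ℕ) : Prop :=
  ∀ i j, (CC S F i j).card = (CC S F j i).card

def WInc (S : Finset ℕ) (F : Fin n → ℕ) : Prop :=
  ∀ a b : Fin n, a < b → blk S (a:ℕ) = blk S (b:ℕ) → F a ≤ F b

def WDec (S : Finset ℕ) (F : Fin n → ℕ) : Prop :=
  ∀ a b : Fin n, a < b → blk S (a:ℕ) = blk S (b:ℕ) → F b ≤ F a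

/-- the unique blockwise-increasing involution with blockword `F` -/
def bInc (S : Finset ℕ) (F : Fin n → ℕ) (hF : Sym S F) (a : Fin n) : Fin n :=
  (CC S F (F a) (blk S (a:ℕ))).orderEmbOfFin (hF (F a) (blk S (a:ℕ)))
    (((CC S F (blk S (a:ℕ)) (F a)).orderIsoOfFin rfl).symm ⟨a, mem_CC_self S F a⟩)

/-- the unique blockwise-decreasing involution with blockword `F` -/
def bDec (S : Finset ℕ) (F : Fin n → ℕ) (hF : Sym S F) (a : Fin n) : Fin n :=
  (CC S F (F a) (blk S (a:ℕ))).orderEmbOfFin (hF (F a) (blk S (a:ℕ)))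
    (Fin.rev (((CC S F (blk S (a:ℕ)) (F a)).orderIsoOfFin rfl).symm ⟨a, mem_CC_self S F a⟩))

lemma bInc_mem (S : Finset ℕ) (F : Fin n → ℕ) (hF : Sym S F) (a : Fin n) :
    bInc S F hF a ∈ CC S F (F a) (blk S (a:ℕ)) := orderEmbOfFin_mem _ _ _

lemma bDec_mem (S : Finset ℕ) (F : Fin n → ℕ) (hF : Sym S F) (a : Fin n) :
    bDec S F hF a ∈ CC S F (F a) (blk S (a:ℕ)) := orderEmbOfFin_mem _ _ _

lemma blk_bInc (S : Finset ℕ) (F : Fin n → ℕ) (hF : Sym S F) (a : Fin n) :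
    blk S ((bInc S F hF a : Fin n) : ℕ) = F a := (mem_CC_iff.mp (bInc_mem S F hF a)).1

lemma F_bInc (S : Finset ℕ) (F : Fin n → ℕ) (hF : Sym S F) (a : Fin n) :
    F (bInc S F hF a) = blk S (a:ℕ) := (mem_CC_iff.mp (bInc_mem S F hF a)).2

lemma blk_bDec (S : Finset ℕ) (F : Fin n → ℕ) (hF : Sym S F) (a : Fin n) :
    blk S ((bDec S F hF a : Fin n) : ℕ) = F a := (mem_CC_iff.mp (bDec_mem S F hF a)).1

lemma F_bDec (S : Finset ℕ) (F : Fin n → ℕ) (hF : Sym S F) (a : Fin n) :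
    F (bDec S F hF a) = blk S (a:ℕ) := (mem_CC_iff.mp (bDec_mem S F hF a)).2

lemma bInc_involutive (S : Finset ℕ) (F : Fin n → ℕ) (hF : Sym S F) :
    Function.Involutive (bInc S F hF) := by
  intro a
  set i := blk S (a:ℕ) with hi
  set j := F a with hj
  set b := bInc S F hF a with hbdef
  have hbi : blk S ((b : Fin n) : ℕ) = j := blk_bInc S F hF a
  have hbj : F b = i := F_bInc S F hF a
  -- u : index of a in CC i j
  set u := ((CC S F i j).orderIsoOfFin rfl).symm ⟨a, mem_CC_self S F a⟩ with hu
  have hbu : b = (CC S F j i).orderEmbOfFin (hF j i) u := rfl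
  -- bInc at b
  have hgb : bInc S F hF b =
      (CC S F (F b) (blk S ((b : Fin n) : ℕ))).orderEmbOfFin (hF (F b) (blk S ((b:Fin n):ℕ)))
        (((CC S F (blk S ((b:Fin n):ℕ)) (F b)).orderIsoOfFin rfl).symm ⟨b, mem_CC_self S F b⟩) := rfl
  rw [hgb]
  have hb_mem : b ∈ CC S F j i := by rw [mem_CC_iff]; exact ⟨hbi, hbj⟩
  -- rewrite indices
  have e1 : blk S ((b:Fin n):ℕ) = j := hbi
  have e2 : F b = i := hbj
  -- use congruence to replace
  -- set v := index of b in CC j i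
  have key : ∀ (jj ii : ℕ) (ejj : blk S ((b:Fin n):ℕ) = jj) (eii : F b = ii),
      (CC S F (F b) (blk S ((b : Fin n) : ℕ))).orderEmbOfFin (hF (F b) (blk S ((b:Fin n):ℕ)))
        (((CC S F (blk S ((b:Fin n):ℕ)) (F b)).orderIsoOfFin rfl).symm ⟨b, mem_CC_self S F b⟩)
      = (CC S F ii jj).orderEmbOfFin (hF ii jj)
        (((CC S F jj ii).orderIsoOfFin rfl).symm ⟨b, by rw [mem_CC_iff]; exact ⟨ejj, eii⟩⟩) := by
    intro jj ii ejj eii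
    subst ejj; subst eii
    rfl
  rw [key j i e1 e2]
  -- now compute: v = index of b in CC j i
  set v := ((CC S F j i).orderIsoOfFin rfl).symm ⟨b, by rw [mem_CC_iff]; exact ⟨e1, e2⟩⟩ with hv
  have hbv : (CC S F j i).orderEmbOfFin rfl v = b := by
    exact congrArg Subtype.val
      (((CC S F j i).orderIsoOfFin rfl).apply_symm_apply ⟨b, by rw [mem_CC_iff]; exact ⟨e1, e2⟩⟩)
  have huv : (u : ℕ) = (v : ℕ) := by
    have : (CC S F j i).orderEmbOfFin (hF j i) u = (CC S F j i).orderEmbOfFin rfl v := by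
      rw [← hbu, hbv]
    exact orderEmbOfFin_eq_orderEmbOfFin_iff.mp this
  have hgoal : (CC S F i j).orderEmbOfFin (hF i j) v = (CC S F i j).orderEmbOfFin rfl u := by
    apply orderEmbOfFin_eq_orderEmbOfFin_iff.mpr
    omega
  rw [hgoal]
  -- finally orderEmbOfFin rfl u = a
  exact congrArg Subtype.val
    (((CC S F i j).orderIsoOfFin rfl).apply_symm_apply ⟨a, mem_CC_self S F a⟩)

lemma bDec_involutive (S : Finset ℕ) (F : Fin n → ℕ) (hF : Sym S F) :
    Function.Involutive (bDec S F hF) := by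
  intro a
  set i := blk S (a:ℕ) with hi
  set j := F a with hj
  set b := bDec S F hF a with hbdef
  have hbi : blk S ((b : Fin n) : ℕ) = j := blk_bDec S F hF a
  have hbj : F b = i := F_bDec S F hF a
  set u := ((CC S F i j).orderIsoOfFin rfl).symm ⟨a, mem_CC_self S F a⟩ with hu
  have hbu : b = (CC S F j i).orderEmbOfFin (hF j i) (Fin.rev u) := rfl
  have hgb : bDec S F hF b =
      (CC S F (F b) (blk S ((b : Fin n) : ℕ))).orderEmbOfFin (hF (F b) (blk S ((b:Fin n):ℕ)))
        (Fin.rev (((CC S F (blk S ((b:Fin n):ℕ)) (F b)).orderIsoOfFin rfl).symm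
          ⟨b, mem_CC_self S F b⟩)) := rfl
  rw [hgb]
  have e1 : blk S ((b:Fin n):ℕ) = j := hbi
  have e2 : F b = i := hbj
  have key : ∀ (jj ii : ℕ) (ejj : blk S ((b:Fin n):ℕ) = jj) (eii : F b = ii),
      (CC S F (F b) (blk S ((b : Fin n) : ℕ))).orderEmbOfFin (hF (F b) (blk S ((b:Fin n):ℕ)))
        (Fin.rev (((CC S F (blk S ((b:Fin n):ℕ)) (F b)).orderIsoOfFin rfl).symm
          ⟨b, mem_CC_self S F b⟩))
      = (CC S F ii jj).orderEmbOfFin (hF ii jj)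
        (Fin.rev (((CC S F jj ii).orderIsoOfFin rfl).symm
          ⟨b, by rw [mem_CC_iff]; exact ⟨ejj, eii⟩⟩)) := by
    intro jj ii ejj eii
    subst ejj; subst eii
    rfl
  rw [key j i e1 e2]
  set v := ((CC S F j i).orderIsoOfFin rfl).symm ⟨b, by rw [mem_CC_iff]; exact ⟨e1, e2⟩⟩ with hv
  have hbv : (CC S F j i).orderEmbOfFin rfl v = b := by
    exact congrArg Subtype.val
      (((CC S F j i).orderIsoOfFin rfl).apply_symm_apply ⟨b, by rw [mem_CC_iff]; exact ⟨e1, e2⟩⟩)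
  have huv : ((Fin.rev u : Fin _) : ℕ) = (v : ℕ) := by
    have : (CC S F j i).orderEmbOfFin (hF j i) (Fin.rev u) = (CC S F j i).orderEmbOfFin rfl v := by
      rw [← hbu, hbv]
    exact orderEmbOfFin_eq_orderEmbOfFin_iff.mp this
  have hgoal : (CC S F i j).orderEmbOfFin (hF i j) (Fin.rev v) =
      (CC S F i j).orderEmbOfFin rfl u := by
    apply orderEmbOfFin_eq_orderEmbOfFin_iff.mpr
    have hk : (CC S F i j).card = (CC S F j i).card := hF i j
    have h1 : ((Fin.rev u : Fin _) : ℕ) = (CC S F i j).card - ((u : ℕ) + 1) := Fin.val_rev u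
    have h2 : ((Fin.rev v : Fin _) : ℕ) = (CC S F j i).card - ((v : ℕ) + 1) := Fin.val_rev v
    have hult : (u : ℕ) < (CC S F i j).card := u.isLt
    have hvlt : (v : ℕ) < (CC S F j i).card := v.isLt
    omega
  rw [hgoal]
  exact congrArg Subtype.val
    (((CC S F i j).orderIsoOfFin rfl).apply_symm_apply ⟨a, mem_CC_self S F a⟩)

lemma bInc_incOn {S : Finset ℕ} {F : Fin n → ℕ} (hF : Sym S F) (hW : WInc S F)
    {a b : Fin n} (hab : a < b) (hblk : blk S (a:ℕ) = blk S (b:ℕ)) :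
    bInc S F hF a < bInc S F hF b := by
  rcases lt_or_eq_of_le (hW a b hab hblk) with hFab | hFab
  · have h1 : blk S ((bInc S F hF a : Fin n) : ℕ) = F a := blk_bInc S F hF a
    have h2 : blk S ((bInc S F hF b : Fin n) : ℕ) = F b := blk_bInc S F hF b
    have hlt : blk S ((bInc S F hF a : Fin n):ℕ) < blk S ((bInc S F hF b : Fin n):ℕ) := by
      rw [h1, h2]; exact hFab
    rw [Fin.lt_def]
    exact lt_of_blk_lt hlt
  · have hbmem' : b ∈ CC S F (blk S (a:ℕ)) (F a) := by
      rw [mem_CC_iff]; exact ⟨hblk.symm, hFab.symm⟩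
    have key : ∀ (ii jj : ℕ) (e1 : blk S (b:ℕ) = ii) (e2 : F b = jj),
        bInc S F hF b = (CC S F jj ii).orderEmbOfFin (hF jj ii)
          (((CC S F ii jj).orderIsoOfFin rfl).symm
            ⟨b, by rw [mem_CC_iff]; exact ⟨e1, e2⟩⟩) := by
      intro ii jj e1 e2
      subst e1; subst e2
      rfl
    rw [key (blk S (a:ℕ)) (F a) hblk.symm hFab.symm]
    apply ((CC S F (F a) (blk S (a:ℕ))).orderEmbOfFin (hF (F a) (blk S (a:ℕ)))).strictMono
    apply (((CC S F (blk S (a:ℕ)) (F a)).orderIsoOfFin rfl).symm).strictMono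
    exact Subtype.mk_lt_mk.mpr hab

lemma bDec_decOn {S : Finset ℕ} {F : Fin n → ℕ} (hF : Sym S F) (hW : WDec S F)
    {a b : Fin n} (hab : a < b) (hblk : blk S (a:ℕ) = blk S (b:ℕ)) :
    bDec S F hF b < bDec S F hF a := by
  rcases lt_or_eq_of_le (hW a b hab hblk) with hFab | hFab
  · have h1 : blk S ((bDec S F hF a : Fin n) : ℕ) = F a := blk_bDec S F hF a
    have h2 : blk S ((bDec S F hF b : Fin n) : ℕ) = F b := blk_bDec S F hF b
    have hlt : blk S ((bDec S F hF b : Fin n):ℕ) < blk S ((bDec S F hF a : Fin n):ℕ) := by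
      rw [h1, h2]; exact hFab
    rw [Fin.lt_def]
    exact lt_of_blk_lt hlt
  · have key : ∀ (ii jj : ℕ) (e1 : blk S (b:ℕ) = ii) (e2 : F b = jj),
        bDec S F hF b = (CC S F jj ii).orderEmbOfFin (hF jj ii)
          (Fin.rev (((CC S F ii jj).orderIsoOfFin rfl).symm
            ⟨b, by rw [mem_CC_iff]; exact ⟨e1, e2⟩⟩)) := by
      intro ii jj e1 e2
      subst e1; subst e2
      rfl
    rw [key (blk S (a:ℕ)) (F a) hblk.symm hFab]
    apply ((CC S F (F a) (blk S (a:ℕ))).orderEmbOfFin (hF (F a) (blk S (a:ℕ)))).strictMono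
    rw [Fin.rev_lt_rev]
    apply (((CC S F (blk S (a:ℕ)) (F a)).orderIsoOfFin rfl).symm).strictMono
    exact Subtype.mk_lt_mk.mpr hab

lemma emb_iso_symm (A : Finset (Fin n)) {a : Fin n} (ha : a ∈ A) :
    A.orderEmbOfFin rfl ((A.orderIsoOfFin rfl).symm ⟨a, ha⟩) = a :=
  congrArg Subtype.val ((A.orderIsoOfFin rfl).apply_symm_apply ⟨a, ha⟩)

lemma inc_rigid {S : Finset ℕ} {σ : Equiv.Perm (Fin n)} (hinv : Function.Involutive ⇑σ)
    (hIncOn : IncOn S σ) (hsym : Sym S (fun x => blk S ((σ x : Fin n) : ℕ))) (a : Fin n) :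
    σ a = bInc S (fun x => blk S ((σ x : Fin n) : ℕ)) hsym a := by
  have hfs : ∀ u : Fin ((CC S (fun x => blk S ((σ x : Fin n):ℕ)) (blk S (a:ℕ))
      (blk S ((σ a : Fin n):ℕ))).card),
      σ ((CC S (fun x => blk S ((σ x : Fin n):ℕ)) (blk S (a:ℕ))
        (blk S ((σ a : Fin n):ℕ))).orderEmbOfFin rfl u)
      ∈ CC S (fun x => blk S ((σ x : Fin n):ℕ)) (blk S ((σ a : Fin n):ℕ)) (blk S (a:ℕ)) := by
    intro u
    have hx := orderEmbOfFin_mem (CC S (fun x => blk S ((σ x : Fin n):ℕ)) (blk S (a:ℕ))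
      (blk S ((σ a : Fin n):ℕ))) rfl u
    rw [mem_CC_iff] at hx ⊢
    refine ⟨hx.2, ?_⟩
    rw [hinv _]
    exact hx.1
  have hmono : StrictMono (fun u => σ ((CC S (fun x => blk S ((σ x : Fin n):ℕ)) (blk S (a:ℕ))
      (blk S ((σ a : Fin n):ℕ))).orderEmbOfFin rfl u)) := by
    intro u v huv
    have h1 := orderEmbOfFin_mem (CC S (fun x => blk S ((σ x : Fin n):ℕ)) (blk S (a:ℕ))
      (blk S ((σ a : Fin n):ℕ))) rfl u
    have h2 := orderEmbOfFin_mem (CC S (fun x => blk S ((σ x : Fin n):ℕ)) (blk S (a:ℕ))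
      (blk S ((σ a : Fin n):ℕ))) rfl v
    rw [mem_CC_iff] at h1 h2
    exact hIncOn _ _ (((CC S (fun x => blk S ((σ x : Fin n):ℕ)) (blk S (a:ℕ))
      (blk S ((σ a : Fin n):ℕ))).orderEmbOfFin rfl).strictMono huv)
      (h1.1.trans h2.1.symm)
  have huniq := orderEmbOfFin_unique
    (hsym (blk S ((σ a : Fin n):ℕ)) (blk S (a:ℕ))) hfs hmono
  have happ := congrFun (congrArg (fun (e : _ → Fin n) => e) huniq)
    (((CC S (fun x => blk S ((σ x : Fin n):ℕ)) (blk S (a:ℕ))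
      (blk S ((σ a : Fin n):ℕ))).orderIsoOfFin rfl).symm ⟨a, mem_CC_self S _ a⟩)
  rw [emb_iso_symm] at happ
  exact happ

lemma dec_rigid {S : Finset ℕ} {σ : Equiv.Perm (Fin n)} (hinv : Function.Involutive ⇑σ)
    (hDecOn : DecOn S σ) (hsym : Sym S (fun x => blk S ((σ x : Fin n) : ℕ))) (a : Fin n) :
    σ a = bDec S (fun x => blk S ((σ x : Fin n) : ℕ)) hsym a := by
  have hfs : ∀ u : Fin ((CC S (fun x => blk S ((σ x : Fin n):ℕ)) (blk S (a:ℕ))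
      (blk S ((σ a : Fin n):ℕ))).card),
      σ ((CC S (fun x => blk S ((σ x : Fin n):ℕ)) (blk S (a:ℕ))
        (blk S ((σ a : Fin n):ℕ))).orderEmbOfFin rfl (Fin.rev u))
      ∈ CC S (fun x => blk S ((σ x : Fin n):ℕ)) (blk S ((σ a : Fin n):ℕ)) (blk S (a:ℕ)) := by
    intro u
    have hx := orderEmbOfFin_mem (CC S (fun x => blk S ((σ x : Fin n):ℕ)) (blk S (a:ℕ))
      (blk S ((σ a : Fin n):ℕ))) rfl (Fin.rev u)
    rw [mem_CC_iff] at hx ⊢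
    refine ⟨hx.2, ?_⟩
    rw [hinv _]
    exact hx.1
  have hmono : StrictMono (fun u => σ ((CC S (fun x => blk S ((σ x : Fin n):ℕ)) (blk S (a:ℕ))
      (blk S ((σ a : Fin n):ℕ))).orderEmbOfFin rfl (Fin.rev u))) := by
    intro u v huv
    have hrev : Fin.rev v < Fin.rev u := Fin.rev_lt_rev.mpr huv
    have h1 := orderEmbOfFin_mem (CC S (fun x => blk S ((σ x : Fin n):ℕ)) (blk S (a:ℕ))
      (blk S ((σ a : Fin n):ℕ))) rfl (Fin.rev u)
    have h2 := orderEmbOfFin_mem (CC S (fun x => blk S ((σ x : Fin n):ℕ)) (blk S (a:ℕ))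
      (blk S ((σ a : Fin n):ℕ))) rfl (Fin.rev v)
    rw [mem_CC_iff] at h1 h2
    exact hDecOn _ _ (((CC S (fun x => blk S ((σ x : Fin n):ℕ)) (blk S (a:ℕ))
      (blk S ((σ a : Fin n):ℕ))).orderEmbOfFin rfl).strictMono hrev)
      (h2.1.trans h1.1.symm)
  have huniq := orderEmbOfFin_unique
    (hsym (blk S ((σ a : Fin n):ℕ)) (blk S (a:ℕ))) hfs hmono
  have happ := congrFun huniq
    (Fin.rev (((CC S (fun x => blk S ((σ x : Fin n):ℕ)) (blk S (a:ℕ))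
      (blk S ((σ a : Fin n):ℕ))).orderIsoOfFin rfl).symm ⟨a, mem_CC_self S _ a⟩))
  simp only [Fin.rev_rev] at happ
  rw [emb_iso_symm] at happ
  exact happ

lemma sym_of_involutive {S : Finset ℕ} {σ : Equiv.Perm (Fin n)}
    (hinv : Function.Involutive ⇑σ) :
    Sym S (fun x => blk S ((σ x : Fin n) : ℕ)) := by
  intro i j
  apply Finset.card_nbij (fun x => σ x)
  · intro x hx
    simp only [Finset.mem_coe, mem_CC_iff] at hx ⊢
    refine ⟨hx.2, ?_⟩
    rw [hinv _]
    exact hx.1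
  · intro x hx y hy hxy
    exact σ.injective hxy
  · intro y hy
    rw [Set.mem_image]
    refine ⟨σ y, ?_, hinv y⟩
    rw [Finset.mem_coe, mem_CC_iff] at hy ⊢
    refine ⟨hy.2, ?_⟩
    rw [hinv _]
    exact hy.1


lemma involutive_of_mem {σ : Equiv.Perm (Fin n)} (h : σ ∈ Invols n) :
    Function.Involutive ⇑σ := by
  rw [Invols, mem_filter] at h
  intro x
  have := DFunLike.congr_fun h.2 x
  simpa [Equiv.Perm.mul_apply] using this

lemma mem_of_involutive {σ : Equiv.Perm (Fin n)} (h : Function.Involutive ⇑σ) :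
    σ ∈ Invols n := by
  rw [Invols, mem_filter]
  refine ⟨mem_univ _, ?_⟩
  ext x
  simp [Equiv.Perm.mul_apply, h x]

lemma sym_blk (S : Finset ℕ) : Sym S (fun x : Fin n => blk S (x:ℕ)) := by
  intro i j
  rcases eq_or_ne i j with rfl | hij
  · rfl
  · have h1 : CC S (fun x : Fin n => blk S (x:ℕ)) i j = ∅ := by
      rw [eq_empty_iff_forall_notMem]
      intro x hx
      rw [mem_CC_iff] at hx
      exact hij (hx.1.symm.trans hx.2)
    have h2 : CC S (fun x : Fin n => blk S (x:ℕ)) j i = ∅ := by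
      rw [eq_empty_iff_forall_notMem]
      intro x hx
      rw [mem_CC_iff] at hx
      exact hij (hx.2.symm.trans hx.1)
    rw [h1, h2]

def rmap (S : Finset ℕ) : Fin n → Fin n := bDec S (fun x : Fin n => blk S (x:ℕ)) (sym_blk S)

lemma rmap_involutive (S : Finset ℕ) : Function.Involutive (rmap (n := n) S) :=
  bDec_involutive _ _ _

lemma blk_rmap (S : Finset ℕ) (x : Fin n) : blk S ((rmap S x : Fin n) : ℕ) = blk S (x:ℕ) :=
  blk_bDec _ _ _ _

lemma rmap_dec {S : Finset ℕ} {a b : Fin n} (hab : a < b)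
    (hblk : blk S (a:ℕ) = blk S (b:ℕ)) : rmap S b < rmap S a :=
  bDec_decOn _ (fun _ _ _ h => le_of_eq h.symm) hab hblk

lemma card_CC_comp_rmap (S : Finset ℕ) (F : Fin n → ℕ) (i j : ℕ) :
    (CC S (fun x => F (rmap S x)) i j).card = (CC S F i j).card := by
  apply card_nbij (fun x => rmap S x)
  · intro x hx
    simp only [Finset.mem_coe, mem_CC_iff] at hx ⊢
    exact ⟨(blk_rmap S x).trans hx.1, hx.2⟩
  · intro x _ y _ hxy
    exact (rmap_involutive S).injective hxy
  · intro y hy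
    rw [Finset.mem_coe, mem_CC_iff] at hy
    refine ⟨rmap S y, ?_, rmap_involutive S y⟩
    rw [Finset.mem_coe, mem_CC_iff]
    constructor
    · rw [blk_rmap]; exact hy.1
    · rw [rmap_involutive S y]; exact hy.2

lemma sym_comp_rmap {S : Finset ℕ} {F : Fin n → ℕ} (hF : Sym S F) :
    Sym S (fun x => F (rmap S x)) := by
  intro i j
  rw [card_CC_comp_rmap, card_CC_comp_rmap]
  exact hF i j

lemma winc_of_incOn {S : Finset ℕ} {σ : Equiv.Perm (Fin n)} (h : IncOn S σ) :
    WInc S (fun x => blk S ((σ x : Fin n):ℕ)) := by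
  intro a b hab hblk
  exact blk_mono S (le_of_lt (h a b hab hblk))

lemma wdec_of_decOn {S : Finset ℕ} {σ : Equiv.Perm (Fin n)} (h : DecOn S σ) :
    WDec S (fun x => blk S ((σ x : Fin n):ℕ)) := by
  intro a b hab hblk
  exact blk_mono S (le_of_lt (h a b hab hblk))

lemma wdec_comp_rmap {S : Finset ℕ} {F : Fin n → ℕ} (hW : WInc S F) :
    WDec S (fun x => F (rmap S x)) := by
  intro a b hab hblk
  have h1 : rmap S b < rmap S a := rmap_dec hab hblk
  have h2 : blk S ((rmap S b : Fin n):ℕ) = blk S ((rmap S a : Fin n):ℕ) := by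
    rw [blk_rmap, blk_rmap, hblk]
  exact hW _ _ h1 h2

lemma winc_comp_rmap {S : Finset ℕ} {F : Fin n → ℕ} (hW : WDec S F) :
    WInc S (fun x => F (rmap S x)) := by
  intro a b hab hblk
  have h1 : rmap S b < rmap S a := rmap_dec hab hblk
  have h2 : blk S ((rmap S b : Fin n):ℕ) = blk S ((rmap S a : Fin n):ℕ) := by
    rw [blk_rmap, blk_rmap, hblk]
  exact hW _ _ h1 h2

lemma bInc_congr {S : Finset ℕ} {F G : Fin n → ℕ} (h : F = G) (hF : Sym S F) (hG : Sym S G) :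
    bInc S F hF = bInc S G hG := by subst h; rfl

lemma bDec_congr {S : Finset ℕ} {F G : Fin n → ℕ} (h : F = G) (hF : Sym S F) (hG : Sym S G) :
    bDec S F hF = bDec S G hG := by subst h; rfl

theorem core_card (n : ℕ) (S : Finset ℕ) :
    ((Invols n).filter (fun σ => gapDes n σ ⊆ S)).card =
    ((Invols n).filter (fun σ => range (n-1) \ S ⊆ gapDes n σ)).card := by
  classical
  -- forward map
  have hsymPhi : ∀ (σ : Equiv.Perm (Fin n)), Function.Involutive ⇑σ →
      Sym S (fun x => blk S ((σ (rmap S x) : Fin n):ℕ)) := by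
    intro σ hinv
    exact sym_comp_rmap (sym_of_involutive hinv)
  refine card_bij'
    (i := fun σ hσ => Function.Involutive.toPerm _
      (bDec_involutive S (fun x => blk S ((σ (rmap S x) : Fin n):ℕ))
        (hsymPhi σ (involutive_of_mem (mem_filter.mp hσ).1))))
    (j := fun τ hτ => Function.Involutive.toPerm _
      (bInc_involutive S (fun x => blk S ((τ (rmap S x) : Fin n):ℕ))
        (hsymPhi τ (involutive_of_mem (mem_filter.mp hτ).1))))
    ?_ ?_ ?_ ?_
  · -- i maps into target
    intro σ hσ
    have hmem := (mem_filter.mp hσ).1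
    have hinv := involutive_of_mem hmem
    have hInc : IncOn S σ := (gapDes_subset_iff σ).mp (mem_filter.mp hσ).2
    rw [mem_filter]
    constructor
    · apply mem_of_involutive
      rw [Function.Involutive.coe_toPerm]
      exact bDec_involutive _ _ _
    · rw [sdiff_subset_gapDes_iff]
      intro a b hab hblk
      exact bDec_decOn (hsymPhi σ (involutive_of_mem (mem_filter.mp hσ).1))
        (wdec_comp_rmap (winc_of_incOn hInc)) hab hblk
  · -- j maps into source
    intro τ hτ
    have hmem := (mem_filter.mp hτ).1
    have hinv := involutive_of_mem hmem
    have hDec : DecOn S τ := (sdiff_subset_gapDes_iff τ).mp (mem_filter.mp hτ).2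
    rw [mem_filter]
    constructor
    · apply mem_of_involutive
      rw [Function.Involutive.coe_toPerm]
      exact bInc_involutive _ _ _
    · rw [gapDes_subset_iff]
      intro a b hab hblk
      exact bInc_incOn (hsymPhi τ (involutive_of_mem (mem_filter.mp hτ).1))
        (winc_comp_rmap (wdec_of_decOn hDec)) hab hblk
  · -- left inverse
    intro σ hσ
    have hmem := (mem_filter.mp hσ).1
    have hinv := involutive_of_mem hmem
    have hInc : IncOn S σ := (gapDes_subset_iff σ).mp (mem_filter.mp hσ).2
    apply Equiv.ext
    intro x
    rw [Function.Involutive.coe_toPerm]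
    have hfe : (fun y => blk S (((Function.Involutive.toPerm _
        (bDec_involutive S (fun z => blk S ((σ (rmap S z) : Fin n):ℕ))
          (hsymPhi σ hinv))) (rmap S y) : Fin n):ℕ))
        = (fun y => blk S ((σ y : Fin n):ℕ)) := by
      funext y
      rw [Function.Involutive.coe_toPerm]
      rw [blk_bDec]
      rw [rmap_involutive S y]
    rw [bInc_congr hfe _ (sym_of_involutive hinv)]
    exact (inc_rigid hinv hInc (sym_of_involutive hinv) x).symm
  · -- right inverse
    intro τ hτ
    have hmem := (mem_filter.mp hτ).1
    have hinv := involutive_of_mem hmem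
    have hDec : DecOn S τ := (sdiff_subset_gapDes_iff τ).mp (mem_filter.mp hτ).2
    apply Equiv.ext
    intro x
    rw [Function.Involutive.coe_toPerm]
    have hfe : (fun y => blk S (((Function.Involutive.toPerm _
        (bInc_involutive S (fun z => blk S ((τ (rmap S z) : Fin n):ℕ))
          (hsymPhi τ hinv))) (rmap S y) : Fin n):ℕ))
        = (fun y => blk S ((τ y : Fin n):ℕ)) := by
      funext y
      rw [Function.Involutive.coe_toPerm]
      rw [blk_bInc]
      rw [rmap_involutive S y]
    rw [bDec_congr hfe _ (sym_of_involutive hinv)]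
    exact (dec_rigid hinv hDec (sym_of_involutive hinv) x).symm

variable {n : ℕ}



lemma compl_compl_eq {T R : Finset ℕ} (h : T ⊆ R) : R \ (R \ T) = T := by
  ext x
  simp only [mem_sdiff]
  constructor
  · rintro ⟨hx, hn⟩
    by_contra hT
    exact hn ⟨hx, hT⟩
  · intro hx
    exact ⟨h hx, fun h2 => h2.2 hx⟩

def beta (n : ℕ) (T : Finset ℕ) : ℕ := ((Invols n).filter (fun σ => gapDes n σ = T)).card

lemma X_card (S : Finset ℕ) :
    ((Invols n).filter (fun σ => gapDes n σ ⊆ S)).card = ∑ T ∈ S.powerset, beta n T := by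
  rw [card_eq_sum_card_fiberwise (f := gapDes n) (t := S.powerset)
    (fun σ hσ => mem_powerset.mpr (mem_filter.mp hσ).2)]
  apply sum_congr rfl
  intro T hT
  have hTS := mem_powerset.mp hT
  unfold beta
  congr 1
  ext σ
  simp only [mem_filter]
  constructor
  · rintro ⟨⟨h1, _⟩, h3⟩
    exact ⟨h1, h3⟩
  · rintro ⟨h1, h3⟩
    exact ⟨⟨h1, h3 ▸ hTS⟩, h3⟩

lemma Y_card (S : Finset ℕ) (hS : S ⊆ range (n-1)) :
    ((Invols n).filter (fun σ => range (n-1) \ S ⊆ gapDes n σ)).card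
      = ∑ T ∈ S.powerset, beta n (range (n-1) \ T) := by
  rw [card_eq_sum_card_fiberwise (f := fun σ => range (n-1) \ gapDes n σ) (t := S.powerset)
    (fun σ hσ => ?_)]
  · apply sum_congr rfl
    intro T hT
    have hTS := mem_powerset.mp hT
    unfold beta
    congr 1
    ext σ
    simp only [mem_filter]
    constructor
    · rintro ⟨⟨h1, _⟩, h3⟩
      refine ⟨h1, ?_⟩
      rw [← h3, compl_compl_eq (gapDes_subset_range σ)]
    · rintro ⟨h1, h3⟩
      have hT' : range (n-1) \ gapDes n σ = T := by
        rw [h3, compl_compl_eq (hTS.trans hS)]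
      refine ⟨⟨h1, ?_⟩, hT'⟩
      rw [h3]
      exact sdiff_subset_sdiff (le_refl _) hTS
  · -- fiber membership
    simp only [Finset.mem_coe, mem_powerset]
    have h2 := (mem_filter.mp hσ).2
    intro x hx
    rw [mem_sdiff] at hx
    by_contra hxS
    exact hx.2 (h2 (mem_sdiff.mpr ⟨hx.1, hxS⟩))

lemma beta_compl : ∀ S : Finset ℕ, S ⊆ range (n-1) →
    beta n S = beta n (range (n-1) \ S) := by
  intro S
  induction S using Finset.strongInduction with
  | _ S ih =>
    intro hS
    have key : ∑ T ∈ S.powerset, beta n T = ∑ T ∈ S.powerset, beta n (range (n-1) \ T) := by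
      rw [← X_card, ← Y_card S hS]
      exact core_card n S
    have e1 : beta n S + ∑ T ∈ S.powerset.erase S, beta n T = ∑ T ∈ S.powerset, beta n T :=
      add_sum_erase _ _ (mem_powerset_self S)
    have e2 : beta n (range (n-1) \ S) + ∑ T ∈ S.powerset.erase S, beta n (range (n-1) \ T)
        = ∑ T ∈ S.powerset, beta n (range (n-1) \ T) :=
      add_sum_erase _ (fun T => beta n (range (n-1) \ T)) (mem_powerset_self S)
    have e3 : ∑ T ∈ S.powerset.erase S, beta n T
        = ∑ T ∈ S.powerset.erase S, beta n (range (n-1) \ T) := by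
      apply sum_congr rfl
      intro T hT
      rw [mem_erase, mem_powerset] at hT
      exact ih T (_root_.ssubset_iff_subset_ne.mpr ⟨hT.2, hT.1⟩) (hT.2.trans hS)
    omega

lemma DesSet_eq_image (σ : Equiv.Perm (Fin n)) :
    DesSet n σ = (gapDes n σ).image (· + 1) := by
  ext i
  simp only [DesSet, gapDes, mem_filter, mem_image, mem_Icc, mem_range]
  constructor
  · rintro ⟨⟨h1, h2⟩, hdes⟩
    refine ⟨i - 1, ⟨by omega, ?_⟩, by omega⟩
    rw [show i - 1 + 1 = i by omega]
    exact hdes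
  · rintro ⟨p, ⟨hp, hdes⟩, hpi⟩
    refine ⟨⟨by omega, by omega⟩, ?_⟩
    rw [show i - 1 = p by omega, show i = p + 1 by omega]
    exact hdes

lemma majStat_eq (σ : Equiv.Perm (Fin n)) : majStat n σ = ∑ p ∈ gapDes n σ, (p + 1) := by
  unfold majStat
  rw [DesSet_eq_image σ]
  rw [sum_image (fun x _ y _ h => by omega)]

lemma msum_range (n : ℕ) : ∑ p ∈ range (n-1), (p + 1) = n.choose 2 := by
  rcases n with _ | m
  · simp
  · have h1 : ∑ p ∈ range (m + 1 - 1), (p + 1) = ∑ i ∈ range (m+1), i := by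
      rw [show m + 1 - 1 = m by omega]
      rw [Finset.sum_range_succ' (fun i => i) m]
      simp
    have h2 : (∑ i ∈ range (m+1), i) * 2 = (m+1) * m := Finset.sum_range_id_mul_two (m+1)
    have h3 : (m+1).choose 2 = (m+1) * m / 2 := by
      rw [Nat.choose_two_right]
      simp
    omega

theorem final (n : ℕ) (hn : 1 ≤ n) (j : ℕ) (hj : j ≤ n.choose 2) :
    ((Invols n).filter (fun σ => majStat n σ = j)).card =
      ((Invols n).filter (fun σ => majStat n σ = n.choose 2 - j)).card := by
  classical
  have fib : ∀ k : ℕ, ((Invols n).filter (fun σ => majStat n σ = k)).card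
      = ∑ T ∈ (range (n-1)).powerset.filter (fun T => ∑ p ∈ T, (p+1) = k), beta n T := by
    intro k
    rw [card_eq_sum_card_fiberwise (f := gapDes n)
      (t := (range (n-1)).powerset.filter (fun T => ∑ p ∈ T, (p+1) = k)) (fun σ hσ => ?_)]
    · apply sum_congr rfl
      intro T hT
      rw [mem_filter, mem_powerset] at hT
      unfold beta
      congr 1
      ext σ
      simp only [mem_filter]
      constructor
      · rintro ⟨⟨h1, _⟩, h3⟩
        exact ⟨h1, h3⟩
      · rintro ⟨h1, h3⟩
        refine ⟨⟨h1, ?_⟩, h3⟩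
        rw [majStat_eq, h3]
        exact hT.2
    · rw [Finset.mem_coe, mem_filter, mem_powerset]
      have h2 := (mem_filter.mp hσ).2
      refine ⟨gapDes_subset_range σ, ?_⟩
      rw [← majStat_eq]
      exact h2
  rw [fib j, fib (n.choose 2 - j)]
  have hmsum : ∀ T : Finset ℕ, T ⊆ range (n-1) →
      (∑ p ∈ T, (p+1)) + ∑ p ∈ range (n-1) \ T, (p+1) = n.choose 2 := by
    intro T hT
    rw [add_comm, Finset.sum_sdiff hT, msum_range]
  apply Finset.sum_bij' (i := fun T _ => range (n-1) \ T) (j := fun T _ => range (n-1) \ T)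
  · -- hi
    intro T hT
    rw [mem_filter, mem_powerset] at hT
    rw [mem_filter, mem_powerset]
    refine ⟨sdiff_subset, ?_⟩
    have := hmsum T hT.1
    omega
  · -- hj
    intro T hT
    rw [mem_filter, mem_powerset] at hT
    rw [mem_filter, mem_powerset]
    refine ⟨sdiff_subset, ?_⟩
    have := hmsum T hT.1
    omega
  · -- left inv
    intro T hT
    rw [mem_filter, mem_powerset] at hT
    exact compl_compl_eq hT.1
  · -- right inv
    intro T hT
    rw [mem_filter, mem_powerset] at hT
    exact compl_compl_eq hT.1
  · -- values
    intro T hT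
    rw [mem_filter, mem_powerset] at hT
    exact beta_compl T hT.1


end MajSym

theorem involution_major_index_polynomial_symmetric (n : ℕ) (hn : 1 ≤ n) (j : ℕ)
    (hj : j ≤ n.choose 2) :
    ((Invols n).filter (fun σ => majStat n σ = j)).card =
      ((Invols n).filter (fun σ => majStat n σ = n.choose 2 - j)).card :=
  MajSym.final n hn j hj
end
end

section
/- For every positive integer n, the joint distribution of descents and major index over involutions is symmetric: for all i, j, the number of involutions σ ∈ I_n with d(σ) = i and maj(σ) = j equals the number of involutions σ ∈ I_n with d(σ) = n−1−i and maj(σ) = C(n,2) − j. -/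
noncomputable section
open Finset

namespace InvSym

/-- number of boundaries ≤ x ; the "block index" of zero-based position x. -/
def blk (S : Finset ℕ) (x : ℕ) : ℕ := (S.filter (· ≤ x)).card

lemma blk_mono (S : Finset ℕ) {x y : ℕ} (h : x ≤ y) : blk S x ≤ blk S y := by
  apply card_le_card
  intro s hs
  simp only [mem_filter] at hs ⊢
  exact ⟨hs.1, hs.2.trans h⟩

lemma blk_sandwich {S : Finset ℕ} {x w y : ℕ} (hxw : x ≤ w) (hwy : w ≤ y)
    (h : blk S x = blk S y) : blk S w = blk S x :=
  le_antisymm (h ▸ blk_mono S hwy) (blk_mono S hxw)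

lemma blk_succ_of_not_mem {S : Finset ℕ} {i : ℕ} (hi : (i+1) ∉ S) :
    blk S (i+1) = blk S i := by
  unfold blk
  congr 1
  ext s
  simp only [mem_filter]
  constructor
  · rintro ⟨hs, hle⟩
    refine ⟨hs, ?_⟩
    rcases Nat.lt_or_ge s (i+1) with h | h
    · omega
    · exact absurd (le_antisymm hle h ▸ hs) hi
  · rintro ⟨hs, hle⟩; exact ⟨hs, by omega⟩

lemma not_mem_of_blk_succ_eq {S : Finset ℕ} {i : ℕ} (h : blk S (i+1) = blk S i) :
    (i+1) ∉ S := by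
  intro hmem
  have hlt : blk S i < blk S (i+1) := by
    apply card_lt_card
    constructor
    · intro s hs
      simp only [mem_filter] at hs ⊢
      exact ⟨hs.1, by omega⟩
    · intro hsub
      have : (i+1) ∈ S.filter (· ≤ i) := hsub (by simp [hmem])
      simp at this
  omega

section Perm
variable {n : ℕ} (S : Finset ℕ) (σ : Equiv.Perm (Fin n))

/-- σ is increasing on each block. -/
def IncOn : Prop := ∀ x y : Fin n, x < y → blk S x.val = blk S y.val → σ x < σ y

/-- σ is decreasing on each block. -/
def DecOn : Prop := ∀ x y : Fin n, x < y → blk S x.val = blk S y.val → σ y < σ x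

variable {S σ}

lemma adj_asc (h : DesSet n σ ⊆ S) {a : ℕ} (ha : a + 1 < n)
    (hblk : blk S a = blk S (a+1)) : σ ⟨a, by omega⟩ < σ ⟨a+1, ha⟩ := by
  have hnotS : (a+1) ∉ S := not_mem_of_blk_succ_eq hblk.symm
  have hnotDes : (a+1) ∉ DesSet n σ := fun hd => hnotS (h hd)
  simp only [DesSet, mem_filter, mem_Icc, not_and, not_lt] at hnotDes
  have hd := hnotDes ⟨by omega, by omega⟩
  rw [permFun, permFun, dif_pos ha, dif_pos (show a + 1 - 1 < n by omega)] at hd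
  have hidx : (⟨a+1-1, by omega⟩ : Fin n) = ⟨a, by omega⟩ := Fin.mk_eq_mk.mpr (by omega)
  rw [hidx] at hd
  have hne : σ ⟨a, by omega⟩ ≠ σ ⟨a+1, ha⟩ := by
    intro he
    have := σ.injective he
    simp [Fin.ext_iff] at this
  rw [Fin.lt_def]
  rcases lt_or_eq_of_le hd with h' | h'
  · exact h'
  · exact absurd (Fin.ext h') hne

lemma adj_desc (h : (Finset.Icc 1 (n-1)) \ S ⊆ DesSet n σ) {a : ℕ} (ha : a + 1 < n)
    (hblk : blk S a = blk S (a+1)) : σ ⟨a+1, ha⟩ < σ ⟨a, by omega⟩ := by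
  have hnotS : (a+1) ∉ S := not_mem_of_blk_succ_eq hblk.symm
  have hDes : (a+1) ∈ DesSet n σ := h (by
    simp only [mem_sdiff, mem_Icc]
    exact ⟨⟨by omega, by omega⟩, hnotS⟩)
  simp only [DesSet, mem_filter] at hDes
  have hd := hDes.2
  rw [permFun, permFun, dif_pos ha, dif_pos (show a + 1 - 1 < n by omega)] at hd
  have hidx : (⟨a+1-1, by omega⟩ : Fin n) = ⟨a, by omega⟩ := Fin.mk_eq_mk.mpr (by omega)
  rw [hidx] at hd
  exact hd

/-- chain the adjacent lemma -/
lemma incOn_of_des_subset (h : DesSet n σ ⊆ S) : IncOn S σ := by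
  have key : ∀ b a : ℕ, ∀ hb : b < n, ∀ hab : a < b, blk S a = blk S b →
      σ ⟨a, by omega⟩ < σ ⟨b, hb⟩ := by
    intro b
    induction b with
    | zero => intro a _ hab _; exact absurd hab (Nat.not_lt_zero a)
    | succ m ih =>
      intro a hb hab hblk
      have hm : m < n := by omega
      have hblk' : blk S m = blk S (m+1) := by
        have h1 : blk S a ≤ blk S m := blk_mono S (by omega)
        have h2 : blk S m ≤ blk S (m+1) := blk_mono S (by omega)
        omega
      rcases Nat.lt_or_ge a m with hlt | hge
      · have hblk2 : blk S a = blk S m := by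
          have h1 : blk S a ≤ blk S m := blk_mono S (by omega)
          have h2 : blk S m ≤ blk S (m+1) := blk_mono S (by omega)
          omega
        exact (ih a hm hlt hblk2).trans (adj_asc h hb hblk')
      · have : a = m := by omega
        subst this
        exact adj_asc h hb hblk'
  intro x y hxy hblk
  have := key y.val x.val y.isLt (by exact hxy) hblk
  simpa using this

lemma decOn_of_des_supset (h : (Finset.Icc 1 (n-1)) \ S ⊆ DesSet n σ) : DecOn S σ := by
  have key : ∀ b a : ℕ, ∀ hb : b < n, ∀ hab : a < b, blk S a = blk S b →
      σ ⟨b, hb⟩ < σ ⟨a, by omega⟩ := by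
    intro b
    induction b with
    | zero => intro a _ hab _; exact absurd hab (Nat.not_lt_zero a)
    | succ m ih =>
      intro a hb hab hblk
      have hm : m < n := by omega
      have hblk' : blk S m = blk S (m+1) := by
        have h1 : blk S a ≤ blk S m := blk_mono S (by omega)
        have h2 : blk S m ≤ blk S (m+1) := blk_mono S (by omega)
        omega
      rcases Nat.lt_or_ge a m with hlt | hge
      · have hblk2 : blk S a = blk S m := by
          have h1 : blk S a ≤ blk S m := blk_mono S (by omega)
          have h2 : blk S m ≤ blk S (m+1) := blk_mono S (by omega)
          omega
        exact (adj_desc h hb hblk').trans (ih a hm hlt hblk2)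
      · have : a = m := by omega
        subst this
        exact adj_desc h hb hblk'
  intro x y hxy hblk
  have := key y.val x.val y.isLt (by exact hxy) hblk
  simpa using this

lemma des_subset_of_incOn (h : IncOn S σ) : DesSet n σ ⊆ S := by
  intro i hi
  simp only [DesSet, mem_filter, mem_Icc] at hi
  obtain ⟨⟨h1, h2⟩, hdes⟩ := hi
  by_contra hnotS
  have hin : i < n := by omega
  have hi1 : i - 1 < n := by omega
  rw [permFun, permFun, dif_pos hin, dif_pos hi1] at hdes
  have hblk : blk S (i-1) = blk S i := by
    have := blk_succ_of_not_mem (show i - 1 + 1 ∉ S by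
      rwa [show i - 1 + 1 = i by omega])
    rw [show i - 1 + 1 = i by omega] at this
    omega
  have := h ⟨i-1, hi1⟩ ⟨i, hin⟩ (by simp [Fin.lt_def]; omega) hblk
  rw [Fin.lt_def] at this
  omega

lemma des_supset_of_decOn (h : DecOn S σ) : (Finset.Icc 1 (n-1)) \ S ⊆ DesSet n σ := by
  intro i hi
  simp only [mem_sdiff, mem_Icc] at hi
  obtain ⟨⟨h1, h2⟩, hnotS⟩ := hi
  have hn : 1 ≤ n := by omega
  have hin : i < n := by omega
  have hi1 : i - 1 < n := by omega
  simp only [DesSet, mem_filter, mem_Icc]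
  refine ⟨⟨h1, h2⟩, ?_⟩
  rw [permFun, permFun, dif_pos hin, dif_pos hi1]
  have hblk : blk S (i-1) = blk S i := by
    have := blk_succ_of_not_mem (show i - 1 + 1 ∉ S by
      rwa [show i - 1 + 1 = i by omega])
    rw [show i - 1 + 1 = i by omega] at this
    omega
  have := h ⟨i-1, hi1⟩ ⟨i, hin⟩ (by simp [Fin.lt_def]; omega) hblk
  rw [Fin.lt_def] at this
  exact this

end Perm

section Refl
variable {n : ℕ}

/-- interval-closed finset -/
def IsIntv (C : Finset (Fin n)) : Prop :=
  ∀ a ∈ C, ∀ c ∈ C, ∀ b : Fin n, a ≤ b → b ≤ c → b ∈ C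

/-- reflection within C (meaningful for x ∈ C, C interval-closed) -/
def reflIn (C : Finset (Fin n)) (hne : C.Nonempty) (x : Fin n) : Fin n :=
  ⟨(C.max' hne).val - (x.val - (C.min' hne).val),
    lt_of_le_of_lt (Nat.sub_le _ _) (C.max' hne).isLt⟩

variable {C : Finset (Fin n)} {hne : C.Nonempty} {x y : Fin n}

lemma reflIn_val (hx : x ∈ C) :
    (reflIn C hne x).val + x.val = (C.min' hne).val + (C.max' hne).val := by
  have h1 : C.min' hne ≤ x := Finset.min'_le C x hx
  have h2 : x ≤ C.max' hne := Finset.le_max' C x hx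
  rw [Fin.le_def] at h1 h2
  simp only [reflIn]
  omega

lemma reflIn_mem (hC : IsIntv C) (hx : x ∈ C) : reflIn C hne x ∈ C := by
  have h1 : C.min' hne ≤ x := Finset.min'_le C x hx
  have h2 : x ≤ C.max' hne := Finset.le_max' C x hx
  rw [Fin.le_def] at h1 h2
  refine hC _ (C.min'_mem hne) _ (C.max'_mem hne) _ ?_ ?_ <;>
    (rw [Fin.le_def]; simp only [reflIn]; omega)

lemma reflIn_reflIn (hC : IsIntv C) (hx : x ∈ C) : reflIn C hne (reflIn C hne x) = x := by
  have ha := reflIn_val (hne := hne) hx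
  have hb := reflIn_val (hne := hne) (reflIn_mem (hne := hne) hC hx)
  apply Fin.ext
  omega

lemma reflIn_anti (hx : x ∈ C) (hy : y ∈ C) (hlt : x < y) :
    reflIn C hne y < reflIn C hne x := by
  have ha := reflIn_val (hne := hne) hx
  have hb := reflIn_val (hne := hne) hy
  rw [Fin.lt_def] at hlt ⊢
  omega

lemma reflIn_congr {C' : Finset (Fin n)} (h : C = C') (hne' : C'.Nonempty) :
    reflIn C hne x = reflIn C' hne' x := by subst h; rfl

end Refl

section Blocks
variable {n : ℕ} {S : Finset ℕ}

def blockOf (S : Finset ℕ) (x : Fin n) : Finset (Fin n) :=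
  univ.filter fun y => blk S y.val = blk S x.val

lemma mem_blockOf {x y : Fin n} : y ∈ blockOf S x ↔ blk S y.val = blk S x.val := by
  simp [blockOf]

lemma blockOf_self (x : Fin n) : x ∈ blockOf S x := mem_blockOf.mpr rfl

lemma blockOf_eq_of_mem {x y : Fin n} (h : y ∈ blockOf S x) : blockOf S y = blockOf S x := by
  rw [mem_blockOf] at h
  ext z
  simp [mem_blockOf, h]

lemma blockOf_intv (x : Fin n) : IsIntv (blockOf S x) := by
  intro a ha c hc b hab hbc
  rw [mem_blockOf] at ha hc ⊢
  rw [Fin.le_def] at hab hbc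
  have h1 := blk_mono S hab
  have h2 := blk_mono S hbc
  omega

lemma lt_of_blk_lt {x y : Fin n} (h : blk S x.val < blk S y.val) : x < y := by
  rcases lt_trichotomy x y with h' | h' | h'
  · exact h'
  · subst h'; omega
  · exact absurd (blk_mono S (Fin.le_def.mp h'.le)) (by omega)

/-- reversal within each block -/
def rho (S : Finset ℕ) (x : Fin n) : Fin n :=
  reflIn (blockOf S x) ⟨x, blockOf_self x⟩ x

lemma rho_mem_block (x : Fin n) : rho S x ∈ blockOf S x :=
  reflIn_mem (blockOf_intv x) (blockOf_self x)

lemma blk_rho (x : Fin n) : blk S (rho S x).val = blk S x.val :=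
  mem_blockOf.mp (rho_mem_block x)

lemma rho_rho (x : Fin n) : rho S (rho S x) = x := by
  have h : rho S (rho S x)
      = reflIn (blockOf S x) ⟨x, blockOf_self x⟩ (rho S x) := by
    unfold rho
    exact reflIn_congr (blockOf_eq_of_mem (rho_mem_block x)) ⟨x, blockOf_self x⟩
  rw [h]
  exact reflIn_reflIn (blockOf_intv x) (blockOf_self x)

lemma rho_anti {x y : Fin n} (hblk : blk S x.val = blk S y.val) (hlt : x < y) :
    rho S y < rho S x := by
  unfold rho
  exact (reflIn_congr (show blockOf S y = blockOf S x by
    ext z; simp [mem_blockOf, hblk]) ⟨y, by rw [mem_blockOf]; omega⟩).trans_lt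
    (reflIn_anti (blockOf_self x) (by rw [mem_blockOf]; omega) hlt)

end Blocks

section Chunks
variable {n : ℕ} {S : Finset ℕ} {σ : Equiv.Perm (Fin n)}

def chunkOf (S : Finset ℕ) (σ : Equiv.Perm (Fin n)) (x : Fin n) : Finset (Fin n) :=
  univ.filter fun y => blk S y.val = blk S x.val ∧ blk S (σ y).val = blk S (σ x).val

lemma mem_chunkOf {x y : Fin n} :
    y ∈ chunkOf S σ x ↔ blk S y.val = blk S x.val ∧ blk S (σ y).val = blk S (σ x).val := by
  simp [chunkOf]

lemma chunkOf_self (x : Fin n) : x ∈ chunkOf S σ x := mem_chunkOf.mpr ⟨rfl, rfl⟩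

lemma chunkOf_eq_of_mem {x y : Fin n} (h : y ∈ chunkOf S σ x) :
    chunkOf S σ y = chunkOf S σ x := by
  rw [mem_chunkOf] at h
  ext z
  simp [mem_chunkOf, h.1, h.2]

lemma sigma_maps_chunk (hσ : ∀ z, σ (σ z) = z) {x y : Fin n} (h : y ∈ chunkOf S σ x) :
    σ y ∈ chunkOf S σ (σ x) := by
  rw [mem_chunkOf] at h ⊢
  rw [hσ, hσ]
  exact ⟨h.2, h.1⟩

/-- inc: blk of image is monotone within a block -/
lemma blkσ_mono (hinc : IncOn S σ) {x y : Fin n} (hxy : x ≤ y)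
    (hblk : blk S x.val = blk S y.val) : blk S (σ x).val ≤ blk S (σ y).val := by
  rcases eq_or_lt_of_le hxy with h | h
  · subst h; rfl
  · exact blk_mono S (Fin.le_def.mp (hinc x y h hblk).le)

lemma blkσ_anti (hdec : DecOn S σ) {x y : Fin n} (hxy : x ≤ y)
    (hblk : blk S x.val = blk S y.val) : blk S (σ y).val ≤ blk S (σ x).val := by
  rcases eq_or_lt_of_le hxy with h | h
  · subst h; rfl
  · exact blk_mono S (Fin.le_def.mp (hdec x y h hblk).le)

lemma chunk_intv_inc (hinc : IncOn S σ) (x : Fin n) : IsIntv (chunkOf S σ x) := by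
  intro a ha c hc b hab hbc
  rw [mem_chunkOf] at ha hc ⊢
  have hblk : blk S b.val = blk S x.val := by
    have h1 := blk_mono S (Fin.le_def.mp hab)
    have h2 := blk_mono S (Fin.le_def.mp hbc)
    omega
  have h1 := blkσ_mono hinc hab (by omega)
  have h2 := blkσ_mono hinc hbc (by omega)
  exact ⟨hblk, by omega⟩

lemma chunk_intv_dec (hdec : DecOn S σ) (x : Fin n) : IsIntv (chunkOf S σ x) := by
  intro a ha c hc b hab hbc
  rw [mem_chunkOf] at ha hc ⊢
  have hblk : blk S b.val = blk S x.val := by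
    have h1 := blk_mono S (Fin.le_def.mp hab)
    have h2 := blk_mono S (Fin.le_def.mp hbc)
    omega
  have h1 := blkσ_anti hdec hab (by omega)
  have h2 := blkσ_anti hdec hbc (by omega)
  exact ⟨hblk, by omega⟩

/-- σ is ≤-monotone on a chunk (inc case) -/
lemma sigma_monoLe_chunk (hinc : IncOn S σ) {x y z : Fin n}
    (hy : y ∈ chunkOf S σ x) (hz : z ∈ chunkOf S σ x) (hyz : y ≤ z) : σ y ≤ σ z := by
  rcases eq_or_lt_of_le hyz with h | h
  · subst h; exact le_refl _
  · rw [mem_chunkOf] at hy hz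
    exact (hinc y z h (by omega)).le

lemma sigma_antiLe_chunk (hdec : DecOn S σ) {x y z : Fin n}
    (hy : y ∈ chunkOf S σ x) (hz : z ∈ chunkOf S σ x) (hyz : y ≤ z) : σ z ≤ σ y := by
  rcases eq_or_lt_of_le hyz with h | h
  · subst h; exact le_refl _
  · rw [mem_chunkOf] at hy hz
    exact (hdec y z h (by omega)).le

lemma sigma_maps_chunk' (hσ : ∀ z, σ (σ z) = z) {x z : Fin n}
    (h : z ∈ chunkOf S σ (σ x)) : σ z ∈ chunkOf S σ x := by
  have := sigma_maps_chunk hσ h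
  rwa [hσ] at this

section Shift

def CcNe (S : Finset ℕ) (σ : Equiv.Perm (Fin n)) (x : Fin n) : (chunkOf S σ x).Nonempty :=
  ⟨x, chunkOf_self x⟩

lemma sigma_min_inc (hσ : ∀ z, σ (σ z) = z) (x : Fin n) (hinc : IncOn S σ) :
    σ ((chunkOf S σ x).min' (CcNe S σ x)) = (chunkOf S σ (σ x)).min' (CcNe S σ (σ x)) := by
  have h1 : σ ((chunkOf S σ x).min' (CcNe S σ x)) ∈ chunkOf S σ (σ x) :=
    sigma_maps_chunk hσ (Finset.min'_mem _ (CcNe S σ x))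
  have h2 : σ ((chunkOf S σ (σ x)).min' (CcNe S σ (σ x))) ∈ chunkOf S σ x :=
    sigma_maps_chunk' hσ (Finset.min'_mem _ (CcNe S σ (σ x)))
  refine le_antisymm ?_ (Finset.min'_le _ _ h1)
  have h3 : (chunkOf S σ x).min' (CcNe S σ x) ≤ σ ((chunkOf S σ (σ x)).min' (CcNe S σ (σ x))) :=
    Finset.min'_le _ _ h2
  have h4 := sigma_monoLe_chunk hinc (Finset.min'_mem _ (CcNe S σ x)) h2 h3
  rwa [hσ] at h4

lemma sigma_max_inc (hσ : ∀ z, σ (σ z) = z) (x : Fin n) (hinc : IncOn S σ) :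
    σ ((chunkOf S σ x).max' (CcNe S σ x)) = (chunkOf S σ (σ x)).max' (CcNe S σ (σ x)) := by
  have h1 : σ ((chunkOf S σ x).max' (CcNe S σ x)) ∈ chunkOf S σ (σ x) :=
    sigma_maps_chunk hσ (Finset.max'_mem _ (CcNe S σ x))
  have h2 : σ ((chunkOf S σ (σ x)).max' (CcNe S σ (σ x))) ∈ chunkOf S σ x :=
    sigma_maps_chunk' hσ (Finset.max'_mem _ (CcNe S σ (σ x)))
  refine le_antisymm (Finset.le_max' _ _ h1) ?_
  have h3 : σ ((chunkOf S σ (σ x)).max' (CcNe S σ (σ x))) ≤ (chunkOf S σ x).max' (CcNe S σ x) :=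
    Finset.le_max' _ _ h2
  have h4 := sigma_monoLe_chunk hinc h2 (Finset.max'_mem _ (CcNe S σ x)) h3
  rwa [hσ] at h4

lemma sigma_min_dec (hσ : ∀ z, σ (σ z) = z) (x : Fin n) (hdec : DecOn S σ) :
    σ ((chunkOf S σ x).min' (CcNe S σ x)) = (chunkOf S σ (σ x)).max' (CcNe S σ (σ x)) := by
  have h1 : σ ((chunkOf S σ x).min' (CcNe S σ x)) ∈ chunkOf S σ (σ x) :=
    sigma_maps_chunk hσ (Finset.min'_mem _ (CcNe S σ x))
  have h2 : σ ((chunkOf S σ (σ x)).max' (CcNe S σ (σ x))) ∈ chunkOf S σ x :=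
    sigma_maps_chunk' hσ (Finset.max'_mem _ (CcNe S σ (σ x)))
  refine le_antisymm (Finset.le_max' _ _ h1) ?_
  have h3 : (chunkOf S σ x).min' (CcNe S σ x) ≤ σ ((chunkOf S σ (σ x)).max' (CcNe S σ (σ x))) :=
    Finset.min'_le _ _ h2
  have h4 := sigma_antiLe_chunk hdec (Finset.min'_mem _ (CcNe S σ x)) h2 h3
  rwa [hσ] at h4

lemma sigma_max_dec (hσ : ∀ z, σ (σ z) = z) (x : Fin n) (hdec : DecOn S σ) :
    σ ((chunkOf S σ x).max' (CcNe S σ x)) = (chunkOf S σ (σ x)).min' (CcNe S σ (σ x)) := by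
  have h1 : σ ((chunkOf S σ x).max' (CcNe S σ x)) ∈ chunkOf S σ (σ x) :=
    sigma_maps_chunk hσ (Finset.max'_mem _ (CcNe S σ x))
  have h2 : σ ((chunkOf S σ (σ x)).min' (CcNe S σ (σ x))) ∈ chunkOf S σ x :=
    sigma_maps_chunk' hσ (Finset.min'_mem _ (CcNe S σ (σ x)))
  refine le_antisymm ?_ (Finset.min'_le _ _ h1)
  have h3 : σ ((chunkOf S σ (σ x)).min' (CcNe S σ (σ x))) ≤ (chunkOf S σ x).max' (CcNe S σ x) :=
    Finset.le_max' _ _ h2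
  have h4 := sigma_antiLe_chunk hdec h2 (Finset.max'_mem _ (CcNe S σ x)) h3
  rwa [hσ] at h4

lemma shift_inc (hσ : ∀ z, σ (σ z) = z) (x : Fin n) (hinc : IncOn S σ) :
    ∀ y ∈ chunkOf S σ x,
      (σ y).val + ((chunkOf S σ x).min' (CcNe S σ x)).val
        = ((chunkOf S σ (σ x)).min' (CcNe S σ (σ x))).val + y.val := by
  have key : ∀ k : ℕ, ∀ y ∈ chunkOf S σ x,
      y.val = ((chunkOf S σ x).min' (CcNe S σ x)).val + k →
      (σ y).val = ((chunkOf S σ (σ x)).min' (CcNe S σ (σ x))).val + k := by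
    intro k
    induction k with
    | zero =>
      intro y hy hyval
      have hmv : y = (chunkOf S σ x).min' (CcNe S σ x) := Fin.ext (by omega)
      subst hmv
      rw [sigma_min_inc hσ x hinc]
      omega
    | succ k ih =>
      intro y hy hyval
      have hpn : ((chunkOf S σ x).min' (CcNe S σ x)).val + k < n := by
        have := y.isLt; omega
      have hpC : (⟨((chunkOf S σ x).min' (CcNe S σ x)).val + k, hpn⟩ : Fin n) ∈ chunkOf S σ x := by
        apply chunk_intv_inc hinc x _ (Finset.min'_mem _ (CcNe S σ x)) _ hy
        · rw [Fin.le_def]; simp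
        · rw [Fin.le_def]; simp; omega
      set p : Fin n := ⟨((chunkOf S σ x).min' (CcNe S σ x)).val + k, hpn⟩ with hp
      have hIH := ih p hpC (by simp [hp])
      have hlt : σ p < σ y := by
        rw [mem_chunkOf] at hpC hy
        exact hinc p y (by rw [Fin.lt_def]; simp [hp]; omega) (by omega)
      rw [Fin.lt_def] at hlt
      have hge : (σ y).val ≥ ((chunkOf S σ (σ x)).min' (CcNe S σ (σ x))).val + (k + 1) := by omega
      by_contra hne
      have hgt : (σ y).val > ((chunkOf S σ (σ x)).min' (CcNe S σ (σ x))).val + (k + 1) := by omega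
      have hen : ((chunkOf S σ (σ x)).min' (CcNe S σ (σ x))).val + (k + 1) < n := by
        have := (σ y).isLt; omega
      have heD : (⟨((chunkOf S σ (σ x)).min' (CcNe S σ (σ x))).val + (k+1), hen⟩ : Fin n)
          ∈ chunkOf S σ (σ x) := by
        apply chunk_intv_inc hinc (σ x) _ (Finset.min'_mem _ (CcNe S σ (σ x))) _
          (sigma_maps_chunk hσ hy)
        · rw [Fin.le_def]; simp
        · rw [Fin.le_def]; simp; omega
      set e : Fin n := ⟨((chunkOf S σ (σ x)).min' (CcNe S σ (σ x))).val + (k+1), hen⟩ with he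
      have hseC : σ e ∈ chunkOf S σ x := sigma_maps_chunk' hσ heD
      rcases lt_trichotomy (σ e) y with h' | h' | h'
      · have h1 : σ e ≤ p := by
          rw [Fin.le_def]; rw [Fin.lt_def] at h'; simp [hp]; omega
        have h2 := sigma_monoLe_chunk hinc hseC hpC h1
        rw [hσ] at h2
        rw [Fin.le_def] at h2
        simp [he] at h2
        omega
      · have hye : σ y = e := by rw [← h']; exact hσ e
        rw [hye] at hgt
        simp [he] at hgt
      · rw [mem_chunkOf] at hseC
        rw [mem_chunkOf] at hy
        have h2 := hinc y (σ e) h' (by omega)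
        rw [hσ] at h2
        rw [Fin.lt_def] at h2
        simp [he] at h2
        omega
  intro y hy
  have h1 : (chunkOf S σ x).min' (CcNe S σ x) ≤ y := Finset.min'_le _ _ hy
  rw [Fin.le_def] at h1
  have := key (y.val - ((chunkOf S σ x).min' (CcNe S σ x)).val) y hy (by omega)
  omega

lemma shift_dec (hσ : ∀ z, σ (σ z) = z) (x : Fin n) (hdec : DecOn S σ) :
    ∀ y ∈ chunkOf S σ x,
      (σ y).val + y.val
        = ((chunkOf S σ (σ x)).max' (CcNe S σ (σ x))).val
          + ((chunkOf S σ x).min' (CcNe S σ x)).val := by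
  have key : ∀ k : ℕ, ∀ y ∈ chunkOf S σ x,
      y.val = ((chunkOf S σ x).min' (CcNe S σ x)).val + k →
      (σ y).val + k = ((chunkOf S σ (σ x)).max' (CcNe S σ (σ x))).val := by
    intro k
    induction k with
    | zero =>
      intro y hy hyval
      have hmv : y = (chunkOf S σ x).min' (CcNe S σ x) := Fin.ext (by omega)
      subst hmv
      rw [sigma_min_dec hσ x hdec]
      omega
    | succ k ih =>
      intro y hy hyval
      have hpn : ((chunkOf S σ x).min' (CcNe S σ x)).val + k < n := by
        have := y.isLt; omega
      have hpC : (⟨((chunkOf S σ x).min' (CcNe S σ x)).val + k, hpn⟩ : Fin n) ∈ chunkOf S σ x := by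
        apply chunk_intv_dec hdec x _ (Finset.min'_mem _ (CcNe S σ x)) _ hy
        · rw [Fin.le_def]; simp
        · rw [Fin.le_def]; simp; omega
      set p : Fin n := ⟨((chunkOf S σ x).min' (CcNe S σ x)).val + k, hpn⟩ with hp
      have hIH := ih p hpC (by simp [hp])
      have hlt : σ y < σ p := by
        rw [mem_chunkOf] at hpC hy
        exact hdec p y (by rw [Fin.lt_def]; simp [hp]; omega) (by omega)
      rw [Fin.lt_def] at hlt
      have hle : (σ y).val + (k+1) ≤ ((chunkOf S σ (σ x)).max' (CcNe S σ (σ x))).val := by omega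
      by_contra hne
      have hgt : (σ y).val + (k + 1) < ((chunkOf S σ (σ x)).max' (CcNe S σ (σ x))).val := by omega
      have hen : (σ p).val - 1 < n := by have := (σ p).isLt; omega
      have heD : (⟨(σ p).val - 1, hen⟩ : Fin n) ∈ chunkOf S σ (σ x) := by
        apply chunk_intv_dec hdec (σ x) _ (sigma_maps_chunk hσ hy) _
          (Finset.max'_mem _ (CcNe S σ (σ x)))
        · rw [Fin.le_def]; simp; omega
        · rw [Fin.le_def]; simp
          have hm : σ p ≤ (chunkOf S σ (σ x)).max' (CcNe S σ (σ x)) :=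
            Finset.le_max' _ _ (sigma_maps_chunk hσ hpC)
          rw [Fin.le_def] at hm
          omega
      set e : Fin n := ⟨(σ p).val - 1, hen⟩ with he
      have hseC : σ e ∈ chunkOf S σ x := sigma_maps_chunk' hσ heD
      rcases lt_trichotomy (σ e) y with h' | h' | h'
      · have h1 : σ e ≤ p := by
          rw [Fin.le_def]; rw [Fin.lt_def] at h'; simp [hp]; omega
        have h2 := sigma_antiLe_chunk hdec hseC hpC h1
        rw [hσ] at h2
        rw [Fin.le_def] at h2
        simp [he] at h2
        omega
      · have hye : σ y = e := by rw [← h']; exact hσ e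
        rw [hye] at hgt
        simp [he] at hgt
        omega
      · rw [mem_chunkOf] at hseC
        rw [mem_chunkOf] at hy
        have h2 := hdec y (σ e) h' (by omega)
        rw [hσ] at h2
        rw [Fin.lt_def] at h2
        simp [he] at h2
        omega
  intro y hy
  have h1 : (chunkOf S σ x).min' (CcNe S σ x) ≤ y := Finset.min'_le _ _ hy
  rw [Fin.le_def] at h1
  have := key (y.val - ((chunkOf S σ x).min' (CcNe S σ x)).val) y hy (by omega)
  omega

end Shift

section Psi

/-- reversal within each chunk -/
def rsig (S : Finset ℕ) (σ : Equiv.Perm (Fin n)) (x : Fin n) : Fin n :=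
  reflIn (chunkOf S σ x) (CcNe S σ x) x

/-- the key bijection -/
def Psi (S : Finset ℕ) (σ : Equiv.Perm (Fin n)) (x : Fin n) : Fin n :=
  rho S (σ (rsig S σ (rho S x)))

lemma rsig_mem (hi : ∀ w : Fin n, IsIntv (chunkOf S σ w)) (x : Fin n) : rsig S σ x ∈ chunkOf S σ x :=
  reflIn_mem (hi x) (chunkOf_self x)

lemma blk_rsig (hi : ∀ w : Fin n, IsIntv (chunkOf S σ w)) (x : Fin n) : blk S (rsig S σ x).val = blk S x.val :=
  (mem_chunkOf.mp (rsig_mem hi x)).1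

lemma blkσ_rsig (hi : ∀ w : Fin n, IsIntv (chunkOf S σ w)) (x : Fin n) : blk S (σ (rsig S σ x)).val = blk S (σ x).val :=
  (mem_chunkOf.mp (rsig_mem hi x)).2

lemma rsig_rsig (hi : ∀ w : Fin n, IsIntv (chunkOf S σ w)) (x : Fin n) : rsig S σ (rsig S σ x) = x := by
  have h : rsig S σ (rsig S σ x)
      = reflIn (chunkOf S σ x) (CcNe S σ x) (rsig S σ x) := by
    unfold rsig
    exact reflIn_congr (chunkOf_eq_of_mem (rsig_mem hi x)) (CcNe S σ x)
  rw [h]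
  exact reflIn_reflIn (hi x) (chunkOf_self x)

/-- key: σ intertwines chunk reflections (inc case) -/
lemma sigma_reflIn_inc (hσ : ∀ z, σ (σ z) = z) (hinc : IncOn S σ) {x y : Fin n}
    (hy : y ∈ chunkOf S σ x) :
    σ (reflIn (chunkOf S σ x) (CcNe S σ x) y)
      = reflIn (chunkOf S σ (σ x)) (CcNe S σ (σ x)) (σ y) := by
  have hi' := fun w => chunk_intv_inc (σ := σ) hinc w
  have hry : reflIn (chunkOf S σ x) (CcNe S σ x) y ∈ chunkOf S σ x := reflIn_mem (hi' x) hy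
  have e1 := reflIn_val (hne := CcNe S σ x) hy
  have e2 := shift_inc hσ x hinc _ hry
  have e3 := shift_inc hσ x hinc _ hy
  have e4 := reflIn_val (hne := CcNe S σ (σ x)) (sigma_maps_chunk hσ hy)
  have e5 := shift_inc hσ x hinc _ (Finset.max'_mem _ (CcNe S σ x))
  have e6 : σ ((chunkOf S σ x).max' (CcNe S σ x))
      = (chunkOf S σ (σ x)).max' (CcNe S σ (σ x)) := sigma_max_inc hσ x hinc
  rw [e6] at e5
  exact Fin.ext (by omega)

lemma sigma_reflIn_dec (hσ : ∀ z, σ (σ z) = z) (hdec : DecOn S σ) {x y : Fin n}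
    (hy : y ∈ chunkOf S σ x) :
    σ (reflIn (chunkOf S σ x) (CcNe S σ x) y)
      = reflIn (chunkOf S σ (σ x)) (CcNe S σ (σ x)) (σ y) := by
  have hi' := fun w => chunk_intv_dec (σ := σ) hdec w
  have hry : reflIn (chunkOf S σ x) (CcNe S σ x) y ∈ chunkOf S σ x := reflIn_mem (hi' x) hy
  have e1 := reflIn_val (hne := CcNe S σ x) hy
  have e2 := shift_dec hσ x hdec _ hry
  have e3 := shift_dec hσ x hdec _ hy
  have e4 := reflIn_val (hne := CcNe S σ (σ x)) (sigma_maps_chunk hσ hy)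
  have e5 := shift_dec hσ x hdec _ (Finset.max'_mem _ (CcNe S σ x))
  have e6 : σ ((chunkOf S σ x).max' (CcNe S σ x))
      = (chunkOf S σ (σ x)).min' (CcNe S σ (σ x)) := sigma_max_dec hσ x hdec
  rw [e6] at e5
  exact Fin.ext (by omega)

/-- consequence : rsig (σ (rsig a)) = σ a (both inc and dec versions) -/
lemma rsig_sigma_rsig_inc (hσ : ∀ z, σ (σ z) = z) (hinc : IncOn S σ) (a : Fin n) :
    rsig S σ (σ (rsig S σ a)) = σ a := by
  have hi' := fun w => chunk_intv_inc (σ := σ) hinc w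
  have h1 : σ (rsig S σ a) ∈ chunkOf S σ (σ a) := sigma_maps_chunk hσ (rsig_mem hi' a)
  have h2 : rsig S σ (σ (rsig S σ a))
      = reflIn (chunkOf S σ (σ a)) (CcNe S σ (σ a)) (σ (rsig S σ a)) := by
    unfold rsig
    exact reflIn_congr (chunkOf_eq_of_mem h1) (CcNe S σ (σ a))
  rw [h2, ← sigma_reflIn_inc hσ hinc (rsig_mem hi' a)]
  unfold rsig
  rw [reflIn_reflIn (hi' a) (chunkOf_self a)]

lemma rsig_sigma_rsig_dec (hσ : ∀ z, σ (σ z) = z) (hdec : DecOn S σ) (a : Fin n) :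
    rsig S σ (σ (rsig S σ a)) = σ a := by
  have hi' := fun w => chunk_intv_dec (σ := σ) hdec w
  have h1 : σ (rsig S σ a) ∈ chunkOf S σ (σ a) := sigma_maps_chunk hσ (rsig_mem hi' a)
  have h2 : rsig S σ (σ (rsig S σ a))
      = reflIn (chunkOf S σ (σ a)) (CcNe S σ (σ a)) (σ (rsig S σ a)) := by
    unfold rsig
    exact reflIn_congr (chunkOf_eq_of_mem h1) (CcNe S σ (σ a))
  rw [h2, ← sigma_reflIn_dec hσ hdec (rsig_mem hi' a)]
  unfold rsig
  rw [reflIn_reflIn (hi' a) (chunkOf_self a)]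

lemma psi_invol_inc (hσ : ∀ z, σ (σ z) = z) (hinc : IncOn S σ) (x : Fin n) :
    Psi S σ (Psi S σ x) = x := by
  unfold Psi
  rw [rho_rho, rsig_sigma_rsig_inc hσ hinc, hσ, rho_rho]

lemma psi_invol_dec (hσ : ∀ z, σ (σ z) = z) (hdec : DecOn S σ) (x : Fin n) :
    Psi S σ (Psi S σ x) = x := by
  unfold Psi
  rw [rho_rho, rsig_sigma_rsig_dec hσ hdec, hσ, rho_rho]

lemma psi_flip_inc (hσ : ∀ z, σ (σ z) = z) (hinc : IncOn S σ) {x y : Fin n}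
    (hxy : x < y) (hblk : blk S x.val = blk S y.val) : Psi S σ y < Psi S σ x := by
  have hi' := fun w => chunk_intv_inc (σ := σ) hinc w
  set a := rho S y with ha
  set b := rho S x with hb
  have hab : a < b := rho_anti hblk hxy
  have hblkab : blk S a.val = blk S b.val := by
    rw [ha, hb, blk_rho, blk_rho]; exact hblk.symm
  have hmema := rsig_mem hi' a
  have hmemb := rsig_mem hi' b
  rw [mem_chunkOf] at hmema hmemb
  by_cases hcase : blk S (σ a).val = blk S (σ b).val
  · -- same chunk
    have hbmem : b ∈ chunkOf S σ a := mem_chunkOf.mpr ⟨hblkab.symm, hcase.symm⟩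
    have hrb : rsig S σ b = reflIn (chunkOf S σ a) (CcNe S σ a) b := by
      unfold rsig
      exact reflIn_congr (chunkOf_eq_of_mem hbmem) (CcNe S σ a)
    have hlt : reflIn (chunkOf S σ a) (CcNe S σ a) b
        < reflIn (chunkOf S σ a) (CcNe S σ a) a :=
      reflIn_anti (chunkOf_self a) hbmem hab
    rw [← hrb] at hlt
    have hblk2 : blk S (rsig S σ b).val = blk S (rsig S σ a).val := by omega
    have hslt : σ (rsig S σ b) < σ (rsig S σ a) := hinc _ _ hlt hblk2
    have hblk3 : blk S (σ (rsig S σ b)).val = blk S (σ (rsig S σ a)).val := by omega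
    unfold Psi
    rw [← ha, ← hb]
    exact rho_anti hblk3 hslt
  · -- different chunks
    have hle : blk S (σ a).val ≤ blk S (σ b).val := blkσ_mono hinc hab.le hblkab
    have hlt : blk S (σ a).val < blk S (σ b).val := lt_of_le_of_ne hle hcase
    apply lt_of_blk_lt
    unfold Psi
    rw [← ha, ← hb, blk_rho, blk_rho]
    omega

lemma psi_flip_dec (hσ : ∀ z, σ (σ z) = z) (hdec : DecOn S σ) {x y : Fin n}
    (hxy : x < y) (hblk : blk S x.val = blk S y.val) : Psi S σ x < Psi S σ y := by
  have hi' := fun w => chunk_intv_dec (σ := σ) hdec w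
  set a := rho S y with ha
  set b := rho S x with hb
  have hab : a < b := rho_anti hblk hxy
  have hblkab : blk S a.val = blk S b.val := by
    rw [ha, hb, blk_rho, blk_rho]; exact hblk.symm
  have hmema := rsig_mem hi' a
  have hmemb := rsig_mem hi' b
  rw [mem_chunkOf] at hmema hmemb
  by_cases hcase : blk S (σ a).val = blk S (σ b).val
  · have hbmem : b ∈ chunkOf S σ a := mem_chunkOf.mpr ⟨hblkab.symm, hcase.symm⟩
    have hrb : rsig S σ b = reflIn (chunkOf S σ a) (CcNe S σ a) b := by
      unfold rsig
      exact reflIn_congr (chunkOf_eq_of_mem hbmem) (CcNe S σ a)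
    have hlt : reflIn (chunkOf S σ a) (CcNe S σ a) b
        < reflIn (chunkOf S σ a) (CcNe S σ a) a :=
      reflIn_anti (chunkOf_self a) hbmem hab
    rw [← hrb] at hlt
    have hblk2 : blk S (rsig S σ b).val = blk S (rsig S σ a).val := by omega
    have hslt : σ (rsig S σ a) < σ (rsig S σ b) := hdec _ _ hlt hblk2
    have hblk3 : blk S (σ (rsig S σ a)).val = blk S (σ (rsig S σ b)).val := by omega
    unfold Psi
    rw [← ha, ← hb]
    exact rho_anti hblk3 hslt
  · have hle : blk S (σ b).val ≤ blk S (σ a).val := blkσ_anti hdec hab.le hblkab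
    have hlt : blk S (σ b).val < blk S (σ a).val := lt_of_le_of_ne hle (fun h => hcase h.symm)
    apply lt_of_blk_lt
    unfold Psi
    rw [← ha, ← hb, blk_rho, blk_rho]
    omega

lemma rho_antiLe {x y : Fin n} (hblk : blk S x.val = blk S y.val) (hle : x ≤ y) :
    rho S y ≤ rho S x := by
  rcases eq_or_lt_of_le hle with h | h
  · subst h; exact le_refl _
  · exact (rho_anti hblk h).le

lemma min'_congr {A B : Finset (Fin n)} (h : A = B) (hA : A.Nonempty) (hB : B.Nonempty) :
    A.min' hA = B.min' hB := by subst h; rfl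

lemma max'_congr {A B : Finset (Fin n)} (h : A = B) (hA : A.Nonempty) (hB : B.Nonempty) :
    A.max' hA = B.max' hB := by subst h; rfl

lemma chunk_tau (hi : ∀ w : Fin n, IsIntv (chunkOf S σ w)) (τ : Equiv.Perm (Fin n))
    (hτ : ∀ z, τ z = Psi S σ z) (z : Fin n) :
    chunkOf S τ z = (chunkOf S σ (rho S z)).image (rho S) := by
  have hb : ∀ u : Fin n, blk S (τ u).val = blk S (σ (rho S u)).val := by
    intro u
    rw [hτ]
    show blk S (rho S (σ (rsig S σ (rho S u)))).val = _
    rw [blk_rho]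
    exact blkσ_rsig hi (rho S u)
  ext w
  simp only [mem_chunkOf, Finset.mem_image]
  constructor
  · rintro ⟨h1, h2⟩
    refine ⟨rho S w, ⟨?_, ?_⟩, rho_rho w⟩
    · rw [blk_rho, blk_rho]; exact h1
    · rw [hb w, hb z] at h2; exact h2
  · rintro ⟨u, hu, huw⟩
    subst huw
    constructor
    · rw [blk_rho, hu.1, blk_rho]
    · rw [hb, hb, rho_rho]; exact hu.2

lemma image_rho_min (C : Finset (Fin n)) (hC : C.Nonempty) (a : Fin n)
    (hblk : ∀ u ∈ C, blk S u.val = blk S a.val) :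
    (C.image (rho S)).min' (hC.image _) = rho S (C.max' hC) := by
  apply le_antisymm
  · exact Finset.min'_le _ _ (Finset.mem_image_of_mem _ (Finset.max'_mem C hC))
  · obtain ⟨u, hu, huv⟩ := Finset.mem_image.mp (Finset.min'_mem _ (hC.image (rho S)))
    rw [← huv]
    refine rho_antiLe ?_ (Finset.le_max' C u hu)
    rw [hblk u hu, hblk _ (Finset.max'_mem C hC)]

lemma image_rho_max (C : Finset (Fin n)) (hC : C.Nonempty) (a : Fin n)
    (hblk : ∀ u ∈ C, blk S u.val = blk S a.val) :
    (C.image (rho S)).max' (hC.image _) = rho S (C.min' hC) := by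
  apply le_antisymm
  · obtain ⟨u, hu, huv⟩ := Finset.mem_image.mp (Finset.max'_mem _ (hC.image (rho S)))
    rw [← huv]
    refine rho_antiLe ?_ (Finset.min'_le C u hu)
    rw [hblk u hu, hblk _ (Finset.min'_mem C hC)]
  · exact Finset.le_max' _ _ (Finset.mem_image_of_mem _ (Finset.min'_mem C hC))

/-- value of rho computed against the block of an anchor z -/
lemma rho_val_of_blk {u z : Fin n} (h : blk S u.val = blk S z.val) :
    (rho S u).val + u.val
      = ((blockOf S z).min' ⟨z, blockOf_self z⟩).val
        + ((blockOf S z).max' ⟨z, blockOf_self z⟩).val := by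
  have hbl : blockOf S u = blockOf S z := by
    ext w; simp [mem_blockOf, h]
  have h1 : rho S u = reflIn (blockOf S z) ⟨z, blockOf_self z⟩ u := by
    unfold rho
    exact reflIn_congr hbl ⟨z, blockOf_self z⟩
  rw [h1]
  exact reflIn_val (mem_blockOf.mpr h)

lemma rsig_tau (hi : ∀ w : Fin n, IsIntv (chunkOf S σ w)) (τ : Equiv.Perm (Fin n))
    (hτ : ∀ z, τ z = Psi S σ z) (z : Fin n) :
    rsig S τ z = rho S (rsig S σ (rho S z)) := by
  have hct := chunk_tau hi τ hτ z
  have hC'ne : (chunkOf S σ (rho S z)).Nonempty := CcNe S σ (rho S z)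
  have hmin : (chunkOf S τ z).min' (CcNe S τ z)
      = rho S ((chunkOf S σ (rho S z)).max' hC'ne) := by
    rw [min'_congr hct (CcNe S τ z) (hC'ne.image _)]
    exact image_rho_min _ hC'ne (rho S z) (fun u hu => (mem_chunkOf.mp hu).1)
  have hmax : (chunkOf S τ z).max' (CcNe S τ z)
      = rho S ((chunkOf S σ (rho S z)).min' hC'ne) := by
    rw [max'_congr hct (CcNe S τ z) (hC'ne.image _)]
    exact image_rho_max _ hC'ne (rho S z) (fun u hu => (mem_chunkOf.mp hu).1)
  -- numeric facts
  have f1 : (rsig S τ z).val + z.val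
      = ((chunkOf S τ z).min' (CcNe S τ z)).val + ((chunkOf S τ z).max' (CcNe S τ z)).val :=
    reflIn_val (chunkOf_self z)
  have f2 : (rsig S σ (rho S z)).val + (rho S z).val
      = ((chunkOf S σ (rho S z)).min' hC'ne).val
        + ((chunkOf S σ (rho S z)).max' hC'ne).val :=
    reflIn_val (chunkOf_self (rho S z))
  have hblkz : blk S (rho S z).val = blk S z.val := blk_rho z
  have g1 := rho_val_of_blk (z := z) (u := (chunkOf S σ (rho S z)).max' hC'ne)
    (by rw [(mem_chunkOf.mp (Finset.max'_mem _ hC'ne)).1, hblkz])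
  have g2 := rho_val_of_blk (z := z) (u := (chunkOf S σ (rho S z)).min' hC'ne)
    (by rw [(mem_chunkOf.mp (Finset.min'_mem _ hC'ne)).1, hblkz])
  have g3 := rho_val_of_blk (z := z) (u := rsig S σ (rho S z))
    (by rw [blk_rsig hi (rho S z), hblkz])
  have g4 := rho_val_of_blk (S := S) (z := z) (u := z) rfl
  rw [hmin, hmax] at f1
  apply Fin.ext
  omega

lemma psi_op (hi : ∀ w : Fin n, IsIntv (chunkOf S σ w)) (τ : Equiv.Perm (Fin n))
    (hτ : ∀ z, τ z = Psi S σ z) (x : Fin n) : Psi S τ x = σ x := by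
  show rho S (τ (rsig S τ (rho S x))) = σ x
  rw [rsig_tau hi τ hτ (rho S x), rho_rho, hτ]
  show rho S (rho S (σ (rsig S σ (rho S (rho S (rsig S σ x)))))) = σ x
  rw [rho_rho (rsig S σ x), rsig_rsig hi, rho_rho]

end Psi
end Chunks

section Main
variable {n : ℕ}

lemma invol_of_mem {σ : Equiv.Perm (Fin n)} (h : σ ∈ Invols n) : ∀ x, σ (σ x) = x := by
  simp only [Invols, mem_filter, mem_univ, true_and] at h
  intro x
  have := congrArg (fun (p : Equiv.Perm (Fin n)) => p x) h
  simpa [Equiv.Perm.mul_apply] using this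

lemma mem_invols_of {σ : Equiv.Perm (Fin n)} (h : ∀ x, σ (σ x) = x) : σ ∈ Invols n := by
  simp only [Invols, mem_filter, mem_univ, true_and]
  ext x
  rw [Equiv.Perm.mul_apply, h, Equiv.Perm.one_apply]

lemma main_card (n : ℕ) (S : Finset ℕ) :
    ((Invols n).filter (fun σ => DesSet n σ ⊆ S)).card
      = ((Invols n).filter (fun σ => (Finset.Icc 1 (n-1)) \ S ⊆ DesSet n σ)).card := by
  refine Finset.card_bij'
    (fun σ hσ => Function.Involutive.toPerm (Psi S σ)
      (psi_invol_inc (invol_of_mem (Finset.mem_filter.mp hσ).1)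
        (incOn_of_des_subset (Finset.mem_filter.mp hσ).2)))
    (fun τ hτ => Function.Involutive.toPerm (Psi S τ)
      (psi_invol_dec (invol_of_mem (Finset.mem_filter.mp hτ).1)
        (decOn_of_des_supset (Finset.mem_filter.mp hτ).2)))
    ?_ ?_ ?_ ?_
  · intro σ hσ
    have h1 := invol_of_mem (Finset.mem_filter.mp hσ).1
    have hinc := incOn_of_des_subset (Finset.mem_filter.mp hσ).2
    rw [Finset.mem_filter]
    constructor
    · apply mem_invols_of
      intro x
      show Psi S σ (Psi S σ x) = x
      exact psi_invol_inc h1 hinc x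
    · apply des_supset_of_decOn
      intro x y hxy hblk
      show Psi S σ y < Psi S σ x
      exact psi_flip_inc h1 hinc hxy hblk
  · intro τ hτ
    have h1 := invol_of_mem (Finset.mem_filter.mp hτ).1
    have hdec := decOn_of_des_supset (Finset.mem_filter.mp hτ).2
    rw [Finset.mem_filter]
    constructor
    · apply mem_invols_of
      intro x
      show Psi S τ (Psi S τ x) = x
      exact psi_invol_dec h1 hdec x
    · apply des_subset_of_incOn
      intro x y hxy hblk
      show Psi S τ x < Psi S τ y
      exact psi_flip_dec h1 hdec hxy hblk
  · intro σ hσ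
    have h1 := invol_of_mem (Finset.mem_filter.mp hσ).1
    have hinc := incOn_of_des_subset (Finset.mem_filter.mp hσ).2
    apply Equiv.ext
    intro x
    show Psi S _ x = _
    exact psi_op (fun w => chunk_intv_inc hinc w) _
      (fun z => rfl) x
  · intro τ hτ
    have h1 := invol_of_mem (Finset.mem_filter.mp hτ).1
    have hdec := decOn_of_des_supset (Finset.mem_filter.mp hτ).2
    apply Equiv.ext
    intro x
    show Psi S _ x = _
    exact psi_op (fun w => chunk_intv_dec hdec w) _
      (fun z => rfl) x

end Main

section Counting
variable {n : ℕ}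

/-- number of involutions with descent set exactly T -/
def bEx (n : ℕ) (T : Finset ℕ) : ℕ :=
  ((Invols n).filter (fun σ => DesSet n σ = T)).card

lemma desSet_subset_Icc (σ : Equiv.Perm (Fin n)) : DesSet n σ ⊆ Finset.Icc 1 (n-1) :=
  Finset.filter_subset _ _

lemma partition_count (n : ℕ) (pred : Finset ℕ → Prop) [DecidablePred pred] :
    ((Invols n).filter (fun σ => pred (DesSet n σ))).card
      = ∑ T ∈ (Finset.Icc 1 (n-1)).powerset.filter pred, bEx n T := by
  have hset : (Invols n).filter (fun σ => pred (DesSet n σ))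
      = ((Finset.Icc 1 (n-1)).powerset.filter pred).biUnion
          (fun T => (Invols n).filter (fun σ => DesSet n σ = T)) := by
    ext σ
    simp only [mem_filter, mem_biUnion, mem_powerset]
    constructor
    · rintro ⟨hσ, hp⟩
      exact ⟨DesSet n σ, ⟨desSet_subset_Icc σ, hp⟩, hσ, rfl⟩
    · rintro ⟨T, ⟨hT, hp⟩, hσ, hd⟩
      exact ⟨hσ, hd ▸ hp⟩
  have hdisj : ∀ T ∈ (Finset.Icc 1 (n-1)).powerset.filter pred,
      ∀ T' ∈ (Finset.Icc 1 (n-1)).powerset.filter pred, T ≠ T' →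
      Disjoint ((Invols n).filter (fun σ => DesSet n σ = T))
               ((Invols n).filter (fun σ => DesSet n σ = T')) := by
    intro T hT T' hT' hne
    rw [Finset.disjoint_left]
    intro σ h1 h2
    rw [mem_filter] at h1 h2
    exact hne (by rw [← h1.2, h2.2])
  rw [hset, Finset.card_biUnion hdisj]
  rfl

lemma sum_compl_eq (n : ℕ) (S : Finset ℕ) (hS : S ⊆ Finset.Icc 1 (n-1)) :
    ∑ T ∈ S.powerset, bEx n T = ∑ T ∈ S.powerset, bEx n (Finset.Icc 1 (n-1) \ T) := by
  have h1 : ((Invols n).filter (fun σ => DesSet n σ ⊆ S)).card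
      = ∑ T ∈ (Finset.Icc 1 (n-1)).powerset.filter (· ⊆ S), bEx n T :=
    partition_count n (· ⊆ S)
  have h2 : ((Invols n).filter
        (fun σ => (Finset.Icc 1 (n-1)) \ S ⊆ DesSet n σ)).card
      = ∑ T ∈ (Finset.Icc 1 (n-1)).powerset.filter
          (fun T => (Finset.Icc 1 (n-1)) \ S ⊆ T), bEx n T :=
    partition_count n _
  have hidx : (Finset.Icc 1 (n-1)).powerset.filter (· ⊆ S) = S.powerset := by
    ext T
    simp only [mem_filter, mem_powerset]
    exact ⟨fun h => h.2, fun h => ⟨h.trans hS, h⟩⟩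
  rw [hidx] at h1
  have h3 : ∑ T ∈ (Finset.Icc 1 (n-1)).powerset.filter
        (fun T => (Finset.Icc 1 (n-1)) \ S ⊆ T), bEx n T
      = ∑ T ∈ S.powerset, bEx n (Finset.Icc 1 (n-1) \ T) := by
    apply Finset.sum_nbij' (i := fun T => Finset.Icc 1 (n-1) \ T)
      (j := fun T => Finset.Icc 1 (n-1) \ T)
    · intro T hT
      simp only [mem_filter, mem_powerset] at hT
      rw [mem_powerset]
      intro x hx
      rw [Finset.mem_sdiff] at hx
      by_contra hxS
      exact hx.2 (hT.2 (Finset.mem_sdiff.mpr ⟨hx.1, hxS⟩))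
    · intro T hT
      rw [mem_powerset] at hT
      simp only [mem_filter, mem_powerset]
      refine ⟨Finset.sdiff_subset, ?_⟩
      exact Finset.sdiff_subset_sdiff (Finset.Subset.refl _) hT
    · intro T hT
      simp only [mem_filter, mem_powerset] at hT
      exact Finset.sdiff_sdiff_eq_self hT.1
    · intro T hT
      rw [mem_powerset] at hT
      exact Finset.sdiff_sdiff_eq_self (hT.trans hS)
    · intro T hT
      simp only [mem_filter, mem_powerset] at hT
      rw [Finset.sdiff_sdiff_eq_self hT.1]
  rw [← h1, ← h3, ← h2]
  exact main_card n S

lemma bEx_compl (n : ℕ) : ∀ S : Finset ℕ, S ⊆ Finset.Icc 1 (n-1) →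
    bEx n S = bEx n (Finset.Icc 1 (n-1) \ S) := by
  intro S
  induction S using Finset.strongInduction with
  | _ S ih =>
    intro hS
    have hstar := sum_compl_eq n S hS
    have hmem : S ∈ S.powerset := Finset.mem_powerset_self S
    have e1 : ∑ T ∈ S.powerset, bEx n T
        = ∑ T ∈ S.powerset.erase S, bEx n T + bEx n S :=
      (Finset.sum_erase_add _ _ hmem).symm
    have e2 : ∑ T ∈ S.powerset, bEx n (Finset.Icc 1 (n-1) \ T)
        = ∑ T ∈ S.powerset.erase S, bEx n (Finset.Icc 1 (n-1) \ T)
            + bEx n (Finset.Icc 1 (n-1) \ S) :=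
      (Finset.sum_erase_add _ _ hmem).symm
    have e3 : ∑ T ∈ S.powerset.erase S, bEx n T
        = ∑ T ∈ S.powerset.erase S, bEx n (Finset.Icc 1 (n-1) \ T) := by
      apply Finset.sum_congr rfl
      intro T hT
      rw [Finset.mem_erase, mem_powerset] at hT
      exact ih T (lt_of_le_of_ne hT.2 hT.1) (hT.2.trans hS)
    omega

lemma sum_Icc_choose (n : ℕ) : ∑ x ∈ Finset.Icc 1 (n-1), x = n.choose 2 := by
  have key : ∀ m : ℕ, 2 * ∑ x ∈ Finset.Icc 1 m, x = m * (m+1) := by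
    intro m
    induction m with
    | zero => simp
    | succ k ih =>
      rw [Finset.sum_Icc_succ_top (by omega : 1 ≤ k+1), Nat.mul_add, ih]
      ring
  rcases Nat.eq_zero_or_pos n with h | h
  · subst h; simp
  have hk := key (n-1)
  rw [show n - 1 + 1 = n by omega] at hk
  have hch : n.choose 2 = n * (n-1) / 2 := Nat.choose_two_right n
  have hcomm : n * (n-1) = (n-1) * n := Nat.mul_comm _ _
  omega

end Counting
end InvSym



open InvSym

theorem involution_joint_descent_major_symmetric (n : ℕ) (hn : 1 ≤ n) (i j : ℤ) :
    ((Invols n).filter (fun σ => (desStat n σ : ℤ) = i ∧ (majStat n σ : ℤ) = j)).card =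
      ((Invols n).filter (fun σ => (desStat n σ : ℤ) = (n : ℤ) - 1 - i ∧
        (majStat n σ : ℤ) = (n.choose 2 : ℤ) - j)).card := by
  have hPcard : (Finset.Icc 1 (n-1)).card = n - 1 := by
    rw [Nat.card_Icc]
    omega
  have hPsum : ∑ x ∈ Finset.Icc 1 (n-1), x = n.choose 2 := sum_Icc_choose n
  have hL := partition_count n
    (fun T : Finset ℕ => (T.card : ℤ) = i ∧ ((∑ x ∈ T, x : ℕ) : ℤ) = j)
  have hR := partition_count n
    (fun T : Finset ℕ => (T.card : ℤ) = (n : ℤ) - 1 - i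
      ∧ ((∑ x ∈ T, x : ℕ) : ℤ) = (n.choose 2 : ℤ) - j)
  have eL : (Invols n).filter (fun σ => (desStat n σ : ℤ) = i ∧ (majStat n σ : ℤ) = j)
      = (Invols n).filter
          (fun σ => ((DesSet n σ).card : ℤ) = i ∧ ((∑ x ∈ DesSet n σ, x : ℕ) : ℤ) = j) := by
    apply Finset.filter_congr
    intro σ _
    simp [desStat, majStat]
  have eR : (Invols n).filter (fun σ => (desStat n σ : ℤ) = (n : ℤ) - 1 - i ∧
        (majStat n σ : ℤ) = (n.choose 2 : ℤ) - j)
      = (Invols n).filter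
          (fun σ => ((DesSet n σ).card : ℤ) = (n : ℤ) - 1 - i
            ∧ ((∑ x ∈ DesSet n σ, x : ℕ) : ℤ) = (n.choose 2 : ℤ) - j) := by
    apply Finset.filter_congr
    intro σ _
    simp [desStat, majStat]
  rw [eL, eR, hL, hR]
  apply Finset.sum_nbij' (i := fun T => Finset.Icc 1 (n-1) \ T)
    (j := fun T => Finset.Icc 1 (n-1) \ T)
  · intro T hT
    simp only [Finset.mem_filter, Finset.mem_powerset] at hT ⊢
    obtain ⟨hTP, hc, hs⟩ := hT
    have h1 : (Finset.Icc 1 (n-1) \ T).card = (Finset.Icc 1 (n-1)).card - T.card :=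
      Finset.card_sdiff_of_subset hTP
    have h2 : T.card ≤ (Finset.Icc 1 (n-1)).card := Finset.card_le_card hTP
    have h3 : ∑ x ∈ Finset.Icc 1 (n-1) \ T, x + ∑ x ∈ T, x = ∑ x ∈ Finset.Icc 1 (n-1), x :=
      Finset.sum_sdiff hTP
    refine ⟨Finset.sdiff_subset, ?_, ?_⟩
    · omega
    · omega
  · intro T hT
    simp only [Finset.mem_filter, Finset.mem_powerset] at hT ⊢
    obtain ⟨hTP, hc, hs⟩ := hT
    have h1 : (Finset.Icc 1 (n-1) \ T).card = (Finset.Icc 1 (n-1)).card - T.card :=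
      Finset.card_sdiff_of_subset hTP
    have h2 : T.card ≤ (Finset.Icc 1 (n-1)).card := Finset.card_le_card hTP
    have h3 : ∑ x ∈ Finset.Icc 1 (n-1) \ T, x + ∑ x ∈ T, x = ∑ x ∈ Finset.Icc 1 (n-1), x :=
      Finset.sum_sdiff hTP
    refine ⟨Finset.sdiff_subset, ?_, ?_⟩
    · omega
    · omega
  · intro T hT
    simp only [Finset.mem_filter, Finset.mem_powerset] at hT
    exact Finset.sdiff_sdiff_eq_self hT.1
  · intro T hT
    simp only [Finset.mem_filter, Finset.mem_powerset] at hT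
    exact Finset.sdiff_sdiff_eq_self hT.1
  · intro T hT
    simp only [Finset.mem_filter, Finset.mem_powerset] at hT
    exact bEx_compl n T hT.1
end
end
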